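/- arXiv:1504.05324 — 14 statements merged into one kernel-verified Lean document; each statement's English description precedes it below -/
import Mathlib

section
/- Let d ≥ 1 and let f be a step-isometry of ℓ∞^d (the space ℝ^d with norm ‖(x_1, …, x_d)‖ = max_i |x_i|, with standard basis e_1, …, e_d). Then there exist a permutation σ of {1, …, d}, signs ε = (ε_1, …, ε_d) ∈ {−1, +1}^d, and, for each i, a strictly increasing bijection g_i : [0,1) → [0,1), such that for all λ_1, …, λ_d ∈ ℝ: f(∑_{i=1}^d λ_i e_i) − f(0) = ∑_{i=1}^d (g_i(λ_i − ⌊λ_i⌋) + ⌊λ_i⌋) ε_i e_{σ(i)}. -/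
section helpers
variable {d : ℕ}

def ic (m : Fin d → ℤ) : Fin d → ℝ := fun i => (m i : ℝ)

lemma abs_le_norm' (x : Fin d → ℝ) (k : Fin d) : |x k| ≤ ‖x‖ := by
  simpa [Real.norm_eq_abs] using norm_le_pi_norm x k

lemma norm_le_of' (x : Fin d → ℝ) (r : ℝ) (h0 : 0 ≤ r) (h : ∀ i, |x i| ≤ r) : ‖x‖ ≤ r := by
  refine (pi_norm_le_iff_of_nonneg h0).2 ?_
  simpa [Real.norm_eq_abs] using h

lemma norm_eq_abs_of (x : Fin d → ℝ) (k : Fin d) (h : ∀ i, |x i| ≤ |x k|) : ‖x‖ = |x k| :=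
  le_antisymm (norm_le_of' x _ (abs_nonneg _) h) (abs_le_norm' x k)

lemma norm_exists_eq (hd : 1 ≤ d) (x : Fin d → ℝ) : ∃ k, ‖x‖ = |x k| := by
  have hne : (Finset.univ : Finset (Fin d)).Nonempty := ⟨⟨0, hd⟩, Finset.mem_univ _⟩
  obtain ⟨k, -, hk⟩ := Finset.exists_max_image Finset.univ (fun i => |x i|) hne
  exact ⟨k, norm_eq_abs_of x k (fun i => hk i (Finset.mem_univ i))⟩

lemma ic_single (j : Fin d) (N : ℤ) : ic (Pi.single j N) = Pi.single j (N : ℝ) := by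
  funext i
  simp only [ic, Pi.single_apply]
  split <;> simp

lemma ic_zero : ic (0 : Fin d → ℤ) = 0 := by funext i; simp [ic]

lemma single_sub' (j : Fin d) (a b : ℝ) :
    (Pi.single j a : Fin d → ℝ) - Pi.single j b = Pi.single j (a - b) := by
  funext i
  simp only [Pi.sub_apply, Pi.single_apply]
  split <;> simp

lemma norm_single (j : Fin d) (c : ℝ) : ‖(Pi.single j c : Fin d → ℝ)‖ = |c| := by
  have h := norm_eq_abs_of (Pi.single j c) j (fun i => by
    simp only [Pi.single_apply]
    split <;> simp [abs_nonneg])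
  simpa using h

lemma pin_ends (a b N : ℝ) (ha : |a| ≤ N) (hb : |b| ≤ N) (hab : |a - b| = 2*N) :
    (a = N ∧ b = -N) ∨ (a = -N ∧ b = N) := by
  rw [abs_le] at ha hb
  rcases abs_cases (a - b) with ⟨h1, -⟩ | ⟨h1, -⟩ <;> rw [hab] at h1
  · left; constructor <;> linarith
  · right; constructor <;> linarith

end helpers

section rigidity
variable {d : ℕ}

lemma ray_coord (hd : 1 ≤ d) (T : (Fin d → ℝ) → (Fin d → ℝ)) (hT0 : T 0 = 0)
    (hT : ∀ m n : Fin d → ℤ, ‖T (ic m) - T (ic n)‖ = ‖ic m - ic n‖) (j : Fin d) :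
    ∃ (k : Fin d) (t : ℝ), (t = 1 ∨ t = -1) ∧
      ∀ N : ℤ, T (ic (Pi.single j N)) k = t * N := by
  set P : ℤ → (Fin d → ℝ) := fun N => T (ic (Pi.single j N)) with hPdef
  have hP : ∀ N M : ℤ, ‖P N - P M‖ = |(N : ℝ) - M| := by
    intro N M
    rw [hPdef]
    simp only
    rw [hT, ic_single, ic_single, single_sub', norm_single]
  have hPzero : P 0 = 0 := by
    simp only [hPdef]
    rw [show (Pi.single j (0:ℤ) : Fin d → ℤ) = 0 from Pi.single_zero j, ic_zero, hT0]
  have hPn : ∀ N : ℤ, ‖P N‖ = |(N : ℝ)| := by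
    intro N
    have := hP N 0
    rw [hPzero] at this
    simpa using this
  have hPc : ∀ (N M : ℤ) (k : Fin d), |P N k - P M k| ≤ |(N : ℝ) - M| := by
    intro N M k
    have h1 : |(P N - P M) k| ≤ ‖P N - P M‖ := abs_le_norm' _ k
    rw [hP] at h1
    simpa using h1
  have hPk : ∀ (N : ℤ) (k : Fin d), |P N k| ≤ |(N : ℝ)| := by
    intro N k
    have h1 := abs_le_norm' (P N) k
    rw [hPn] at h1
    exact h1
  -- class function
  have key : ∀ n : ℕ, ∃ kb : Fin d × Bool,
      P (n+1) kb.1 = (if kb.2 then (1:ℝ) else -1) * ((n:ℝ)+1) ∧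
      P (-(n+1)) kb.1 = -((if kb.2 then (1:ℝ) else -1) * ((n:ℝ)+1)) := by
    intro n
    obtain ⟨k, hk⟩ := norm_exists_eq hd (P (n+1) - P (-(n+1)))
    have h2 : ‖P (n+1) - P (-(n+1))‖ = 2 * ((n:ℝ)+1) := by
      rw [hP]
      push_cast
      rw [show ((n:ℝ) + 1 - -((n:ℝ) + 1)) = 2*((n:ℝ)+1) by ring]
      exact abs_of_pos (by positivity)
    have h3 : |P (n+1) k - P (-(n+1)) k| = 2 * ((n:ℝ)+1) := by
      rw [← h2, hk]; simp
    have h4 : |P (n+1) k| ≤ (n:ℝ)+1 := by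
      have h4' := hPk (n+1) k
      push_cast at h4'
      rwa [abs_of_pos (show (0:ℝ) < (n:ℝ)+1 by positivity)] at h4'
    have h5 : |P (-(n+1)) k| ≤ (n:ℝ)+1 := by
      have h5' := hPk (-(n+1)) k
      push_cast at h5'
      rwa [abs_neg, abs_of_pos (show (0:ℝ) < (n:ℝ)+1 by positivity)] at h5'
    rcases pin_ends _ _ _ h4 h5 h3 with ⟨ha, hb⟩ | ⟨ha, hb⟩
    · refine ⟨(k, true), ?_, ?_⟩
      · show P (n+1) k = (1:ℝ) * ((n:ℝ)+1)
        rw [one_mul, ha]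
      · show P (-(n+1)) k = -((1:ℝ) * ((n:ℝ)+1))
        rw [one_mul, hb]
    · refine ⟨(k, false), ?_, ?_⟩
      · show P (n+1) k = (-1:ℝ) * ((n:ℝ)+1)
        rw [ha]; ring
      · show P (-(n+1)) k = -((-1:ℝ) * ((n:ℝ)+1))
        rw [hb]; ring
  set c : ℕ → Fin d × Bool := fun n => (key n).choose with hcdef
  obtain ⟨kb, hfib⟩ := Finite.exists_infinite_fiber c
  have hfib' : (c ⁻¹' {kb}).Infinite := Set.infinite_coe_iff.mp hfib
  set k := kb.1
  set t : ℝ := if kb.2 then 1 else -1 with htdef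
  have ht : t = 1 ∨ t = -1 := by
    by_cases h : kb.2 <;> simp [htdef, h]
  have hmain : ∀ M : ℕ, P M k = t * M ∧ P (-(M:ℤ)) k = -(t * M) := by
    intro M
    obtain ⟨n, hnmem, hnlt⟩ := hfib'.exists_gt M
    have hn : c n = kb := hnmem
    have hck : (key n).choose = kb := hn
    have hq := (key n).choose_spec
    rw [hck] at hq
    obtain ⟨hq1, hq2⟩ := hq
    rw [← htdef] at hq1 hq2
    have hMn : (M:ℝ) ≤ (n:ℝ) + 1 := by
      have : (M:ℝ) < n := by exact_mod_cast hnlt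
      linarith
    have hb1 := hPc M (n+1) k
    push_cast at hb1
    have hb2 := hPc (-(M:ℤ)) (-(n+1)) k
    push_cast at hb2
    have hb3 := hPk M k
    push_cast at hb3
    have hb4 := hPk (-(M:ℤ)) k
    push_cast at hb4
    have e1 : |(M:ℝ) - ((n:ℝ)+1)| = (n:ℝ)+1 - M := by
      rw [abs_of_nonpos (by linarith)]; ring
    have e2 : |(-(M:ℝ)) - (-((n:ℝ)+1))| = (n:ℝ)+1 - M := by
      rw [abs_of_nonneg (by linarith)]; ring
    have e3 : |(M:ℝ)| = (M:ℝ) := abs_of_nonneg (by positivity)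
    have hb1' := le_of_le_of_eq hb1 e1
    have hb2' := le_of_le_of_eq hb2 e2
    have hb3' := le_of_le_of_eq hb3 e3
    have hb4' : |P (-(M:ℤ)) k| ≤ (M:ℝ) := by
      refine le_of_le_of_eq hb4 ?_
      rw [abs_neg]; exact e3
    rw [abs_le] at hb1' hb2' hb3' hb4'
    rcases ht with ht1 | ht1 <;> rw [ht1] at hq1 hq2 ⊢ <;>
      exact ⟨by push_cast; linarith [hb1'.1, hb1'.2, hb3'.1, hb3'.2],
             by push_cast; linarith [hb2'.1, hb2'.2, hb4'.1, hb4'.2]⟩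
  refine ⟨k, t, ht, ?_⟩
  intro N
  obtain ⟨M, hM | hM⟩ : ∃ M : ℕ, N = (M:ℤ) ∨ N = -(M:ℤ) := ⟨N.natAbs, Int.natAbs_eq N⟩
  · subst hM
    exact_mod_cast (hmain M).1
  · subst hM
    have h9 := (hmain M).2
    show P (-(M:ℤ)) k = t * ((( -(M:ℤ)) : ℤ) : ℝ)
    rw [h9]; push_cast; ring

end rigidity

lemma dom_norm (z : Fin d → ℝ) (j : Fin d) (h : ∀ i, |z i| ≤ z j) : ‖z‖ = z j := by
  have hj : 0 ≤ z j := le_trans (abs_nonneg _) (h j)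
  rw [norm_eq_abs_of z j (fun i => le_trans (h i) (le_abs_self _))]
  exact abs_of_nonneg hj

lemma rigidity (hd : 1 ≤ d) (T : (Fin d → ℝ) → (Fin d → ℝ)) (hT0 : T 0 = 0)
    (hT : ∀ m n : Fin d → ℤ, ‖T (ic m) - T (ic n)‖ = ‖ic m - ic n‖) :
    ∃ (σ : Fin d → Fin d) (ε : Fin d → ℝ), Function.Injective σ ∧
      (∀ j, ε j = 1 ∨ ε j = -1) ∧
      ∀ (m : Fin d → ℤ) (j : Fin d), T (ic m) (σ j) = ε j * (m j : ℝ) := by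
  choose σ ε hε hray using ray_coord hd T hT0 hT
  have habs : ∀ (m n : Fin d → ℤ) (k : Fin d),
      |T (ic m) k - T (ic n) k| ≤ ‖ic m - ic n‖ := by
    intro m n k
    have h1 := abs_le_norm' (T (ic m) - T (ic n)) k
    rw [hT] at h1
    simpa using h1
  have hinj : Function.Injective σ := by
    intro j j' hjj
    by_contra hne
    have hs : ∃ s : ℤ, |(s:ℝ)| = 1 ∧ |ε j * 1 - ε j' * (s:ℝ)| = 2 := by
      rcases hε j with h1 | h1 <;> rcases hε j' with h2 | h2
      · exact ⟨-1, by norm_num, by rw [h1, h2]; norm_num⟩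
      · exact ⟨1, by norm_num, by rw [h1, h2]; norm_num⟩
      · exact ⟨1, by norm_num, by rw [h1, h2]; norm_num⟩
      · exact ⟨-1, by norm_num, by rw [h1, h2]; norm_num⟩
    obtain ⟨s, hs1, hs2⟩ := hs
    set v : Fin d → ℝ := Pi.single j (1:ℝ) - Pi.single j' (s:ℝ) with hv
    have hvj : v j = 1 := by
      rw [hv, Pi.sub_apply, Pi.single_eq_same, Pi.single_eq_of_ne hne, sub_zero]
    have hdist : ‖ic (Pi.single j 1) - ic (Pi.single j' s)‖ = 1 := by
      rw [ic_single, ic_single, Int.cast_one, ← hv, dom_norm v j ?_, hvj]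
      intro i
      rw [hvj, hv, Pi.sub_apply]
      rcases eq_or_ne i j with rfl | hij
      · rw [Pi.single_eq_same, Pi.single_eq_of_ne hne, sub_zero]; norm_num
      · rw [Pi.single_eq_of_ne hij, zero_sub, abs_neg]
        rcases eq_or_ne i j' with rfl | hij'
        · rw [Pi.single_eq_same]; exact le_of_eq hs1
        · rw [Pi.single_eq_of_ne hij']; norm_num
    have h4 := habs (Pi.single j 1) (Pi.single j' s) (σ j)
    rw [hdist, hray j 1] at h4
    rw [hjj, hray j' s] at h4
    push_cast at h4
    rw [hs2] at h4
    norm_num at h4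
  refine ⟨σ, ε, hinj, hε, ?_⟩
  intro m j
  set B : ℤ := ∑ i, |m i| with hB
  have hBb : ∀ i, |(m i : ℝ)| ≤ (B:ℝ) := by
    intro i
    have h1 : |m i| ≤ B :=
      Finset.single_le_sum (f := fun i => |m i|) (fun i _ => abs_nonneg _) (Finset.mem_univ i)
    calc |(m i : ℝ)| = ((|m i| : ℤ) : ℝ) := by push_cast; rfl
    _ ≤ (B:ℝ) := by exact_mod_cast h1
  have hBnn : (0:ℝ) ≤ B := le_trans (abs_nonneg _) (hBb j)
  set N : ℤ := |m j| + B + 1 with hN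
  have hNr : (N:ℝ) = |(m j : ℝ)| + B + 1 := by rw [hN]; push_cast; ring
  -- distance to single j N
  have hd1 : ‖ic m - ic (Pi.single j N)‖ = (N:ℝ) - m j := by
    rw [← norm_sub_rev]
    set z : Fin d → ℝ := ic (Pi.single j N) - ic m with hz
    have hzj : z j = (N:ℝ) - m j := by
      rw [hz, Pi.sub_apply, ic_single, Pi.single_eq_same]; rfl
    rw [dom_norm z j ?_, hzj]
    intro i
    rw [hzj, hz, Pi.sub_apply, ic_single]
    rcases eq_or_ne i j with h | hij
    · rw [h, Pi.single_eq_same]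
      show |(N:ℝ) - (m j : ℝ)| ≤ _
      rw [abs_of_nonneg (by cases abs_cases ((m j : ℝ)) <;> linarith [hNr])]
    · rw [Pi.single_eq_of_ne hij, zero_sub, abs_neg]
      show |(m i : ℝ)| ≤ _
      cases abs_cases ((m j : ℝ)) <;> linarith [hBb i, hNr]
  have hd2 : ‖ic m - ic (Pi.single j (-N))‖ = (N:ℝ) + m j := by
    set z : Fin d → ℝ := ic m - ic (Pi.single j (-N)) with hz
    have hzj : z j = (m j : ℝ) + N := by
      rw [hz, Pi.sub_apply, ic_single, Pi.single_eq_same]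
      show (m j : ℝ) - ((-N : ℤ) : ℝ) = _
      push_cast; ring
    rw [dom_norm z j ?_, hzj]
    · ring
    intro i
    rw [hzj, hz, Pi.sub_apply, ic_single]
    rcases eq_or_ne i j with h | hij
    · rw [h, Pi.single_eq_same]
      show |(m j : ℝ) - ((-N:ℤ):ℝ)| ≤ _
      push_cast
      rw [abs_of_nonneg (by cases abs_cases ((m j : ℝ)) <;> linarith [hNr])]
      ring_nf
      exact le_refl _
    · rw [Pi.single_eq_of_ne hij, sub_zero]
      show |(m i : ℝ)| ≤ _
      cases abs_cases ((m j : ℝ)) <;> linarith [hBb i, hNr]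
  have h5 := habs m (Pi.single j N) (σ j)
  rw [hd1, hray j N] at h5
  have h6 := habs m (Pi.single j (-N)) (σ j)
  rw [hd2, hray j (-N)] at h6
  push_cast at h5 h6
  rw [abs_le] at h5 h6
  rcases hε j with h1 | h1 <;> rw [h1] at h5 h6 ⊢ <;>
    [skip; skip] <;> nlinarith [h5.1, h5.2, h6.1, h6.2]

lemma no_lin_bound (a γ C : ℝ) (hγ : 1 ≤ |γ|) (h : ∀ N : ℤ, 0 ≤ N → |a + γ * N| < C) :
    False := by
  obtain ⟨N, hN0, hNb⟩ : ∃ N : ℤ, 0 ≤ N ∧ C + |a| ≤ (N:ℝ) := by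
    refine ⟨max 0 ⌈C + |a|⌉, le_max_left _ _, ?_⟩
    calc C + |a| ≤ (⌈C + |a|⌉ : ℝ) := Int.le_ceil _
    _ ≤ ((max 0 ⌈C + |a|⌉ : ℤ) : ℝ) := by exact_mod_cast le_max_right _ _
  have h1 := h N hN0
  have h2 : |γ * N| ≤ |a + γ * N| + |a| := by
    calc |γ * N| = |(a + γ * N) + (-a)| := by ring_nf
    _ ≤ |a + γ * N| + |(-a)| := abs_add_le _ _
    _ = |a + γ * N| + |a| := by rw [abs_neg]
  have h3 : (N:ℝ) ≤ |γ * N| := by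
    rw [abs_mul]
    have hN : |(N:ℝ)| = (N:ℝ) := abs_of_nonneg (by exact_mod_cast hN0)
    nlinarith [abs_nonneg (N:ℝ), hN]
  linarith


section intlemmas
variable {V : Type*} [NormedAddCommGroup V] [NormedSpace ℝ V]

lemma int_norm_of_forall (a b : V)
    (h : ∀ w, ⌊‖a - w‖⌋ ≤ ⌊‖a - b‖⌋ + ⌊‖b - w‖⌋) : ∃ n : ℤ, ‖a - b‖ = n := by
  by_contra hc
  push_neg at hc
  set r := ‖a - b‖ with hr
  have hr0 : 0 < r := by
    rcases lt_or_eq_of_le (norm_nonneg (a - b)) with h' | h'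
    · exact h'
    · exact absurd h'.symm (fun hh => hc 0 (by rw [hr, hh]; norm_num))
  have hfr : Int.fract r ≠ 0 := by
    intro hfr
    exact hc ⌊r⌋ (by have h2 := Int.fract_add_floor r; linarith)
  have hfr0 : 0 < Int.fract r := lt_of_le_of_ne (Int.fract_nonneg r) (Ne.symm hfr)
  have hfr1 : Int.fract r < 1 := Int.fract_lt_one r
  set s : ℝ := 1 - Int.fract r with hs
  have hs0 : 0 < s := by simp only [hs]; linarith
  have hs1 : s < 1 := by simp only [hs]; linarith
  set w : V := b + (s / r) • (b - a) with hw
  have h1 : b - w = -((s/r) • (b - a)) := by rw [hw]; abel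
  have hbw : ‖b - w‖ = s := by
    rw [h1, norm_neg, norm_smul, Real.norm_eq_abs,
      abs_of_pos (div_pos hs0 hr0)]
    rw [show ‖b - a‖ = r by rw [hr, norm_sub_rev]]
    field_simp
  have haw : a - w = (1 + s/r) • (a - b) := by
    rw [hw, add_smul, one_smul, smul_sub, smul_sub]; abel
  have hawn : ‖a - w‖ = r + s := by
    rw [haw, norm_smul, Real.norm_eq_abs,
      abs_of_pos (by positivity : (0:ℝ) < 1 + s/r), ← hr]
    field_simp
  have hfloor1 : ⌊‖a - w‖⌋ = ⌊r⌋ + 1 := by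
    rw [hawn]
    have h3 : r + s = (⌊r⌋ : ℝ) + 1 := by
      have h2 := Int.fract_add_floor r
      simp only [hs]; linarith
    rw [h3]
    rw [show ((⌊r⌋:ℝ) + 1) = ((⌊r⌋ + 1 : ℤ) : ℝ) by push_cast; ring]
    exact Int.floor_intCast _
  have hfloor2 : ⌊‖b - w‖⌋ = 0 := by
    rw [hbw]; exact Int.floor_eq_zero_iff.2 ⟨le_of_lt hs0, hs1⟩
  have h4 := h w
  rw [hfloor1, hfloor2] at h4
  omega

lemma forall_of_int_norm (a b : V) (n : ℤ) (hn : ‖a - b‖ = n) :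
    ∀ w, ⌊‖a - w‖⌋ ≤ ⌊‖a - b‖⌋ + ⌊‖b - w‖⌋ := by
  intro w
  have htri : ‖a - w‖ ≤ ‖a - b‖ + ‖b - w‖ := norm_sub_le_norm_sub_add_norm_sub a b w
  have h1 : ‖b - w‖ < (⌊‖b - w‖⌋ : ℝ) + 1 := Int.lt_floor_add_one _
  have h2 : ‖a - w‖ < ((n + ⌊‖b - w‖⌋ + 1 : ℤ) : ℝ) := by push_cast; linarith [hn ▸ htri]
  have h3 : ⌊‖a - w‖⌋ < n + ⌊‖b - w‖⌋ + 1 := by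
    exact_mod_cast Int.floor_lt.2 h2
  have h4 : ⌊‖a - b‖⌋ = n := by rw [hn]; exact Int.floor_intCast n
  omega

lemma exact_int_preserved (H : V → V) (hsurj : Function.Surjective H)
    (hstep : ∀ x y, ⌊‖x - y‖⌋ = ⌊‖H x - H y‖⌋)
    (x y : V) (n : ℤ) (hxy : ‖x - y‖ = n) : ‖H x - H y‖ = ‖x - y‖ := by
  obtain ⟨m, hm⟩ : ∃ m : ℤ, ‖H x - H y‖ = m := by
    apply int_norm_of_forall
    intro w'
    obtain ⟨w, rfl⟩ := hsurj w'
    rw [← hstep x w, ← hstep y w]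
    have h2 : ⌊‖H x - H y‖⌋ = ⌊‖x - y‖⌋ := (hstep x y).symm
    rw [h2]
    exact forall_of_int_norm x y n hxy w
  have h3 : ⌊‖H x - H y‖⌋ = ⌊‖x - y‖⌋ := (hstep x y).symm
  rw [hm, hxy] at h3 ⊢
  simp only [Int.floor_intCast] at h3
  exact_mod_cast h3

end intlemmas

/-- A step-isometry of a normed space: a bijection preserving the integer part of
all distances. -/
def IsStepIsometry {V : Type*} [NormedAddCommGroup V] (f : V → V) : Prop :=
  Function.Bijective f ∧ ∀ x y : V, ⌊‖x - y‖⌋ = ⌊‖f x - f y‖⌋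

/-- Every step-isometry `f` of `ℓ∞^d` (for `d ≥ 1`, here
`Fin d → ℝ` with the sup norm) has the form: there are a permutation `σ` of the
coordinates, signs `ε i ∈ {−1, +1}`, and strictly increasing bijections
`gᵢ : [0,1) → [0,1)` such that
`f (∑ λᵢ eᵢ) − f 0 = ∑ (gᵢ(λᵢ − ⌊λᵢ⌋) + ⌊λᵢ⌋) εᵢ e_{σ i}` for all `λ`. -/
theorem stepIsometry_linfty_form
    (d : ℕ) (hd : 1 ≤ d)
    (f : (Fin d → ℝ) → (Fin d → ℝ))
    (hf : IsStepIsometry f) :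
    ∃ (σ : Equiv.Perm (Fin d)) (ε : Fin d → ℝ) (g : Fin d → ℝ → ℝ),
      (∀ i, ε i = 1 ∨ ε i = -1) ∧
      (∀ i, Set.BijOn (g i) (Set.Ico (0 : ℝ) 1) (Set.Ico (0 : ℝ) 1)) ∧
      (∀ i, StrictMonoOn (g i) (Set.Ico (0 : ℝ) 1)) ∧
      ∀ lam : Fin d → ℝ,
        f lam - f 0 =
          ∑ i, ((g i (lam i - ⌊lam i⌋) + ⌊lam i⌋) * ε i) •
            (Pi.single (σ i) (1 : ℝ) : Fin d → ℝ) := by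
  obtain ⟨hbij, hstep⟩ := hf
  set H : (Fin d → ℝ) → (Fin d → ℝ) := fun x => f x - f 0 with hH
  have hHbij : Function.Bijective H := (Equiv.subRight (f 0)).bijective.comp hbij
  have hHdiff : ∀ x y, H x - H y = f x - f y := fun x y => sub_sub_sub_cancel_right _ _ _
  have hHstep : ∀ x y, ⌊‖x - y‖⌋ = ⌊‖H x - H y‖⌋ := by
    intro x y
    rw [hHdiff]
    exact hstep x y
  have hH0 : H 0 = 0 := sub_self _
  have hexact : ∀ x y (n : ℤ), ‖x - y‖ = n → ‖H x - H y‖ = ‖x - y‖ :=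
    exact_int_preserved H hHbij.2 hHstep
  have hicint : ∀ p q : Fin d → ℤ, ∃ n : ℤ, ‖ic p - ic q‖ = (n:ℝ) := by
    intro p q
    have hsub : ic p - ic q = ic (p - q) := by
      funext i
      simp only [Pi.sub_apply, ic]
      push_cast
      rfl
    obtain ⟨k, hk⟩ := norm_exists_eq hd (ic (p - q))
    refine ⟨|p k - q k|, ?_⟩
    rw [hsub, hk]
    show |((p k - q k : ℤ) : ℝ)| = ((|p k - q k| : ℤ) : ℝ)
    push_cast
    ring
  -- rigidity at base 0
  have hT0 : ∀ p q : Fin d → ℤ, ‖H (ic p) - H (ic q)‖ = ‖ic p - ic q‖ := by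
    intro p q
    obtain ⟨n, hn⟩ := hicint p q
    exact hexact _ _ n hn
  obtain ⟨σ0, ε, hσinj, hε, hA⟩ := rigidity hd H hH0 hT0
  have hε2 : ∀ j, ε j * ε j = 1 := by
    intro j
    rcases hε j with h | h <;> rw [h] <;> norm_num
  have hεabs : ∀ j, |ε j| = 1 := by
    intro j
    rcases hε j with h | h <;> rw [h] <;> norm_num
  set σe : Equiv.Perm (Fin d) := Equiv.ofBijective σ0 (Finite.injective_iff_bijective.mp hσinj)
    with hσe
  have hσeap : ∀ j, σe j = σ0 j := fun j => rfl
  -- per-basepoint rigidity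
  have hbase : ∀ x : Fin d → ℝ, ∃ (σx : Fin d → Fin d) (εx : Fin d → ℝ),
      Function.Injective σx ∧ (∀ j, εx j = 1 ∨ εx j = -1) ∧
      ∀ (p : Fin d → ℤ) (j : Fin d), (H (x + ic p) - H x) (σx j) = εx j * (p j : ℝ) := by
    intro x
    refine rigidity hd (fun y => H (x + y) - H x) (by simp) ?_
    intro p q
    obtain ⟨n, hn⟩ := hicint p q
    have h1 : (x + ic p) - (x + ic q) = ic p - ic q := add_sub_add_left_eq_sub _ _ _
    have h2 := hexact (x + ic p) (x + ic q) n (by rw [h1]; exact hn)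
    rw [h1] at h2
    have h3 : (H (x + ic p) - H x) - (H (x + ic q) - H x) = H (x + ic p) - H (x + ic q) :=
      sub_sub_sub_cancel_right _ _ _
    rw [h3]
    exact h2
  -- nearness bound
  have hnear : ∀ (x : Fin d → ℝ) (p : Fin d → ℤ),
      ‖H (x + ic p) - H (ic p)‖ < ‖x‖ + 1 := by
    intro x p
    have h1 : (x + ic p) - ic p = x := add_sub_cancel_right _ _
    have h2 := hHstep (x + ic p) (ic p)
    rw [h1] at h2
    have h3 : ‖H (x + ic p) - H (ic p)‖ < (⌊‖x‖⌋ : ℝ) + 1 := by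
      rw [h2]
      exact Int.lt_floor_add_one _
    have h4 : (⌊‖x‖⌋ : ℝ) ≤ ‖x‖ := Int.floor_le _
    linarith
  -- the key translation equivariance
  have hkey : ∀ (x : Fin d → ℝ) (p : Fin d → ℤ) (j : Fin d),
      H (x + ic p) (σ0 j) = H x (σ0 j) + ε j * (p j : ℝ) := by
    intro x p j
    obtain ⟨σx, εx, hσxinj, hεx, hAx⟩ := hbase x
    have hpair : ∀ j, σx j = σ0 j ∧ εx j = ε j := by
      intro j
      have hcoordbound : ∀ (N : ℤ) (k : Fin d),
          |H (x + ic (Pi.single j N)) k - H (ic (Pi.single j N)) k| < ‖x‖ + 1 := by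
        intro N k
        have h1 := abs_le_norm' (H (x + ic (Pi.single j N)) - H (ic (Pi.single j N))) k
        have h2 := hnear x (Pi.single j N)
        have h3 : |H (x + ic (Pi.single j N)) k - H (ic (Pi.single j N)) k|
            = |(H (x + ic (Pi.single j N)) - H (ic (Pi.single j N))) k| := by
          rw [Pi.sub_apply]
        rw [h3]
        exact lt_of_le_of_lt h1 h2
      have hHsing : ∀ N : ℤ, H (ic (Pi.single j N)) (σ0 j) = ε j * (N:ℝ) := by
        intro N
        have := hA (Pi.single j N) j
        rwa [Pi.single_eq_same] at this
      by_cases hcs : σx j = σ0 j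
      · refine ⟨hcs, ?_⟩
        by_contra hces
        -- εx j - ε j = ±2
        have hgam : |εx j - ε j| = 2 := by
          rcases hεx j with h1 | h1 <;> rcases hε j with h2 | h2
          · exact absurd (h1.trans h2.symm) hces
          · rw [h1, h2]; norm_num
          · rw [h1, h2]; norm_num
          · exact absurd (h1.trans h2.symm) hces
        exfalso
        apply no_lin_bound (H x (σ0 j)) (εx j - ε j) (‖x‖ + 1) (by rw [hgam]; norm_num)
        intro N hN0
        have h5 := hAx (Pi.single j N) j
        rw [Pi.single_eq_same, hcs, Pi.sub_apply] at h5
        have h6 := hcoordbound N (σ0 j)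
        have h7 : H (x + ic (Pi.single j N)) (σ0 j) = H x (σ0 j) + εx j * N := by linarith
        rw [h7, hHsing N] at h6
        have h8 : H x (σ0 j) + εx j * ↑N - ε j * ↑N
            = H x (σ0 j) + (εx j - ε j) * ↑N := by ring
        rwa [h8] at h6
      · exfalso
        set σxe : Equiv.Perm (Fin d) :=
          Equiv.ofBijective σx (Finite.injective_iff_bijective.mp hσxinj) with hσxe
        set j' : Fin d := σxe.symm (σ0 j) with hj'
        have hj'eq : σx j' = σ0 j := σxe.apply_symm_apply (σ0 j)
        have hj'ne : j' ≠ j := by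
          intro hc
          rw [hc] at hj'eq
          exact hcs hj'eq
        apply no_lin_bound (H x (σ0 j)) (-(ε j)) (‖x‖ + 1) (by rw [abs_neg, hεabs])
        intro N hN0
        have h5 := hAx (Pi.single j N) j'
        rw [hj'eq, Pi.sub_apply, Pi.single_eq_of_ne hj'ne] at h5
        have h6 := hcoordbound N (σ0 j)
        rw [hHsing N] at h6
        have h7 : H (x + ic (Pi.single j N)) (σ0 j) = H x (σ0 j) := by
          push_cast at h5
          linarith
        rw [h7] at h6
        have h8 : H x (σ0 j) - ε j * ↑N = H x (σ0 j) + -ε j * ↑N := by ring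
        rwa [h8] at h6
    have h1 := hAx p j
    rw [(hpair j).1, (hpair j).2, Pi.sub_apply] at h1
    linarith
  -- the normalized map G
  set G : (Fin d → ℝ) → (Fin d → ℝ) := fun x j => ε j * H x (σ0 j) with hG
  have hGshift : ∀ (x : Fin d → ℝ) (p : Fin d → ℤ), G (x + ic p) = G x + ic p := by
    intro x p
    funext j
    show ε j * H (x + ic p) (σ0 j) = ε j * H x (σ0 j) + (p j : ℝ)
    rw [hkey x p j]
    have h9 : ε j * (H x (σ0 j) + ε j * ↑(p j)) = ε j * H x (σ0 j) + (ε j * ε j) * ↑(p j) := by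
      ring
    rw [h9, hε2, one_mul]
  have hGnorm : ∀ x y, ‖G x - G y‖ = ‖H x - H y‖ := by
    intro x y
    have hcoord : ∀ j, |G x j - G y j| = |H x (σ0 j) - H y (σ0 j)| := by
      intro j
      show |ε j * H x (σ0 j) - ε j * H y (σ0 j)| = _
      rw [show ε j * H x (σ0 j) - ε j * H y (σ0 j) = ε j * (H x (σ0 j) - H y (σ0 j)) by ring,
        abs_mul, hεabs, one_mul]
    apply le_antisymm
    · apply norm_le_of' _ _ (norm_nonneg _)
      intro j
      rw [Pi.sub_apply, hcoord j]
      have := abs_le_norm' (H x - H y) (σ0 j)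
      rwa [Pi.sub_apply] at this
    · apply norm_le_of' _ _ (norm_nonneg _)
      intro k
      rw [Pi.sub_apply]
      have h1 : |H x k - H y k| = |G x (σe.symm k) - G y (σe.symm k)| := by
        rw [hcoord (σe.symm k)]
        have h2 : σ0 (σe.symm k) = k := σe.apply_symm_apply k
        rw [h2]
      rw [h1]
      have h3 := abs_le_norm' (G x - G y) (σe.symm k)
      rwa [Pi.sub_apply] at h3
  have hGstep : ∀ x y, ⌊‖x - y‖⌋ = ⌊‖G x - G y‖⌋ := by
    intro x y
    rw [hGnorm]
    exact hHstep x y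
  have hG0 : G 0 = 0 := by
    funext j
    show ε j * H 0 (σ0 j) = 0
    rw [hH0]
    simp
  have hGbound : ∀ x, ‖G x‖ < ‖x‖ + 1 := by
    intro x
    have h1 := hGstep x 0
    rw [hG0, sub_zero, sub_zero] at h1
    have h2 : ‖G x‖ < (⌊‖G x‖⌋ : ℝ) + 1 := Int.lt_floor_add_one _
    rw [← h1] at h2
    have h3 : (⌊‖x‖⌋ : ℝ) ≤ ‖x‖ := Int.floor_le _
    linarith
  -- master relation
  have MR : ∀ (x z : Fin d → ℝ) (j : Fin d), ⌊z j - x j⌋ = ⌊G z j - G x j⌋ := by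
    intro x z j
    set C : ℝ := ‖x‖ + ‖z‖ + 2 with hC
    have hC2 : 2 ≤ C := by have := norm_nonneg x; have := norm_nonneg z; simp only [hC]; linarith
    obtain ⟨M, hM⟩ : ∃ M : ℤ, 2 * C ≤ (M:ℝ) := ⟨⌈2*C⌉, Int.le_ceil _⟩
    have hbx : ∀ i, |x i| ≤ ‖x‖ := fun i => abs_le_norm' x i
    have hbz : ∀ i, |z i| ≤ ‖z‖ := fun i => abs_le_norm' z i
    have hbgx : ∀ i, |G x i| ≤ ‖x‖ + 1 := fun i =>
      le_trans (abs_le_norm' (G x) i) (le_of_lt (hGbound x))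
    have hbgz : ∀ i, |G z i| ≤ ‖z‖ + 1 := fun i =>
      le_trans (abs_le_norm' (G z) i) (le_of_lt (hGbound z))
    set w : Fin d → ℝ := z + ic (Pi.single j M) with hw
    have hicM : ic (Pi.single j M) = Pi.single j (M:ℝ) := ic_single j M
    have hxj := abs_le.mp (hbx j)
    have hzj := abs_le.mp (hbz j)
    have hgxj := abs_le.mp (hbgx j)
    have hgzj := abs_le.mp (hbgz j)
    have h1 : ‖x - w‖ = (M:ℝ) + (z j - x j) := by
      rw [← norm_sub_rev]
      have hj : (w - x) j = (M:ℝ) + (z j - x j) := by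
        rw [hw, Pi.sub_apply, Pi.add_apply, hicM, Pi.single_eq_same]
        ring
      rw [dom_norm (w - x) j ?_, hj]
      intro i
      rw [hj]
      rcases eq_or_ne i j with h | hij
      · rw [h, hj, abs_of_nonneg (by simp only [hC] at hM; linarith)]
      · rw [hw, Pi.sub_apply, Pi.add_apply, hicM, Pi.single_eq_of_ne hij, add_zero]
        have h4 : |z i - x i| ≤ |z i| + |x i| := abs_sub _ _
        have h5 := hbz i
        have h6 := hbx i
        simp only [hC] at hM
        linarith
    have hGw : G w = G z + ic (Pi.single j M) := hGshift z (Pi.single j M)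
    have h2 : ‖G x - G w‖ = (M:ℝ) + (G z j - G x j) := by
      rw [← norm_sub_rev]
      have hj : (G w - G x) j = (M:ℝ) + (G z j - G x j) := by
        rw [hGw, Pi.sub_apply, Pi.add_apply, hicM, Pi.single_eq_same]
        ring
      rw [dom_norm (G w - G x) j ?_, hj]
      intro i
      rw [hj]
      rcases eq_or_ne i j with h | hij
      · rw [h, hj, abs_of_nonneg (by simp only [hC] at hM; linarith)]
      · rw [hGw, Pi.sub_apply, Pi.add_apply, hicM, Pi.single_eq_of_ne hij, add_zero]
        have h4 : |G z i - G x i| ≤ |G z i| + |G x i| := abs_sub _ _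
        have h5 := hbgz i
        have h6 := hbgx i
        simp only [hC] at hM
        linarith
    have h3 := hGstep x w
    rw [h1, h2, add_comm (M:ℝ) (z j - x j), add_comm (M:ℝ) (G z j - G x j),
      Int.floor_add_intCast, Int.floor_add_intCast] at h3
    omega
  -- coordinate dependence
  have hdep : ∀ (x z : Fin d → ℝ) (j : Fin d), x j = z j → G x j = G z j := by
    intro x z j hxz
    have h1 := MR x z j
    have h2 := MR z x j
    rw [hxz, sub_self, Int.floor_zero] at h1
    rw [← hxz, sub_self, Int.floor_zero] at h2
    have h3 := Int.floor_eq_zero_iff.mp h1.symm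
    have h4 := Int.floor_eq_zero_iff.mp h2.symm
    rw [Set.mem_Ico] at h3 h4
    linarith [h3.1, h3.2, h4.1, h4.2]
  set g : Fin d → ℝ → ℝ := fun j s => G (Pi.single j s) j with hgdef
  have hval : ∀ (x : Fin d → ℝ) (j : Fin d), G x j = g j (x j) :=
    fun x j => hdep x (Pi.single j (x j)) j (by rw [Pi.single_eq_same])
  have hgfl : ∀ (j : Fin d) (s t : ℝ), ⌊s - t⌋ = ⌊g j s - g j t⌋ := by
    intro j s t
    have h1 := MR (Pi.single j t) (Pi.single j s) j
    rwa [Pi.single_eq_same, Pi.single_eq_same] at h1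
  have hg00 : ∀ j, g j 0 = 0 := by
    intro j
    show G (Pi.single j 0) j = 0
    rw [Pi.single_zero, hG0]
    rfl
  have hgfloor : ∀ j s, ⌊g j s⌋ = ⌊s⌋ := by
    intro j s
    have h1 := hgfl j s 0
    rw [hg00, sub_zero, sub_zero] at h1
    exact h1.symm
  have hmaps : ∀ j, Set.MapsTo (g j) (Set.Ico (0:ℝ) 1) (Set.Ico (0:ℝ) 1) := by
    intro j s hs
    have h0 : ⌊s⌋ = 0 := Int.floor_eq_zero_iff.mpr hs
    have h1 := hgfloor j s
    rw [h0] at h1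
    exact Int.floor_eq_zero_iff.mp h1
  have hmono : ∀ j, StrictMonoOn (g j) (Set.Ico (0:ℝ) 1) := by
    intro j s hs t ht hst
    have h1 := hgfl j s t
    have h2 : ⌊s - t⌋ = -1 := by
      rw [Set.mem_Ico] at hs ht
      apply Int.floor_eq_iff.mpr
      constructor <;> push_cast <;> linarith
    rw [h2] at h1
    have h4 := Int.lt_floor_add_one (g j s - g j t)
    rw [← h1] at h4
    push_cast at h4
    linarith
  have hsurjg : ∀ j, Set.SurjOn (g j) (Set.Ico (0:ℝ) 1) (Set.Ico (0:ℝ) 1) := by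
    intro j c hc
    obtain ⟨x, hx⟩ := hHbij.2 (fun k => ε (σe.symm k) * (Pi.single j c : Fin d → ℝ) (σe.symm k))
    have hGx : G x = Pi.single j c := by
      funext i
      show ε i * H x (σ0 i) = (Pi.single j c : Fin d → ℝ) i
      rw [hx]
      show ε i * (ε (σe.symm (σ0 i)) * (Pi.single j c : Fin d → ℝ) (σe.symm (σ0 i))) = _
      have h5 : σe.symm (σ0 i) = i := σe.symm_apply_apply i
      rw [h5, ← mul_assoc, hε2, one_mul]
    have h6 : g j (x j) = c := by rw [← hval x j, hGx, Pi.single_eq_same]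
    have h7 := hgfloor j (x j)
    rw [h6] at h7
    have h8 : ⌊c⌋ = 0 := Int.floor_eq_zero_iff.mpr hc
    refine ⟨x j, Int.floor_eq_zero_iff.mp (by omega), h6⟩
  have hfrac : ∀ (j : Fin d) (s : ℝ), g j (s - ⌊s⌋) + ⌊s⌋ = g j s := by
    intro j s
    have h1 := hgfl j s (s - ⌊s⌋)
    have h2 := hgfl j (s - ⌊s⌋) s
    rw [show s - (s - (⌊s⌋:ℝ)) = ((⌊s⌋:ℤ):ℝ) by push_cast; ring, Int.floor_intCast] at h1
    rw [show (s - (⌊s⌋:ℝ)) - s = ((-⌊s⌋:ℤ):ℝ) by push_cast; ring, Int.floor_intCast] at h2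
    have h3 : ((⌊g j s - g j (s - ⌊s⌋)⌋ : ℤ):ℝ) ≤ g j s - g j (s - ⌊s⌋) := Int.floor_le _
    have h4 : ((⌊g j (s - ⌊s⌋) - g j s⌋ : ℤ):ℝ) ≤ g j (s - ⌊s⌋) - g j s := Int.floor_le _
    rw [← h1] at h3
    rw [← h2] at h4
    push_cast at h3 h4
    linarith
  refine ⟨σe, ε, g, hε,
    (fun i => Set.BijOn.mk (hmaps i) ((hmono i).injOn) (hsurjg i)), hmono, ?_⟩
  intro lam
  funext k
  have hj : σ0 (σe.symm k) = k := σe.apply_symm_apply k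
  set j := σe.symm k with hjdef
  have hL : (f lam - f 0) k = ε j * g j (lam j) := by
    have h2 : ε j * G lam j = ε j * g j (lam j) := by rw [hval lam j]
    show (H lam) k = _
    rw [← hj]
    have h3 : ε j * (ε j * H lam (σ0 j)) = H lam (σ0 j) := by
      rw [← mul_assoc, hε2, one_mul]
    rw [← h3]
    exact h2
  have hR : (∑ i, ((g i (lam i - ⌊lam i⌋) + ⌊lam i⌋) * ε i) •
      (Pi.single (σe i) (1:ℝ) : Fin d → ℝ)) k = ε j * g j (lam j) := by
    rw [Finset.sum_apply]
    rw [Finset.sum_eq_single j]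
    · have h4 : σe j = k := hj
      rw [Pi.smul_apply, h4, Pi.single_eq_same, smul_eq_mul, mul_one, hfrac j (lam j)]
      ring
    · intro i _ hij
      have h5 : k ≠ σe i := by
        intro hc
        exact hij (by rw [hjdef, hc, Equiv.symm_apply_apply])
      rw [Pi.smul_apply, Pi.single_eq_of_ne h5, smul_zero]
    · intro h
      exact absurd (Finset.mem_univ j) h
  exact hL.trans hR.symm
end

section
/- Let V be a finite-dimensional real normed space of dimension d ≥ 1, and let Λ be the additive subgroup of V generated by the extreme points of the closed unit ball B(0,1). Then for every v ∈ V there exists x ∈ Λ with ‖x − v‖ ≤ d/2. -/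
open Set Module

/-- Let `V` be a finite-dimensional real normed space of dimension
`d ≥ 1` and let `Λ` be the additive subgroup generated by the extreme points of the
closed unit ball. Then every `v ∈ V` is within distance `d / 2` of a point of `Λ`. -/
theorem exists_latticePoint_near
    {V : Type*} [NormedAddCommGroup V] [NormedSpace ℝ V] [FiniteDimensional ℝ V]
    (hd : 1 ≤ Module.finrank ℝ V)
    (Λ : AddSubgroup V)
    (hΛ : Λ = AddSubgroup.closure (Set.extremePoints ℝ (Metric.closedBall (0 : V) 1)))
    (v : V) :
    ∃ x ∈ Λ, ‖x - v‖ ≤ (Module.finrank ℝ V : ℝ) / 2 := by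
  set E := Set.extremePoints ℝ (Metric.closedBall (0 : V) 1) with hE
  -- the extreme points span V
  have hball : Metric.closedBall (0 : V) 1 ⊆ (Submodule.span ℝ E : Set V) := by
    have h1 : closure (convexHull ℝ E) = Metric.closedBall (0 : V) 1 :=
      closure_convexHull_extremePoints (isCompact_closedBall 0 1) (convex_closedBall 0 1)
    rw [← h1]
    have h2 : convexHull ℝ E ⊆ (Submodule.span ℝ E : Set V) :=
      convexHull_min Submodule.subset_span (Submodule.span ℝ E).convex
    calc closure (convexHull ℝ E) ⊆ closure (Submodule.span ℝ E : Set V) :=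
            closure_mono h2
      _ = (Submodule.span ℝ E : Set V) :=
            (Submodule.closed_of_finiteDimensional _).closure_eq
  have hspan : Submodule.span ℝ E = ⊤ := by
    rw [eq_top_iff]
    intro x _
    rcases eq_or_ne x 0 with rfl | hx
    · exact Submodule.zero_mem _
    · have hmem : (‖x‖⁻¹ : ℝ) • x ∈ Metric.closedBall (0 : V) 1 := by
        simp [norm_smul, abs_of_nonneg (inv_nonneg.2 (norm_nonneg x)),
          inv_mul_cancel₀ (norm_ne_zero_iff.2 hx)]
      have := hball hmem
      have := Submodule.smul_mem (Submodule.span ℝ E) (‖x‖ : ℝ) this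
      rwa [smul_smul, mul_inv_cancel₀ (norm_ne_zero_iff.2 hx), one_smul] at this
  -- extract a basis from E
  obtain ⟨s, hsE, hsspan, hsind⟩ := exists_linearIndependent ℝ E
  rw [hspan] at hsspan
  have hsfin : s.Finite := hsind.setFinite
  haveI : Fintype s := hsfin.fintype
  let b : Basis s ℝ V := Basis.mk hsind (by rw [Subtype.range_coe, hsspan])
  have hcard : Fintype.card s = finrank ℝ V := (finrank_eq_card_basis b).symm
  -- round coordinates
  set c : s → ℝ := fun i => b.repr v i with hc
  refine ⟨∑ i, (round (c i) : ℤ) • (i : V), ?_, ?_⟩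
  · rw [hΛ]
    exact AddSubgroup.sum_mem _ fun i _ =>
      AddSubgroup.zsmul_mem _ (AddSubgroup.subset_closure (hsE i.2)) _
  · have hv : v = ∑ i, c i • (i : V) := by
      conv_lhs => rw [← b.sum_repr v]
      refine Finset.sum_congr rfl fun i _ => ?_
      rw [Basis.mk_apply]
    rw [hv, ← Finset.sum_sub_distrib]
    have : ∀ i : s, ((round (c i) : ℤ) • (i : V)) - c i • (i : V)
        = ((round (c i) : ℝ) - c i) • (i : V) := by
      intro i
      rw [sub_smul, ← Int.cast_smul_eq_zsmul ℝ]
    simp_rw [this]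
    calc ‖∑ i, ((round (c i) : ℝ) - c i) • (i : V)‖
        ≤ ∑ i, ‖((round (c i) : ℝ) - c i) • (i : V)‖ := norm_sum_le _ _
      _ ≤ ∑ _i : s, (1 / 2 : ℝ) := by
          refine Finset.sum_le_sum fun i _ => ?_
          rw [norm_smul]
          have h1 : ‖(i : V)‖ ≤ 1 := by
            have := (hsE i.2).1
            simpa [Metric.mem_closedBall, dist_zero_right] using this
          have h2 : ‖((round (c i) : ℝ) - c i)‖ ≤ 1 / 2 := by
            rw [Real.norm_eq_abs, abs_sub_comm]
            exact abs_sub_round (c i)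
          calc ‖((round (c i) : ℝ) - c i)‖ * ‖(i : V)‖
              ≤ (1/2) * 1 := mul_le_mul h2 h1 (norm_nonneg _) (by norm_num)
            _ = 1/2 := by ring
      _ = (finrank ℝ V : ℝ) / 2 := by
          rw [Finset.sum_const, Finset.card_univ, hcard]
          simp [div_eq_mul_inv, mul_comm]
end

section
/- Let V be a finite-dimensional real normed space and let v be an ℓ∞-direction of V. Then the subspace corresponding to v is unique: if U and U′ are subspaces with V = span{v} ⊕ U, ‖αv + u‖ = max(|α|, ‖u‖) for all α ∈ ℝ, u ∈ U, and likewise for U′, then U = U′. -/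
/-- `v` is an ℓ∞-direction of `V` with corresponding subspace `U`: `v` is a unit
vector, `V = span{v} ⊕ U` (algebraic direct sum), and
`‖α • v + u‖ = max |α| ‖u‖` for all `α : ℝ` and `u ∈ U`. -/
def IsLinftyDirection {V : Type*} [NormedAddCommGroup V] [NormedSpace ℝ V]
    (v : V) (U : Submodule ℝ V) : Prop :=
  ‖v‖ = 1 ∧ IsCompl (Submodule.span ℝ {v}) U ∧
    ∀ (α : ℝ), ∀ u ∈ U, ‖α • v + u‖ = max |α| ‖u‖

lemma linftyDirection_subspace_le
    {V : Type*} [NormedAddCommGroup V] [NormedSpace ℝ V]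
    (v : V) (U U' : Submodule ℝ V)
    (hU : IsLinftyDirection v U) (hU' : IsLinftyDirection v U') :
    U' ≤ U := by
  obtain ⟨hv1, hcompl, hnorm⟩ := hU
  obtain ⟨_, _, hnorm'⟩ := hU'
  intro x hx
  have hsup : x ∈ Submodule.span ℝ {v} ⊔ U := by
    rw [hcompl.codisjoint.eq_top]; trivial
  obtain ⟨a, ha, u, hu, hau⟩ := Submodule.mem_sup.mp hsup
  obtain ⟨β, rfl⟩ := Submodule.mem_span_singleton.mp ha
  suffices hβ : β = 0 by
    rw [← hau, hβ, zero_smul, zero_add]; exact hu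
  by_contra hβ
  have hβpos : 0 < |β| := abs_pos.mpr hβ
  set c : ℝ := (‖u‖ + |β|) / |β| with hc
  have hc0 : 0 ≤ c := div_nonneg (by positivity) hβpos.le
  have hcβ : c * |β| = ‖u‖ + |β| := by
    rw [hc, div_mul_cancel₀ _ hβpos.ne']
  have key : (c * β) • v + x = (c * β + β) • v + u := by
    rw [← hau, add_smul]; abel
  have hxnorm : ‖x‖ = max |β| ‖u‖ := by rw [← hau]; exact hnorm β u hu
  have h1 : ‖(c * β) • v + x‖ = max |c * β| ‖x‖ := hnorm' _ x hx
  have h2 : ‖(c * β + β) • v + u‖ = max |c * β + β| ‖u‖ := hnorm _ u hu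
  have e1 : |c * β| = ‖u‖ + |β| := by rw [abs_mul, abs_of_nonneg hc0, hcβ]
  have e2 : |c * β + β| = ‖u‖ + 2 * |β| := by
    have : c * β + β = (c + 1) * β := by ring
    rw [this, abs_mul, abs_of_nonneg (by linarith), add_mul, one_mul, hcβ]
    ring
  rw [key, h2, e2] at h1
  rw [e1, hxnorm] at h1
  have hn : (0:ℝ) ≤ ‖u‖ := norm_nonneg u
  have l1 : (‖u‖ + 2 * |β|) ⊔ ‖u‖ = ‖u‖ + 2 * |β| := max_eq_left (by linarith)
  have l3 : (‖u‖ + |β|) ⊔ (|β| ⊔ ‖u‖) = ‖u‖ + |β| :=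
    max_eq_left (max_le (by linarith) (by linarith))
  rw [l1, l3] at h1
  linarith

/-- The subspace corresponding to an ℓ∞-direction is unique. -/
theorem linftyDirection_subspace_unique
    {V : Type*} [NormedAddCommGroup V] [NormedSpace ℝ V] [FiniteDimensional ℝ V]
    (v : V) (U U' : Submodule ℝ V)
    (hU : IsLinftyDirection v U) (hU' : IsLinftyDirection v U') :
    U = U' := by
  exact le_antisymm (linftyDirection_subspace_le v U' U hU' hU)
    (linftyDirection_subspace_le v U U' hU hU')
end

section
/- Let V be a finite-dimensional real normed space and let v_1 and v_2 be distinct ℓ∞-directions (i.e., v_2 ≠ ±v_1) with corresponding subspaces U_1 and U_2. Then v_2 ∈ U_1. -/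
/-- If `v₁`, `v₂` are distinct ℓ∞-directions (`v₂ ≠ ±v₁`) with
corresponding subspaces `U₁`, `U₂`, then `v₂ ∈ U₁`. -/
theorem linftyDirection_mem_of_distinct
    {V : Type*} [NormedAddCommGroup V] [NormedSpace ℝ V] [FiniteDimensional ℝ V]
    (v₁ v₂ : V) (U₁ U₂ : Submodule ℝ V)
    (h₁ : IsLinftyDirection v₁ U₁) (h₂ : IsLinftyDirection v₂ U₂)
    (hne : v₂ ≠ v₁) (hne' : v₂ ≠ -v₁) :
    v₂ ∈ U₁ := by
  obtain ⟨hn1, hc1, hp1⟩ := h₁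
  obtain ⟨hn2, hc2, hp2⟩ := h₂
  have hv2mem : v₂ ∈ Submodule.span ℝ {v₁} ⊔ U₁ := by
    rw [hc1.sup_eq_top]; exact Submodule.mem_top
  obtain ⟨a, ha, u, hu, hau⟩ := Submodule.mem_sup.mp hv2mem
  obtain ⟨α, rfl⟩ := Submodule.mem_span_singleton.mp ha
  have hv1mem : v₁ ∈ Submodule.span ℝ {v₂} ⊔ U₂ := by
    rw [hc2.sup_eq_top]; exact Submodule.mem_top
  obtain ⟨b, hb, w, hw, hbw⟩ := Submodule.mem_sup.mp hv1mem
  obtain ⟨γ, rfl⟩ := Submodule.mem_span_singleton.mp hb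
  -- two-sided norm formula for `t • v₁ + v₂`
  have P : ∀ t : ℝ, max |t + α| ‖u‖ = max |1 + t * γ| (|t| * ‖w‖) := by
    intro t
    have e1 : t • v₁ + v₂ = (t + α) • v₁ + u := by
      rw [← hau]; module
    have e2 : t • v₁ + v₂ = (1 + t * γ) • v₂ + t • w := by
      conv_lhs => rw [← hbw]
      module
    calc max |t + α| ‖u‖ = ‖(t + α) • v₁ + u‖ := (hp1 _ u hu).symm
      _ = ‖(1 + t * γ) • v₂ + t • w‖ := by rw [← e1, e2]
      _ = max |1 + t * γ| ‖t • w‖ := hp2 _ _ (U₂.smul_mem t hw)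
      _ = max |1 + t * γ| (|t| * ‖w‖) := by rw [norm_smul, Real.norm_eq_abs]
  -- two-sided norm formula for `v₁ + s • v₂`
  have Q : ∀ s : ℝ, max |1 + s * α| (|s| * ‖u‖) = max |γ + s| ‖w‖ := by
    intro s
    have e1 : v₁ + s • v₂ = (1 + s * α) • v₁ + s • u := by
      rw [← hau]; module
    have e2 : v₁ + s • v₂ = (γ + s) • v₂ + w := by
      conv_lhs => rw [← hbw]
      module
    calc max |1 + s * α| (|s| * ‖u‖)
        = max |1 + s * α| ‖s • u‖ := by rw [norm_smul, Real.norm_eq_abs]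
      _ = ‖(1 + s * α) • v₁ + s • u‖ := (hp1 _ _ (U₁.smul_mem s hu)).symm
      _ = ‖(γ + s) • v₂ + w‖ := by rw [← e1, e2]
      _ = max |γ + s| ‖w‖ := hp2 _ w hw
  have n1 : max |α| ‖u‖ = 1 := by
    have := P 0
    simpa using this
  have n2 : max |γ| ‖w‖ = 1 := by
    have := Q 0
    simpa using this.symm
  have hα1 : |α| ≤ 1 := by rw [← n1]; exact le_max_left _ _
  have hu1 : ‖u‖ ≤ 1 := by rw [← n1]; exact le_max_right _ _
  have hγ1 : |γ| ≤ 1 := by rw [← n2]; exact le_max_left _ _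
  have hw1 : ‖w‖ ≤ 1 := by rw [← n2]; exact le_max_right _ _
  suffices hα0 : α = 0 by
    rw [hα0, zero_smul, zero_add] at hau
    exact hau ▸ hu
  by_contra hα0
  have hαpos : 0 < |α| := abs_pos.mpr hα0
  rcases hα1.lt_or_eq with hlt | heq
  · -- case `|α| < 1`, so `‖u‖ = 1`
    have hu1' : ‖u‖ = 1 := by
      rcases max_choice |α| ‖u‖ with h | h
      · have : |α| = 1 := h.symm.trans n1
        linarith
      · exact h.symm.trans n1
    have key := Q (-1 / α)
    have h0 : 1 + (-1 / α) * α = 0 := by field_simp; norm_num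
    have h0' : |(-1 : ℝ) / α| = 1 / |α| := by
      rw [abs_div, abs_neg, abs_one]
    rw [h0, abs_zero, h0', hu1', mul_one] at key
    rw [max_eq_right (by positivity)] at key
    have hgt : 1 < 1 / |α| := one_lt_one_div hαpos hlt
    have hg : |γ + -1 / α| = 1 / |α| := by
      rcases max_choice |γ + -1 / α| ‖w‖ with h | h
      · rw [h] at key; exact key.symm
      · rw [h] at key; linarith
    have hmul : |α * (γ + -1 / α)| = 1 := by
      rw [abs_mul, hg]
      field_simp
    have hagm : α * (γ + -1 / α) = α * γ - 1 := by
      field_simp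
      ring
    rw [hagm] at hmul
    have hsmall : |α * γ| < 1 := by
      rw [abs_mul]
      nlinarith [abs_nonneg γ]
    have hγ0 : γ = 0 := by
      rcases (abs_eq (by norm_num : (0:ℝ) ≤ 1)).mp hmul with h | h
      · exfalso
        have h2 : α * γ = 2 := by linarith
        rw [h2] at hsmall
        norm_num at hsmall
      · have h2 : α * γ = 0 := by linarith
        rcases mul_eq_zero.mp h2 with h' | h'
        · exact absurd h' hα0
        · exact h'
    have hw1' : ‖w‖ = 1 := by
      rw [hγ0, abs_zero, max_eq_right (norm_nonneg w)] at n2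
      exact n2
    rcases lt_or_gt_of_ne hα0 with hneg | hpos
    · have key2 := P (-1)
      have hre : max |1 + (-1) * γ| (|(-1 : ℝ)| * ‖w‖) = 1 := by
        rw [hγ0, hw1']; norm_num
      have hle : |(-1 : ℝ) + α| ≤ 1 :=
        calc |(-1 : ℝ) + α| ≤ max |(-1 : ℝ) + α| ‖u‖ := le_max_left _ _
          _ = 1 := key2.trans hre
      rw [abs_of_nonpos (by linarith)] at hle
      linarith
    · have key2 := P 1
      have hre : max |1 + 1 * γ| (|(1 : ℝ)| * ‖w‖) = 1 := by
        rw [hγ0, hw1']; norm_num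
      have hle : |(1 : ℝ) + α| ≤ 1 :=
        calc |(1 : ℝ) + α| ≤ max |(1 : ℝ) + α| ‖u‖ := le_max_left _ _
          _ = 1 := key2.trans hre
      rw [abs_of_pos (by linarith)] at hle
      linarith
  · -- case `|α| = 1`
    have hu0 : u ≠ 0 := by
      intro h
      rw [h, add_zero] at hau
      rcases (abs_eq (by norm_num : (0:ℝ) ≤ 1)).mp heq with h' | h'
      · rw [h', one_smul] at hau; exact hne hau.symm
      · rw [h', neg_one_smul] at hau; exact hne' hau.symm
    have hup : 0 < ‖u‖ := norm_pos_iff.mpr hu0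
    -- `2‖w‖ ≤ 1`
    have step1 := P (-2 * α)
    have e1 : |(-2 * α) + α| = 1 := by
      have h : (-2 * α) + α = -α := by ring
      rw [h, abs_neg, ← heq]
    have e2 : |(-2 : ℝ) * α| = 2 := by
      rw [abs_mul, heq]; norm_num
    rw [e1, e2, max_eq_left hu1] at step1
    have hw2 : 2 * ‖w‖ ≤ 1 := by
      calc 2 * ‖w‖ ≤ max |1 + (-2 * α) * γ| (2 * ‖w‖) := le_max_right _ _
        _ = 1 := step1.symm
    have hγe : |γ| = 1 := by
      rcases max_choice |γ| ‖w‖ with h | h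
      · exact h.symm.trans n2
      · exfalso
        have : ‖w‖ = 1 := h.symm.trans n2
        linarith
    -- from `Q (-γ)` : `max |1 - γα| ‖u‖ = ‖w‖`
    have step2 := Q (-γ)
    have e3 : |γ + -γ| = 0 := by simp
    rw [e3, abs_neg, hγe, one_mul, max_eq_right (norm_nonneg w)] at step2
    have hgu : ‖u‖ ≤ ‖w‖ := by
      rw [← step2]; exact le_max_right _ _
    have hga : |1 + -γ * α| ≤ ‖w‖ := by
      rw [← step2]; exact le_max_left _ _
    have hγα : γ * α = 1 := by
      have habs : |γ * α| = 1 := by rw [abs_mul, hγe, heq, one_mul]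
      rcases (abs_eq (by norm_num : (0:ℝ) ≤ 1)).mp habs with h | h
      · exact h
      · exfalso
        have h4 : 1 + -γ * α = 2 := by rw [neg_mul, h]; ring
        rw [h4] at hga
        have : |(2 : ℝ)| = 2 := by norm_num
        rw [this] at hga
        linarith
    -- `‖u‖ = ‖w‖`
    have step3 := P (-α)
    have e4 : |(-α) + α| = 0 := by simp
    have e5 : |1 + (-α) * γ| = 0 := by
      have h : 1 + (-α) * γ = 0 := by
        linear_combination -hγα
      rw [h, abs_zero]
    have e6 : |(-α)| = 1 := by rw [abs_neg, ← heq]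
    rw [e4, e5, e6, one_mul, max_eq_right (norm_nonneg u),
      max_eq_right (norm_nonneg w)] at step3
    -- final contradiction with `t = -(α * (1 + ‖u‖/2))`
    have step4 := P (-(α * (1 + ‖u‖ / 2)))
    have f1 : |(-(α * (1 + ‖u‖ / 2))) + α| = ‖u‖ / 2 := by
      have h : (-(α * (1 + ‖u‖ / 2))) + α = -(α * (‖u‖ / 2)) := by ring
      rw [h, abs_neg, abs_mul, heq, one_mul, abs_of_nonneg (by positivity)]
    have f2 : |1 + (-(α * (1 + ‖u‖ / 2))) * γ| = ‖u‖ / 2 := by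
      have h : 1 + (-(α * (1 + ‖u‖ / 2))) * γ = -(‖u‖ / 2) := by
        linear_combination (-(1 + ‖u‖ / 2)) * hγα
      rw [h, abs_neg, abs_of_nonneg (by positivity)]
    have f3 : |(-(α * (1 + ‖u‖ / 2)))| = 1 + ‖u‖ / 2 := by
      rw [abs_neg, abs_mul, heq, one_mul, abs_of_nonneg (by positivity)]
    rw [f1, f2, f3, ← step3] at step4
    -- step4 : max (‖u‖/2) ‖u‖ = max (‖u‖/2) ((1 + ‖u‖/2) * ‖u‖)
    have hmr : (1 + ‖u‖ / 2) * ‖u‖ ≤ max (‖u‖ / 2) ‖u‖ := by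
      rw [step4]; exact le_max_right _ _
    have hml : max (‖u‖ / 2) ‖u‖ ≤ ‖u‖ := max_le (by linarith) le_rfl
    nlinarith [mul_pos hup hup, le_trans hmr hml]
end

section
/- Let V be a finite-dimensional real normed space and let v_1, …, v_k be pairwise distinct ℓ∞-directions (no two equal up to sign) with corresponding subspaces U_1, …, U_k. Then V is the algebraic direct sum V = span{v_1} ⊕ span{v_2} ⊕ … ⊕ span{v_k} ⊕ (U_1 ∩ … ∩ U_k), and for all λ_1, …, λ_k ∈ ℝ and u ∈ U_1 ∩ … ∩ U_k one has ‖∑_{i=1}^k λ_i v_i + u‖ = max(|λ_1|, …, |λ_k|, ‖u‖). -/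
section aux
variable {V : Type*} [NormedAddCommGroup V] [NormedSpace ℝ V]

lemma decomp {v : V} {U : Submodule ℝ V} (h : IsCompl (Submodule.span ℝ {v}) U) (x : V) :
    ∃ (a : ℝ) (u : V), u ∈ U ∧ x = a • v + u := by
  have hx : x ∈ Submodule.span ℝ {v} ⊔ U := by rw [h.codisjoint.eq_top]; trivial
  rcases Submodule.mem_sup.1 hx with ⟨y, hy, z, hz, hyz⟩
  rcases Submodule.mem_span_singleton.1 hy with ⟨a, rfl⟩
  exact ⟨a, z, hz, hyz.symm⟩

set_option maxHeartbeats 2000000 in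
lemma llA {v w : V} {Uv Uw : Submodule ℝ V}
    (hv : IsLinftyDirection v Uv) (hw : IsLinftyDirection w Uw)
    (h1 : w ≠ v) (h2 : w ≠ -v) : w ∈ Uv := by
  obtain ⟨hv1, hvc, hvn⟩ := hv
  obtain ⟨hw1, hwc, hwn⟩ := hw
  obtain ⟨α, u, hu, hwd⟩ := decomp hvc w
  obtain ⟨β, z, hz, hvd⟩ := decomp hwc v
  rcases eq_or_ne α 0 with rfl | hα0
  · rw [hwd, zero_smul, zero_add]; exact hu
  exfalso
  have hc : max |α| ‖u‖ = 1 := by rw [← hvn α u hu, ← hwd, hw1]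
  have hd : max |β| ‖z‖ = 1 := by rw [← hwn β z hz, ← hvd, hv1]
  have hα1 : |α| ≤ 1 := (le_max_left _ _).trans hc.le
  have hcu : ‖u‖ ≤ 1 := (le_max_right _ _).trans hc.le
  have hβ1 : |β| ≤ 1 := (le_max_left _ _).trans hd.le
  have hdz : ‖z‖ ≤ 1 := (le_max_right _ _).trans hd.le
  have hzval : z = (1 - β*α) • v + (-β) • u := by
    linear_combination (norm := module) (-1 : ℝ) • hvd - β • hwd
  have huval : u = (1 - α*β) • w + (-α) • z := by
    linear_combination (norm := module) (-1 : ℝ) • hwd - α • hvd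
  have key2 : ‖u‖ = max |1 - α*β| (|α| * ‖z‖) := by
    rw [huval, hwn _ _ (Uw.smul_mem _ hz), norm_smul, Real.norm_eq_abs, abs_neg]
  rcases eq_or_ne (α*β) 1 with hab | hab
  · -- case αβ = 1 : w = ±v, contradiction
    have hprod : |α| * |β| = 1 := by rw [← abs_mul, hab, abs_one]
    have habs1 : |α| = 1 := by
      nlinarith [mul_nonneg (abs_nonneg α) (sub_nonneg.2 hβ1), abs_nonneg α]
    have haa : α * α = 1 := by nlinarith [sq_abs α]
    have hb : β = α := mul_left_cancel₀ hα0 (by rw [hab, haa])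
    have hzu : z = (-α) • u := by
      rw [hzval, hb, show (1 - α*α : ℝ) = 0 by linarith, zero_smul, zero_add]
    have huw : u ∈ Uw := by
      have he : u = (-α) • z := by
        rw [hzu, smul_smul, show (-α) * (-α) = 1 by nlinarith, one_smul]
      rw [he]; exact Uw.smul_mem _ hz
    rcases eq_or_ne ‖u‖ 0 with hu0 | hu0
    · have hu0' : u = 0 := norm_eq_zero.1 hu0
      rcases (abs_eq (by norm_num : (0:ℝ) ≤ 1)).1 habs1 with ha | ha
      · exact h1 (by rw [hwd, hu0', ha, one_smul, add_zero])
      · exact h2 (by rw [hwd, hu0', ha, neg_one_smul, add_zero])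
    · have hcpos : 0 < ‖u‖ := lt_of_le_of_ne (norm_nonneg u) (Ne.symm hu0)
      set c := ‖u‖ with hcdef
      set s : ℝ := α * (1 + 2 / c) with hsdef
      have hv2 : v = α • w + (-α) • u := by rw [hvd, hb, hzu]
      have w2 : v + s • u = α • w + (s - α) • u := by
        linear_combination (norm := module) hv2
      have n1 : ‖v + s • u‖ = max 1 (|s| * c) := by
        have h := hvn 1 (s • u) (Uv.smul_mem _ hu)
        rw [one_smul] at h
        rw [h, abs_one, norm_smul, Real.norm_eq_abs]
      have n2 : ‖v + s • u‖ = max 1 (|s - α| * c) := by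
        rw [w2, hwn _ _ (Uw.smul_mem _ huw), norm_smul, Real.norm_eq_abs, habs1]
      have hs1 : |s| * c = c + 2 := by
        rw [hsdef, abs_mul, habs1, one_mul, abs_of_pos (by positivity)]
        field_simp
      have hs2 : |s - α| * c = 2 := by
        have he : s - α = α * (2 / c) := by rw [hsdef]; ring
        rw [he, abs_mul, habs1, one_mul, abs_of_pos (by positivity)]
        field_simp
      have hA := n1.symm.trans n2
      rw [hs1, hs2] at hA
      have hle : c + 2 ≤ 2 := by
        calc c + 2 ≤ max 1 (c + 2) := le_max_right _ _
          _ = max 1 2 := hA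
          _ = 2 := by norm_num
      linarith
  · -- case αβ ≠ 1
    have hc1 : ‖u‖ = 1 := by
      by_contra h
      have hlt : ‖u‖ < 1 := lt_of_le_of_ne hcu h
      have ha1 : |α| = 1 := by
        rcases le_or_gt |α| ‖u‖ with h' | h'
        · rw [max_eq_right h'] at hc; linarith
        · rwa [max_eq_left h'.le] at hc
      have hzlt : ‖z‖ < 1 := by
        rw [key2, ha1, one_mul] at hlt
        exact lt_of_le_of_lt (le_max_right _ _) hlt
      have hb1 : |β| = 1 := by
        rcases le_or_gt |β| ‖z‖ with h' | h'
        · rw [max_eq_right h'] at hd; linarith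
        · rwa [max_eq_left h'.le] at hd
      have hab1 : |α * β| = 1 := by rw [abs_mul, ha1, hb1, one_mul]
      rcases (abs_eq (by norm_num : (0:ℝ) ≤ 1)).1 hab1 with h' | h'
      · exact hab h'
      · rw [key2, h'] at hlt
        have h2' : (2:ℝ) ≤ max |1 - (-1:ℝ)| (|α| * ‖z‖) := by
          rw [show |1 - (-1:ℝ)| = 2 by norm_num]; exact le_max_left _ _
        linarith
    set σ : ℝ := if 0 < α then 1 else -1 with hσdef
    have hσα : σ * α = |α| := by
      rcases lt_or_gt_of_ne hα0 with h | h
      · rw [hσdef, if_neg (by linarith), abs_of_neg h]; ring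
      · rw [hσdef, if_pos h, abs_of_pos h, one_mul]
    have hσabs : |σ| = 1 := by
      rcases lt_or_gt_of_ne hα0 with h | h
      · rw [hσdef, if_neg (by linarith)]; norm_num
      · rw [hσdef, if_pos h]; norm_num
    have hσσ : σ * σ = 1 := by
      have h := sq_abs σ; rw [hσabs] at h; nlinarith
    have Ev : ∀ t : ℝ, max |β + t| ‖z‖ = max |1 + t*α| |t| := by
      intro t
      have w1 : v + t • w = (1 + t*α) • v + t • u := by
        linear_combination (norm := module) t • hwd
      have w2 : v + t • w = (β + t) • w + z := by
        linear_combination (norm := module) hvd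
      have n1 : ‖v + t • w‖ = max |1 + t*α| (|t| * ‖u‖) := by
        rw [w1, hvn _ _ (Uv.smul_mem _ hu), norm_smul, Real.norm_eq_abs]
      have n2 : ‖v + t • w‖ = max |β + t| ‖z‖ := by rw [w2, hwn _ _ hz]
      rw [← n2, n1, hc1, mul_one]
    have hσβge : -|β| ≤ σ * β := by
      have h' : |σ * β| = |β| := by rw [abs_mul, hσabs, one_mul]
      linarith [neg_abs_le (σ * β)]
    have habsσ : ∀ T : ℝ, 1 + |β| ≤ T → |β + σ * T| = σ * β + T := by
      intro T hT
      have h1' : β + σ * T = σ * (σ * β + T) := by linear_combination (-β) * hσσ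
      rw [h1', abs_mul, hσabs, one_mul, abs_of_pos]
      linarith
    rcases hα1.lt_or_eq with ha1 | ha1
    · -- |α| < 1 : derive β = 0, then α = 0
      have hden : 0 < 1 - |α| := by linarith
      set T : ℝ := 1 + |β| + 2 / (1 - |α|) with hTdef
      have hTpos : 1 + |β| ≤ T := by
        rw [hTdef]
        have hp : 0 < 2 / (1 - |α|) := by positivity
        linarith
      have hT2 : 2 ≤ T * (1 - |α|) := by
        have hexp : T * (1 - |α|) = (1 + |β|) * (1 - |α|) + 2 := by
          rw [hTdef]; field_simp
        linarith [mul_nonneg (by positivity : (0:ℝ) ≤ 1 + |β|) hden.le]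
      have hE := Ev (σ * T)
      have hTnn : 0 ≤ T := by rw [hTdef]; positivity
      have htα : σ * T * α = T * |α| := by rw [← hσα]; ring
      have hr1 : |1 + σ * T * α| = 1 + T * |α| := by
        rw [htα, abs_of_pos]
        positivity
      have hr2 : |σ * T| = T := by rw [abs_mul, hσabs, one_mul, abs_of_nonneg hTnn]
      rw [hr1, hr2, habsσ T hTpos] at hE
      have hT2' : 1 + T * |α| ≤ T := by
        have hr : T * (1 - |α|) = T - T * |α| := by ring
        linarith
      rw [max_eq_right hT2'] at hE
      have hσβT : ‖z‖ ≤ σ * β + T := by linarith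
      rw [max_eq_left hσβT] at hE
      have hβ0 : β = 0 := by
        have hσβ : σ * β = 0 := by
          have hTbig : 1 + |β| ≤ T := hTpos
          linarith [hE]
        rcases mul_eq_zero.1 hσβ with h | h
        · exfalso; rw [h] at hσabs; simp at hσabs
        · exact h
      have hzv : z = v := by rw [hvd, hβ0, zero_smul, zero_add]
      have e1 : w + (2*σ) • v = (α + 2*σ) • v + u := by
        linear_combination (norm := module) hwd
      have e2 : α + 2*σ = σ * (σ * α + 2) := by linear_combination (-α) * hσσ
      have habs2 : |α + 2*σ| = |α| + 2 := by
        rw [e2, abs_mul, hσabs, one_mul, hσα, abs_of_pos]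
        positivity
      have n1 : ‖w + (2*σ) • v‖ = |α| + 2 := by
        rw [e1, hvn _ _ hu, hc1, habs2, max_eq_left (by linarith [abs_nonneg α])]
      have n2 : ‖w + (2*σ) • v‖ = 2 := by
        have e3 : w + (2*σ) • v = (1:ℝ) • w + (2*σ) • z := by rw [hzv, one_smul]
        rw [e3, hwn _ _ (Uw.smul_mem _ hz), norm_smul, hzv, hv1, mul_one,
          Real.norm_eq_abs, abs_mul, hσabs]
        norm_num
      rw [n2] at n1
      have : |α| = 0 := by linarith
      exact hα0 (abs_eq_zero.1 this)
    · -- |α| = 1 : derive β = σ, so αβ = 1, contradiction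
      set T : ℝ := 1 + |β| with hTdef
      have hT1 : 0 ≤ 1 + |β| := by positivity
      have hE := Ev (σ * T)
      have htα : σ * T * α = T := by
        have h' : σ * T * α = T * |α| := by rw [← hσα]; ring
        rw [h', ha1, mul_one]
      have hr1 : |1 + σ * T * α| = 1 + T := by
        rw [htα, abs_of_pos]
        rw [hTdef]; positivity
      have hr2 : |σ * T| = T := by
        rw [abs_mul, hσabs, one_mul, abs_of_nonneg]
        rw [hTdef]; positivity
      rw [hr1, hr2, habsσ T le_rfl, max_eq_left (by linarith)] at hE
      rw [max_eq_left (by linarith : T ≤ 1 + T)] at hE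
      have hbσ : β = σ := by
        have h1' : σ * β = 1 := by linarith
        linear_combination σ * h1' - β * hσσ
      exact hab (by rw [hbσ, mul_comm, hσα, ha1])


lemma normC {k : ℕ} (v : Fin k → V) (U : Fin k → Submodule ℝ V)
    (hdir : ∀ i, IsLinftyDirection (v i) (U i))
    (hmem : ∀ i j, i ≠ j → v j ∈ U i) :
    ∀ s : Finset (Fin k), ∀ lam : Fin k → ℝ, ∀ u : V, (∀ i ∈ s, u ∈ U i) →
      ‖(∑ i ∈ s, lam i • v i) + u‖₊ = (s.sup fun i => ‖lam i‖₊) ⊔ ‖u‖₊ := by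
  intro s
  induction s using Finset.induction_on with
  | empty => intro lam u _; simp
  | @insert a s ha IH =>
    intro lam u hu
    have hwU : (∑ i ∈ s, lam i • v i) + u ∈ U a := by
      refine Submodule.add_mem _ (Submodule.sum_mem _ fun i hi => ?_)
        (hu a (Finset.mem_insert_self a s))
      exact Submodule.smul_mem _ _ (hmem a i (fun h => ha (h ▸ hi)))
    have hsum : (∑ i ∈ insert a s, lam i • v i) + u
        = lam a • v a + ((∑ i ∈ s, lam i • v i) + u) := by
      rw [Finset.sum_insert ha, add_assoc]
    have hn : ‖lam a • v a + ((∑ i ∈ s, lam i • v i) + u)‖₊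
        = ‖lam a‖₊ ⊔ ‖(∑ i ∈ s, lam i • v i) + u‖₊ := by
      have h := (hdir a).2.2 (lam a) _ hwU
      apply NNReal.coe_injective
      push_cast
      rw [h, Real.norm_eq_abs]
    rw [hsum, hn, IH lam u (fun i hi => hu i (Finset.mem_insert_of_mem hi)),
      Finset.sup_insert, sup_assoc]

lemma exC {k : ℕ} (v : Fin k → V) (U : Fin k → Submodule ℝ V)
    (hdir : ∀ i, IsLinftyDirection (v i) (U i))
    (hmem : ∀ i j, i ≠ j → v j ∈ U i) :
    ∀ s : Finset (Fin k), ∀ x : V, ∃ (lam : Fin k → ℝ) (u : V),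
      (∀ i ∈ s, u ∈ U i) ∧ x = (∑ i ∈ s, lam i • v i) + u := by
  intro s
  induction s using Finset.induction_on with
  | empty => intro x; exact ⟨0, x, by simp, by simp⟩
  | @insert a s ha IH =>
    intro x
    obtain ⟨lam, u, hu, hx⟩ := IH x
    obtain ⟨μ, u', hu', hudef⟩ := decomp (hdir a).2.1 u
    refine ⟨Function.update lam a μ, u', ?_, ?_⟩
    · intro i hi
      rcases Finset.mem_insert.1 hi with rfl | his
      · exact hu'
      · have h1 : u' = u - μ • v a := by rw [hudef]; abel
        rw [h1]
        exact Submodule.sub_mem _ (hu i his)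
          (Submodule.smul_mem _ _ (hmem i a (by rintro rfl; exact ha his)))
    · rw [Finset.sum_insert ha, Function.update_self]
      have hss : ∑ i ∈ s, Function.update lam a μ i • v i = ∑ i ∈ s, lam i • v i :=
        Finset.sum_congr rfl fun i hi => by
          rw [Function.update_of_ne (by rintro rfl; exact ha hi)]
      rw [hss, hx, hudef]
      abel

lemma supcoe {k : ℕ} (lam : Fin k → ℝ) :
    ((Finset.univ.sup fun i => ‖lam i‖₊ : NNReal) : ℝ) = ⨆ i, |lam i| := by
  rcases Nat.eq_zero_or_pos k with rfl | hk
  · simp [Real.iSup_of_isEmpty]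
  · have : Nonempty (Fin k) := ⟨⟨0, hk⟩⟩
    apply le_antisymm
    · obtain ⟨j, _, hj⟩ := Finset.exists_mem_eq_sup Finset.univ
        Finset.univ_nonempty (fun i => ‖lam i‖₊)
      rw [hj]
      have h1 : ((‖lam j‖₊ : NNReal) : ℝ) = |lam j| := by
        simp [Real.norm_eq_abs]
      rw [h1]
      exact le_ciSup (f := fun i => |lam i|) (Set.finite_range _).bddAbove j
    · refine ciSup_le fun i => ?_
      have h2 : ‖lam i‖₊ ≤ Finset.univ.sup fun i => ‖lam i‖₊ :=
        Finset.le_sup (f := fun i => ‖lam i‖₊) (Finset.mem_univ i)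
      calc |lam i| = ((‖lam i‖₊ : NNReal) : ℝ) := by simp [Real.norm_eq_abs]
        _ ≤ _ := NNReal.coe_le_coe.2 h2
end aux

/-- Pairwise distinct ℓ∞-directions `v₁, …, v_k` with corresponding
subspaces `U₁, …, U_k` combine to give a direct-sum decomposition
`V = span{v₁} ⊕ ⋯ ⊕ span{v_k} ⊕ (U₁ ∩ ⋯ ∩ U_k)` (every vector has a unique
representation), and the norm is the maximum:
`‖∑ λᵢ • vᵢ + u‖ = max (maxᵢ |λᵢ|) ‖u‖` for all `λ` and `u ∈ ⋂ Uᵢ`. -/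
theorem linftyDirections_combine
    {V : Type*} [NormedAddCommGroup V] [NormedSpace ℝ V] [FiniteDimensional ℝ V]
    (k : ℕ) (v : Fin k → V) (U : Fin k → Submodule ℝ V)
    (hdir : ∀ i, IsLinftyDirection (v i) (U i))
    (hdist : ∀ i j, i ≠ j → v i ≠ v j ∧ v i ≠ -v j) :
    (∀ x : V, ∃! p : (Fin k → ℝ) × ↥(⨅ i, U i),
        x = (∑ i, p.1 i • v i) + (p.2 : V)) ∧
    (∀ (lam : Fin k → ℝ), ∀ u ∈ ⨅ i, U i,
        ‖(∑ i, lam i • v i) + u‖ = max (⨆ i, |lam i|) ‖u‖) := by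
  have hmem : ∀ i j, i ≠ j → v j ∈ U i := by
    intro i j hij
    refine llA (hdir i) (hdir j) ?_ ?_
    · exact (hdist j i (Ne.symm hij)).1
    · intro h
      exact (hdist i j hij).2 (by rw [h, neg_neg])
  constructor
  · intro x
    obtain ⟨lam, u, hu, hx⟩ := exC v U hdir hmem Finset.univ x
    have hu' : u ∈ ⨅ i, U i := Submodule.mem_iInf _ |>.2 fun i => hu i (Finset.mem_univ i)
    refine ⟨(lam, ⟨u, hu'⟩), hx, ?_⟩
    rintro ⟨lam', u'⟩ hx'
    have hdiff : (∑ i, (lam' i - lam i) • v i) + ((u' : V) - u) = 0 := by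
      have : (∑ i, lam' i • v i) + (u' : V) = (∑ i, lam i • v i) + u := by
        rw [← hx', ← hx]
      rw [Finset.sum_congr rfl (fun i _ => sub_smul (lam' i) (lam i) (v i)),
        Finset.sum_sub_distrib]
      rw [show (∑ i, lam' i • v i) - (∑ i, lam i • v i) + ((u' : V) - u)
        = ((∑ i, lam' i • v i) + (u' : V)) - ((∑ i, lam i • v i) + u) by abel, this,
        sub_self]
    have hN := normC v U hdir hmem Finset.univ (fun i => lam' i - lam i) ((u' : V) - u)
      (fun i _ => Submodule.sub_mem _ ((Submodule.mem_iInf _).1 u'.2 i)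
        ((Submodule.mem_iInf _).1 hu' i))
    rw [hdiff, nnnorm_zero] at hN
    have hlam : ∀ i, lam' i = lam i := by
      intro i
      have h1 : ‖lam' i - lam i‖₊ ≤ 0 := by
        rw [hN]
        exact le_sup_of_le_left
          (Finset.le_sup (f := fun j => ‖lam' j - lam j‖₊) (Finset.mem_univ i))
      have h2 : lam' i - lam i = 0 := by
        have := nnnorm_eq_zero.1 (le_antisymm h1 zero_le)
        exact this
      linarith [h2]
    have huu : (u' : V) = u := by
      have h1 : ‖(u' : V) - u‖₊ ≤ 0 := by rw [hN]; exact le_sup_right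
      have h2 := nnnorm_eq_zero.1 (le_antisymm h1 zero_le)
      exact sub_eq_zero.1 h2
    exact Prod.ext_iff.2 ⟨funext hlam, Subtype.ext huu⟩
  · intro lam u hu
    have hN := normC v U hdir hmem Finset.univ lam u
      (fun i _ => (Submodule.mem_iInf _).1 hu i)
    have hreal : ‖(∑ i, lam i • v i) + u‖
        = ((Finset.univ.sup fun i => ‖lam i‖₊ : NNReal) : ℝ) ⊔ ‖u‖ := by
      have := congrArg (fun x : NNReal => (x : ℝ)) hN
      push_cast at this
      simpa using this
    rw [hreal, supcoe]
end

section
/- Let V be a finite-dimensional real normed space with ℓ∞-decomposition V = U ⊕ W; i.e., U and W are subspaces with V = U ⊕ W (algebraic direct sum), ‖u + w‖ = max(‖u‖, ‖w‖) for all u ∈ U and w ∈ W, W is the linear span of all ℓ∞-directions of V, and U is the intersection of the subspaces corresponding to the ℓ∞-directions. Then every linear isometry Q : V → V satisfies Q(U) ⊆ U and Q(W) ⊆ W; hence Q factorises over the decomposition as Q_U ⊕ Q_W with each factor a linear isometry. -/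
lemma isCompl_map {V : Type*} [NormedAddCommGroup V] [NormedSpace ℝ V]
    (e : V ≃ₗ[ℝ] V) {p q : Submodule ℝ V} (h : IsCompl p q) :
    IsCompl (p.map (e : V →ₗ[ℝ] V)) (q.map (e : V →ₗ[ℝ] V)) := by
  exact (Submodule.orderIsoMapComap e).isCompl h

lemma direction_map {V : Type*} [NormedAddCommGroup V] [NormedSpace ℝ V]
    (e : V ≃ₗᵢ[ℝ] V) {v : V} {U' : Submodule ℝ V} (h : IsLinftyDirection v U') :
    IsLinftyDirection (e v) (U'.map (e.toLinearEquiv : V →ₗ[ℝ] V)) := by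
  obtain ⟨h1, h2, h3⟩ := h
  refine ⟨by simpa using h1, ?_, ?_⟩
  · have := isCompl_map e.toLinearEquiv h2
    rwa [Submodule.map_span, Set.image_singleton] at this
  · rintro α u ⟨u', hu', rfl⟩
    have : α • e v + (e.toLinearEquiv : V →ₗ[ℝ] V) u' = e (α • v + u') := by simp
    rw [this, e.norm_map, h3 α u' hu']
    simp

/-- Let `V = U ⊕ W` be the ℓ∞-decomposition of a
finite-dimensional real normed space.  Then every linear isometry `Q : V → V` maps
`U` into `U` and `W` into `W`; hence it factorises over the decomposition as
`Q = Q_U ⊕ Q_W` with each factor a linear isometry. -/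
theorem linearIsometry_factorises
    {V : Type*} [NormedAddCommGroup V] [NormedSpace ℝ V] [FiniteDimensional ℝ V]
    (U W : Submodule ℝ V)
    (hcompl : IsCompl U W)
    (hmax : ∀ u ∈ U, ∀ w ∈ W, ‖u + w‖ = max ‖u‖ ‖w‖)
    (hW : W = Submodule.span ℝ {x : V | ∃ U' : Submodule ℝ V, IsLinftyDirection x U'})
    (hU : U = sInf {U' : Submodule ℝ V | ∃ x : V, IsLinftyDirection x U'})
    (Q : V →ₗᵢ[ℝ] V) :
    (∀ u ∈ U, Q u ∈ U) ∧ (∀ w ∈ W, Q w ∈ W) ∧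
    ∃ (QU : U →ₗᵢ[ℝ] U) (QW : W →ₗᵢ[ℝ] W),
      ∀ (u : U) (w : W), Q ((u : V) + (w : V)) = (QU u : V) + (QW w : V) := by
  set e : V ≃ₗᵢ[ℝ] V := Q.toLinearIsometryEquiv rfl with he
  have heQ : ∀ x : V, Q x = e x := fun x => (Q.toLinearIsometryEquiv_apply rfl x).symm
  have hQW : ∀ w ∈ W, Q w ∈ W := by
    have hle : W.map (e.toLinearEquiv : V →ₗ[ℝ] V) ≤ W := by
      conv_lhs => rw [hW]
      rw [Submodule.map_span, Submodule.span_le]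
      rintro _ ⟨x, ⟨U', hx⟩, rfl⟩
      rw [hW]
      exact Submodule.subset_span ⟨U'.map (e.toLinearEquiv : V →ₗ[ℝ] V), direction_map e hx⟩
    intro w hw
    rw [heQ]
    exact hle ⟨w, hw, rfl⟩
  have hQU : ∀ u ∈ U, Q u ∈ U := by
    intro u hu
    rw [hU, Submodule.mem_sInf]
    rintro U' ⟨x, hx⟩
    have hx' := direction_map e.symm hx
    have : u ∈ U'.map (e.symm.toLinearEquiv : V →ₗ[ℝ] V) := by
      rw [hU] at hu
      exact Submodule.mem_sInf.1 hu _ ⟨e.symm x, hx'⟩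
    obtain ⟨u', hu', hu''⟩ := this
    rw [heQ]
    have : e u = u' := by
      rw [← hu'']; simp
    rwa [this]
  refine ⟨hQU, hQW, ?_⟩
  classical
  let fU : U →ₗ[ℝ] U := Q.toLinearMap.restrict (p := U) (q := U) (fun x hx => hQU x hx)
  let fW : W →ₗ[ℝ] W := Q.toLinearMap.restrict (p := W) (q := W) (fun x hx => hQW x hx)
  have hfU : ∀ x : U, (fU x : V) = Q x := fun x =>
    LinearMap.restrict_coe_apply _ _ x
  have hfW : ∀ x : W, (fW x : V) = Q x := fun x =>
    LinearMap.restrict_coe_apply _ _ x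
  refine ⟨⟨fU, fun x => ?_⟩, ⟨fW, fun x => ?_⟩, fun u w => ?_⟩
  · rw [show ‖fU x‖ = ‖(fU x : V)‖ from rfl, hfU]
    exact Q.norm_map x
  · rw [show ‖fW x‖ = ‖(fW x : V)‖ from rfl, hfW]
    exact Q.norm_map x
  · show Q _ = (fU u : V) + (fW w : V)
    rw [hfU, hfW, map_add]
end

section
/- Let d ≥ 1 and let f be a bijective isometry of ℓ∞^d (the space ℝ^d with norm ‖(x_1, …, x_d)‖ = max_i |x_i|, with standard basis e_1, …, e_d). Then there exist a permutation σ of {1, …, d}, signs ε = (ε_1, …, ε_d) ∈ {−1, +1}^d, and a vector c ∈ ℝ^d such that f(∑_{i=1}^d λ_i e_i) = c + ∑_{i=1}^d λ_i ε_i e_{σ(i)} for all λ_1, …, λ_d ∈ ℝ; i.e., f is a signed permutation of the coordinates composed with a translation. -/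
/-- Auxiliary: a linear isometry equivalence of `ℓ∞^d` sends each basis vector to a
signed basis vector, via a permutation. -/
theorem linfty_linear_isometry_aux (d : ℕ) (hd : 1 ≤ d)
    (A : (Fin d → ℝ) ≃ₗᵢ[ℝ] (Fin d → ℝ)) :
    ∃ (σ : Equiv.Perm (Fin d)) (ε : Fin d → ℝ),
      (∀ i, ε i = 1 ∨ ε i = -1) ∧
      ∀ i, A (Pi.single i (1:ℝ)) = ε i • (Pi.single (σ i) (1:ℝ) : Fin d → ℝ) := by
  haveI : NeZero d := ⟨by omega⟩
  set a : Fin d → Fin d → ℝ := fun k i => A (Pi.single i (1:ℝ)) k with ha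
  -- row ℓ¹ bound
  have hrow : ∀ k, ∑ i, |a k i| ≤ 1 := by
    intro k
    set s : Fin d → ℝ := fun i => if 0 ≤ a k i then 1 else -1 with hs
    have hxnorm : ‖s‖ ≤ 1 := by
      rw [pi_norm_le_iff_of_nonneg (by norm_num)]
      intro i
      simp only [hs, Real.norm_eq_abs]
      split <;> norm_num
    have hrepr : (s : Fin d → ℝ) = ∑ i, s i • (Pi.single i (1:ℝ) : Fin d → ℝ) := by
      ext k'
      simp [Finset.sum_apply, Pi.single_apply, Finset.sum_ite_eq', mul_comm]
    have hAx : A s k = ∑ i, s i * a k i := by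
      conv_lhs => rw [hrepr]
      rw [map_sum]
      simp only [map_smul]
      rw [Finset.sum_apply]
      simp [ha, smul_eq_mul]
    have habs : ∀ i, s i * a k i = |a k i| := by
      intro i
      simp only [hs]
      split_ifs with h
      · rw [one_mul, abs_of_nonneg h]
      · rw [neg_one_mul, abs_of_neg (lt_of_not_ge h)]
    calc ∑ i, |a k i| = A s k := by rw [hAx]; exact Finset.sum_congr rfl fun i _ => (habs i).symm
      _ ≤ |A s k| := le_abs_self _
      _ ≤ ‖A s‖ := by
          have := norm_le_pi_norm (A s) k
          simpa [Real.norm_eq_abs] using this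
      _ = ‖s‖ := A.norm_map s
      _ ≤ 1 := hxnorm
  -- norm attained: for each i there is k with |a k i| = 1
  have hattain : ∀ i : Fin d, ∃ k, |a k i| = 1 := by
    intro i
    have hnorm : ‖A (Pi.single i (1:ℝ))‖ = 1 := by
      rw [A.norm_map, Pi.norm_single]; norm_num
    have hnn : ‖A (Pi.single i (1:ℝ))‖₊ = Finset.univ.sup fun k => ‖A (Pi.single i (1:ℝ)) k‖₊ :=
      Pi.nnnorm_def _
    obtain ⟨k, -, hk⟩ := Finset.exists_mem_eq_sup Finset.univ Finset.univ_nonempty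
      fun k => ‖A (Pi.single i (1:ℝ)) k‖₊
    refine ⟨k, ?_⟩
    have : ‖A (Pi.single i (1:ℝ))‖ = ‖A (Pi.single i (1:ℝ)) k‖ := by
      have := congrArg (fun x : NNReal => (x : ℝ)) (hnn.trans hk)
      simpa using this
    rw [hnorm] at this
    simpa [ha, Real.norm_eq_abs] using this.symm
  choose κ hκ using hattain
  -- the row κ i vanishes off column i
  have hzero : ∀ i j, j ≠ i → a (κ i) j = 0 := by
    intro i j hji
    have h1 : ∑ j', |a (κ i) j'| ≤ 1 := hrow (κ i)
    have h2 : ∑ j' ∈ Finset.univ.erase i, |a (κ i) j'| ≤ 0 := by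
      have heq : ∑ j', |a (κ i) j'| = |a (κ i) i| + ∑ j' ∈ Finset.univ.erase i, |a (κ i) j'| :=
        (Finset.add_sum_erase Finset.univ (fun j' => |a (κ i) j'|) (Finset.mem_univ i)).symm
      rw [heq, hκ i] at h1
      linarith
    have h3 : |a (κ i) j| = 0 := by
      have hnonneg : ∀ j' ∈ Finset.univ.erase i, 0 ≤ |a (κ i) j'| := fun _ _ => abs_nonneg _
      have := (Finset.sum_eq_zero_iff_of_nonneg hnonneg).mp
        (le_antisymm h2 (Finset.sum_nonneg hnonneg))
      exact this j (Finset.mem_erase.mpr ⟨hji, Finset.mem_univ j⟩)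
    exact abs_eq_zero.mp h3
  -- κ is injective, hence bijective
  have hinj : Function.Injective κ := by
    intro i j hij
    by_contra hne
    have h0 : a (κ i) j = 0 := hzero i j fun h => hne h.symm
    rw [hij] at h0
    have := hκ j
    rw [h0] at this
    norm_num at this
  let σ : Equiv.Perm (Fin d) := Equiv.ofBijective κ (Finite.injective_iff_bijective.mp hinj)
  refine ⟨σ, fun i => a (κ i) i, ?_, ?_⟩
  · intro i
    exact (abs_eq (by norm_num)).mp (hκ i)
  · intro i
    funext k
    have hσ : σ i = κ i := rfl
    by_cases hk : k = κ i
    · subst hk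
      simp [hσ, Pi.single_apply, ha]
    · obtain ⟨j, hj⟩ := (Finite.injective_iff_surjective.mp hinj) k
      have hji : j ≠ i := fun h => hk (by rw [← hj, h])
      have h0 : a (κ j) i = 0 := hzero j i fun h => hji h.symm
      rw [← hj] at hk ⊢
      have hk2 : κ j ≠ σ i := by rw [hσ]; exact hk
      simp only [Pi.smul_apply, Pi.single_apply, if_neg (fun h => hk2 h)]
      simpa [ha] using h0

/-- Every bijective isometry of `ℓ∞^d` (for `d ≥ 1`, here
`Fin d → ℝ` with the sup norm) is a signed permutation of the coordinates composed
with a translation: there are a permutation `σ`, signs `ε i ∈ {−1, +1}` and a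
vector `c` such that `f x = c + ∑ i, (ε i * x i) • e_{σ i}` for all `x`. -/
theorem isometry_linfty_eq_signed_perm_translation
    (d : ℕ) (hd : 1 ≤ d)
    (f : (Fin d → ℝ) → (Fin d → ℝ))
    (hbij : Function.Bijective f)
    (hisom : ∀ x y : Fin d → ℝ, ‖f x - f y‖ = ‖x - y‖) :
    ∃ (σ : Equiv.Perm (Fin d)) (ε : Fin d → ℝ) (c : Fin d → ℝ),
      (∀ i, ε i = 1 ∨ ε i = -1) ∧
      ∀ x : Fin d → ℝ,
        f x = c + ∑ i, (ε i * x i) • (Pi.single (σ i) (1 : ℝ) : Fin d → ℝ) := by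
  -- build the isometry equivalence
  let e : (Fin d → ℝ) ≃ᵢ (Fin d → ℝ) :=
    ⟨Equiv.ofBijective f hbij, Isometry.of_dist_eq fun x y => by
      simp only [dist_eq_norm]; exact hisom x y⟩
  -- Mazur–Ulam: `x ↦ f x - f 0` is a linear isometry equivalence
  let A : (Fin d → ℝ) ≃ₗᵢ[ℝ] (Fin d → ℝ) := e.toRealLinearIsometryEquiv
  have hA : ∀ x, A x = f x - f 0 := fun x => e.toRealLinearIsometryEquiv_apply x
  obtain ⟨σ, ε, hε, hAe⟩ := linfty_linear_isometry_aux d hd A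
  refine ⟨σ, ε, f 0, hε, fun x => ?_⟩
  have hx : (x : Fin d → ℝ) = ∑ i, x i • (Pi.single i (1:ℝ) : Fin d → ℝ) := by
    ext k
    simp [Finset.sum_apply, Pi.single_apply, Finset.sum_ite_eq', mul_comm]
  have : A x = ∑ i, (ε i * x i) • (Pi.single (σ i) (1:ℝ) : Fin d → ℝ) := by
    conv_lhs => rw [hx]
    rw [map_sum]
    refine Finset.sum_congr rfl fun i _ => ?_
    rw [map_smul, hAe i, smul_smul, mul_comm (x i) (ε i)]
  rw [hA] at this
  have := sub_eq_iff_eq_add.mp this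
  rw [this, add_comm]
end

section
/- Let V be a finite-dimensional real normed space, let S be a countable dense subset of V, and let f be a step-isometry on S. Then there is a unique continuous function f̄ : V → V extending f; moreover f̄ is a step-isometry of V and preserves integer distances, i.e., for every k ∈ ℕ, ‖x − y‖ = k implies ‖f̄(x) − f̄(y)‖ = k. -/
open Filter Metric Set Function Topology

set_option linter.unusedSectionVars false
set_option maxHeartbeats 1000000

section StepAux

variable {V : Type*} [NormedAddCommGroup V] [NormedSpace ℝ V] [FiniteDimensional ℝ V]

lemma smul_comb (a e : V) (c₁ c₂ : ℝ) :
    (a - c₁ • e) - (a - c₂ • e) = (c₂ - c₁) • e := by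
  rw [sub_smul]; abel

lemma step_lt_iff {S : Set V} {f : V → V}
    (hstep : ∀ x ∈ S, ∀ y ∈ S, ⌊‖x - y‖⌋ = ⌊‖f x - f y‖⌋)
    {s t : V} (hs : s ∈ S) (ht : t ∈ S) (m : ℤ) :
    ‖f s - f t‖ < m ↔ ‖s - t‖ < m := by
  rw [← Int.floor_lt, ← Int.floor_lt, hstep s hs t ht]

lemma step_le_iff {S : Set V} {f : V → V}
    (hstep : ∀ x ∈ S, ∀ y ∈ S, ⌊‖x - y‖⌋ = ⌊‖f x - f y‖⌋)
    {s t : V} (hs : s ∈ S) (ht : t ∈ S) (m : ℤ) :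
    (m : ℝ) ≤ ‖f s - f t‖ ↔ (m : ℝ) ≤ ‖s - t‖ := by
  rw [← Int.le_floor, ← Int.le_floor, hstep s hs t ht]

lemma step_dist_lt {S : Set V} {f : V → V}
    (hstep : ∀ x ∈ S, ∀ y ∈ S, ⌊‖x - y‖⌋ = ⌊‖f x - f y‖⌋)
    {s t : V} (hs : s ∈ S) (ht : t ∈ S) :
    dist (f s) (f t) < dist s t + 1 := by
  have h1 : ‖f s - f t‖ < ⌊‖f s - f t‖⌋ + 1 := Int.lt_floor_add_one _
  have h2 : ((⌊‖s - t‖⌋ : ℝ)) ≤ ‖s - t‖ := Int.floor_le _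
  rw [← hstep s hs t ht] at h1
  rw [dist_eq_norm, dist_eq_norm]
  linarith

lemma dense_pick {S : Set V} (hSdense : Dense S) (p : V) {r : ℝ} (hr : 0 < r) :
    ∃ q ∈ S, ‖q - p‖ < r := by
  obtain ⟨q, hq, hd⟩ := Metric.mem_closure_iff.mp (hSdense p) r hr
  exact ⟨q, hq, by rwa [dist_comm, dist_eq_norm] at hd⟩

/-- The key two-limit lemma: along a dense set, `f` cannot have two distinct limit
values at one point. -/
lemma two_limit {S : Set V} (hSdense : Dense S) {f : V → V}
    (hbij : Set.BijOn f S S)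
    (hstep : ∀ x ∈ S, ∀ y ∈ S, ⌊‖x - y‖⌋ = ⌊‖f x - f y‖⌋)
    {x a b : V} {u v : ℕ → V}
    (hu : ∀ n, u n ∈ S) (hv : ∀ n, v n ∈ S)
    (hux : Tendsto u atTop (𝓝 x)) (hvx : Tendsto v atTop (𝓝 x))
    (hfa : Tendsto (fun n => f (u n)) atTop (𝓝 a))
    (hfb : Tendsto (fun n => f (v n)) atTop (𝓝 b)) : a = b := by
  by_contra hab
  have hε0 : 0 < ‖b - a‖ := by
    rw [norm_pos_iff, sub_ne_zero]; exact Ne.symm hab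
  set ε : ℝ := ‖b - a‖ with hεdef
  set s : ℝ := min ε 1 / 2 with hsdef
  have hs0 : 0 < s := by
    have : 0 < min ε 1 := lt_min hε0 one_pos
    positivity
  have hsε : s ≤ ε / 2 := by
    have : min ε 1 ≤ ε := min_le_left _ _
    rw [hsdef]; linarith
  have hs1 : s ≤ 1 / 2 := by
    have : min ε 1 ≤ 1 := min_le_right _ _
    rw [hsdef]; linarith
  set e : V := ε⁻¹ • (b - a) with hedef
  have hee : ‖e‖ = 1 := by
    rw [hedef, norm_smul, norm_inv, Real.norm_eq_abs, abs_of_pos hε0, ← hεdef]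
    field_simp
  have hba : b - a = ε • e := by
    rw [hedef, smul_smul, mul_inv_cancel₀ (ne_of_gt hε0), one_smul]
  set p₁ : V := a - (1 - s/2) • e with hp₁def
  set p₂ : V := a - (2 - s) • e with hp₂def
  obtain ⟨q₁, hq₁S, hq₁⟩ := dense_pick hSdense p₁ (show (0:ℝ) < s/8 by positivity)
  obtain ⟨q₂, hq₂S, hq₂⟩ := dense_pick hSdense p₂ (show (0:ℝ) < s/8 by positivity)
  -- geometric estimates
  have hp₁a : ‖p₁ - a‖ = 1 - s/2 := by
    rw [hp₁def]
    have : a - (1 - s/2) • e - a = -((1 - s/2) • e) := by abel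
    rw [this, norm_neg, norm_smul, Real.norm_eq_abs, hee, mul_one,
      abs_of_pos (by linarith : (0:ℝ) < 1 - s/2)]
  have hp₂b : ‖p₂ - b‖ = ε + (2 - s) := by
    have h : p₂ - b = -((ε + (2 - s)) • e) := by
      rw [hp₂def]
      have : a - (2 - s) • e - b = -((b - a) + (2 - s) • e) := by abel
      rw [this, hba, ← add_smul]
    rw [h, norm_neg, norm_smul, Real.norm_eq_abs, hee, mul_one,
      abs_of_pos (by linarith : (0:ℝ) < ε + (2 - s))]
  have hp₁p₂ : ‖p₁ - p₂‖ = 1 - s/2 := by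
    have h : p₁ - p₂ = ((2 - s) - (1 - s/2)) • e := by
      rw [hp₁def, hp₂def]
      exact smul_comb a e (1 - s/2) (2 - s)
    have hco : (2 - s) - (1 - s/2) = 1 - s/2 := by ring
    rw [h, hco, norm_smul, Real.norm_eq_abs, hee, mul_one,
      abs_of_pos (by linarith : (0:ℝ) < 1 - s/2)]
  have h1 : ‖q₁ - a‖ < 1 := by
    have heq : q₁ - a = (q₁ - p₁) + (p₁ - a) := by abel
    have hsplit : ‖q₁ - a‖ ≤ ‖q₁ - p₁‖ + ‖p₁ - a‖ := by
      rw [heq]; exact norm_add_le _ _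
    rw [hp₁a] at hsplit
    linarith
  have h2 : (2:ℝ) < ‖q₂ - b‖ := by
    have htri : ‖p₂ - b‖ ≤ ‖p₂ - q₂‖ + ‖q₂ - b‖ := by
      have : p₂ - b = (p₂ - q₂) + (q₂ - b) := by abel
      rw [this]; exact norm_add_le _ _
    have hq₂' : ‖p₂ - q₂‖ < s/8 := by rwa [norm_sub_rev] at hq₂
    rw [hp₂b] at htri
    linarith
  have h3 : ‖q₁ - q₂‖ < 1 := by
    have : q₁ - q₂ = (q₁ - p₁) + (p₁ - p₂) + (p₂ - q₂) := by abel
    have hq₂' : ‖p₂ - q₂‖ < s/8 := by rwa [norm_sub_rev] at hq₂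
    have hsplit : ‖q₁ - q₂‖ ≤ ‖q₁ - p₁‖ + ‖p₁ - p₂‖ + ‖p₂ - q₂‖ := by
      rw [this]; exact norm_add₃_le
    rw [hp₁p₂] at hsplit
    linarith
  -- preimages
  have hpre₁ : ∃ c ∈ S, f c = q₁ := by
    have := hbij.surjOn hq₁S; rwa [Set.mem_image] at this
  have hpre₂ : ∃ c ∈ S, f c = q₂ := by
    have := hbij.surjOn hq₂S; rwa [Set.mem_image] at this
  set w₁ : V := Function.invFunOn f S q₁ with hw₁def
  set w₂ : V := Function.invFunOn f S q₂ with hw₂def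
  have hw₁S : w₁ ∈ S := Function.invFunOn_mem hpre₁
  have hw₂S : w₂ ∈ S := Function.invFunOn_mem hpre₂
  have hfw₁ : f w₁ = q₁ := Function.invFunOn_eq hpre₁
  have hfw₂ : f w₂ = q₂ := Function.invFunOn_eq hpre₂
  -- eventual bounds
  have E1 : ∀ᶠ n in atTop, ‖q₁ - f (u n)‖ < 1 :=
    ((tendsto_const_nhds.sub hfa).norm).eventually_lt_const h1
  have E2 : ∀ᶠ n in atTop, (2:ℝ) < ‖q₂ - f (v n)‖ :=
    ((tendsto_const_nhds.sub hfb).norm).eventually_const_lt h2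
  have F1 : ∀ᶠ n in atTop, ‖w₁ - u n‖ < 1 := by
    refine E1.mono fun n hn => ?_
    have := (step_lt_iff hstep hw₁S (hu n) 1).mp (by rw [hfw₁]; exact_mod_cast hn)
    exact_mod_cast this
  have F2 : ∀ᶠ n in atTop, (2:ℝ) ≤ ‖w₂ - v n‖ := by
    refine E2.mono fun n hn => ?_
    have := (step_le_iff hstep hw₂S (hv n) 2).mp (by rw [hfw₂]; exact_mod_cast hn.le)
    exact_mod_cast this
  have G1 : ‖w₁ - x‖ ≤ 1 :=
    le_of_tendsto ((tendsto_const_nhds.sub hux).norm) (F1.mono fun n hn => hn.le)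
  have G2 : (2:ℝ) ≤ ‖w₂ - x‖ :=
    ge_of_tendsto ((tendsto_const_nhds.sub hvx).norm) F2
  have H3 : ‖w₁ - w₂‖ < 1 := by
    have := (step_lt_iff hstep hw₁S hw₂S 1).mp (by rw [hfw₁, hfw₂]; exact_mod_cast h3)
    exact_mod_cast this
  have T : ‖w₂ - x‖ ≤ ‖w₂ - w₁‖ + ‖w₁ - x‖ := by
    have := dist_triangle w₂ w₁ x
    simpa [dist_eq_norm] using this
  rw [norm_sub_rev w₂ w₁] at T
  linarith


/-- Local uniform Cauchy property of a step-isometry on a dense set. -/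
lemma cauchy_prop {S : Set V} (hSdense : Dense S) {f : V → V}
    (hbij : Set.BijOn f S S)
    (hstep : ∀ x ∈ S, ∀ y ∈ S, ⌊‖x - y‖⌋ = ⌊‖f x - f y‖⌋)
    (x : V) {ε : ℝ} (hε : 0 < ε) :
    ∃ δ > 0, ∀ s ∈ S, ∀ t ∈ S, dist s x < δ → dist t x < δ → dist (f s) (f t) ≤ ε := by
  by_contra hcon
  push_neg at hcon
  have H : ∀ n : ℕ, ∃ s ∈ S, ∃ t ∈ S, dist s x < 1/(n+1) ∧ dist t x < 1/(n+1) ∧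
      ε < dist (f s) (f t) := by
    intro n
    obtain ⟨s, hsS, t, htS, h1, h2, h3⟩ := hcon (1/(n+1)) (by positivity)
    exact ⟨s, hsS, t, htS, h1, h2, h3⟩
  choose sf hsS tf htS hsx htx hd using H
  have hdle : ∀ n : ℕ, (1:ℝ)/(n+1) ≤ 1 := by
    intro n
    rw [div_le_one (by positivity)]
    have : (0:ℝ) ≤ (n:ℝ) := Nat.cast_nonneg n
    linarith
  -- boundedness of the image sequences
  have hbound : ∀ p ∈ S, dist p x < 1 → f p ∈ Metric.closedBall (f (sf 0)) 3 := by
    intro p hp hpx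
    have h1 : dist (f p) (f (sf 0)) < dist p (sf 0) + 1 := step_dist_lt hstep hp (hsS 0)
    have h2 : dist p (sf 0) ≤ dist p x + dist (sf 0) x := dist_triangle_right _ _ _
    have h3 : dist (sf 0) x < 1 := lt_of_lt_of_le (hsx 0) (hdle 0)
    rw [Metric.mem_closedBall]
    linarith
  have hmem_s : ∀ n, f (sf n) ∈ Metric.closedBall (f (sf 0)) 3 := fun n =>
    hbound (sf n) (hsS n) (lt_of_lt_of_le (hsx n) (hdle n))
  have hmem_t : ∀ n, f (tf n) ∈ Metric.closedBall (f (sf 0)) 3 := fun n =>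
    hbound (tf n) (htS n) (lt_of_lt_of_le (htx n) (hdle n))
  have hK : IsCompact (Metric.closedBall (f (sf 0)) 3) := isCompact_closedBall _ _
  obtain ⟨a, -, φ, hφ, hfa⟩ := hK.tendsto_subseq hmem_s
  obtain ⟨b, -, ψ, hψ, hfb⟩ := hK.tendsto_subseq (fun n => hmem_t (φ n))
  set θ : ℕ → ℕ := φ ∘ ψ with hθdef
  have hθ : StrictMono θ := hφ.comp hψ
  have hθn : ∀ n, n ≤ θ n := fun n => hθ.le_apply
  set u : ℕ → V := fun n => sf (θ n) with hudef
  set v : ℕ → V := fun n => tf (θ n) with hvdef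
  have hfa' : Tendsto (fun n => f (u n)) atTop (𝓝 a) := by
    have := hfa.comp hψ.tendsto_atTop
    exact this
  have hfb' : Tendsto (fun n => f (v n)) atTop (𝓝 b) := hfb
  have hdist_aux : ∀ (w : ℕ → V), (∀ n, dist (w (θ n)) x < 1/((θ n)+1)) →
      Tendsto (fun n => w (θ n)) atTop (𝓝 x) := by
    intro w hw
    rw [tendsto_iff_dist_tendsto_zero]
    refine squeeze_zero (fun n => dist_nonneg) (fun n => ?_) tendsto_one_div_add_atTop_nhds_zero_nat
    have h1 : dist (w (θ n)) x < 1/((θ n)+1) := hw n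
    have h2 : (1:ℝ)/((θ n)+1) ≤ 1/(n+1) := by
      apply div_le_div_of_nonneg_left one_pos.le (by positivity)
      have := hθn n
      have : (n:ℝ) ≤ (θ n : ℝ) := by exact_mod_cast this
      linarith
    linarith
  have hux : Tendsto u atTop (𝓝 x) := hdist_aux sf (fun n => hsx (θ n))
  have hvx : Tendsto v atTop (𝓝 x) := hdist_aux tf (fun n => htx (θ n))
  have hab : a = b := two_limit hSdense hbij hstep (fun n => hsS (θ n)) (fun n => htS (θ n))
    hux hvx hfa' hfb'
  have hdd : Tendsto (fun n => dist (f (u n)) (f (v n))) atTop (𝓝 (dist a b)) :=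
    hfa'.dist hfb'
  have hge : ε ≤ dist a b := ge_of_tendsto' hdd (fun n => (hd (θ n)).le)
  rw [hab, dist_self] at hge
  linarith

/-- Existence of a continuous extension of a step-isometry of a dense subset. -/
lemma exists_extension {S : Set V} (hSdense : Dense S) {f : V → V}
    (hbij : Set.BijOn f S S)
    (hstep : ∀ x ∈ S, ∀ y ∈ S, ⌊‖x - y‖⌋ = ⌊‖f x - f y‖⌋) :
    ∃ g : V → V, Continuous g ∧ ∀ s ∈ S, g s = f s := by
  have hne : ∀ x : V, (𝓝[S] x).NeBot := fun x =>
    mem_closure_iff_nhdsWithin_neBot.mp (hSdense x)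
  have hconv : ∀ x : V, ∃ c, Tendsto f (𝓝[S] x) (𝓝 c) := by
    intro x
    have hcauchy : Cauchy (Filter.map f (𝓝[S] x)) := by
      rw [Metric.cauchy_iff]
      refine ⟨(hne x).map f, fun ε hε => ?_⟩
      obtain ⟨δ, hδ0, hδ⟩ := cauchy_prop hSdense hbij hstep x (show 0 < ε/2 by positivity)
      refine ⟨f '' (S ∩ Metric.ball x δ), ?_, ?_⟩
      · rw [Filter.mem_map]
        exact Filter.mem_of_superset
          (inter_mem_nhdsWithin S (Metric.ball_mem_nhds x hδ0))
          (Set.subset_preimage_image f _)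
      · rintro p ⟨sp, ⟨hspS, hspB⟩, rfl⟩ r ⟨sr, ⟨hsrS, hsrB⟩, rfl⟩
        have := hδ sp hspS sr hsrS (Metric.mem_ball.mp hspB) (Metric.mem_ball.mp hsrB)
        linarith
    obtain ⟨c, hc⟩ := CompleteSpace.complete hcauchy
    exact ⟨c, hc⟩
  choose g hg using hconv
  have heq : ∀ s ∈ S, g s = f s := by
    intro s hs
    have htend : Tendsto f (𝓝[S] s) (𝓝 (f s)) := by
      rw [Metric.tendsto_nhds]
      intro ε hε
      obtain ⟨δ, hδ0, hδ⟩ := cauchy_prop hSdense hbij hstep s (show 0 < ε/2 by positivity)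
      have hmem : ∀ᶠ t in 𝓝[S] s, t ∈ S ∩ Metric.ball s δ := by
        exact inter_mem_nhdsWithin S (Metric.ball_mem_nhds s hδ0)
      refine hmem.mono fun t ⟨htS, htB⟩ => ?_
      have := hδ t htS s hs (Metric.mem_ball.mp htB) (by simpa using hδ0)
      linarith
    haveI := hne s
    exact tendsto_nhds_unique (hg s) htend
  refine ⟨g, ?_, heq⟩
  rw [continuous_iff_continuousAt]
  intro x
  rw [Metric.continuousAt_iff]
  intro ε hε
  obtain ⟨δ, hδ0, hδ⟩ := cauchy_prop hSdense hbij hstep x (show 0 < ε/6 by positivity)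
  refine ⟨δ/2, by positivity, fun y hy => ?_⟩
  -- pick s ∈ S near x with f s near g x
  haveI := hne x
  haveI := hne y
  have hsx : ∃ p, p ∈ S ∧ dist p x < δ/2 ∧ dist (f p) (g x) < ε/6 := by
    have h1 : ∀ᶠ t in 𝓝[S] x, dist (f t) (g x) < ε/6 :=
      Metric.tendsto_nhds.mp (hg x) (ε/6) (by positivity)
    have h2 : ∀ᶠ t in 𝓝[S] x, t ∈ S ∩ Metric.ball x (δ/2) :=
      inter_mem_nhdsWithin S (Metric.ball_mem_nhds x (by positivity))
    obtain ⟨p, ⟨hp1, hp2⟩, hp3⟩ := (h2.and h1).exists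
    exact ⟨p, hp1, Metric.mem_ball.mp hp2, hp3⟩
  have hty : ∃ p, p ∈ S ∧ dist p y < δ/2 ∧ dist (f p) (g y) < ε/6 := by
    have h1 : ∀ᶠ t in 𝓝[S] y, dist (f t) (g y) < ε/6 :=
      Metric.tendsto_nhds.mp (hg y) (ε/6) (by positivity)
    have h2 : ∀ᶠ t in 𝓝[S] y, t ∈ S ∩ Metric.ball y (δ/2) :=
      inter_mem_nhdsWithin S (Metric.ball_mem_nhds y (by positivity))
    obtain ⟨p, ⟨hp1, hp2⟩, hp3⟩ := (h2.and h1).exists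
    exact ⟨p, hp1, Metric.mem_ball.mp hp2, hp3⟩
  obtain ⟨p, hpS, hpx, hpgx⟩ := hsx
  obtain ⟨r, hrS, hry, hrgy⟩ := hty
  have hrx : dist r x < δ := by
    have := dist_triangle r y x
    linarith
  have hpx' : dist p x < δ := by linarith
  have hfpfr : dist (f p) (f r) ≤ ε/6 := hδ p hpS r hrS hpx' hrx
  have htri : dist (g y) (g x) ≤ dist (g y) (f r) + dist (f r) (f p) + dist (f p) (g x) :=
    dist_triangle4 _ _ _ _
  rw [dist_comm (g y) (f r)] at htri
  rw [dist_comm (f r) (f p)] at htri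
  linarith


lemma line_dist_out (x y : V) (hd : 0 < ‖x - y‖) (t : ℝ) (ht : 0 ≤ t) :
    ‖(y + t • (‖x - y‖⁻¹ • (y - x))) - (x - t • (‖x - y‖⁻¹ • (y - x)))‖ = ‖x - y‖ + 2*t := by
  set d : ℝ := ‖x - y‖ with hddef
  set u : V := d⁻¹ • (y - x) with hudef
  have hline : (y + t • u) - (x - t • u) = (1 + 2*t*d⁻¹) • (y - x) := by
    have h1 : (y + t • u) - (x - t • u) = (y - x) + (t • u + t • u) := by abel
    have h2 : t • u + t • u = (2*t) • u := by
      rw [← two_smul ℝ (t • u), smul_smul]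
    have h3 : (2*t) • u = (2*t*d⁻¹) • (y - x) := by rw [hudef, smul_smul]
    rw [h1, h2, h3, add_smul, one_smul]
  have hyx : ‖y - x‖ = d := by rw [hddef, norm_sub_rev]
  rw [hline, norm_smul, Real.norm_eq_abs, hyx,
    abs_of_pos (by positivity : (0:ℝ) < 1 + 2*t*d⁻¹)]
  field_simp

lemma line_dist_in (x y : V) (hd : 0 < ‖x - y‖) (t : ℝ) (ht : 0 ≤ t)
    (h2t : 2*t ≤ ‖x - y‖) :
    ‖(y - t • (‖x - y‖⁻¹ • (y - x))) - (x + t • (‖x - y‖⁻¹ • (y - x)))‖ = ‖x - y‖ - 2*t := by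
  set d : ℝ := ‖x - y‖ with hddef
  have hd' : d ≠ 0 := ne_of_gt hd
  set u : V := d⁻¹ • (y - x) with hudef
  have hline : (y - t • u) - (x + t • u) = (1 - 2*t*d⁻¹) • (y - x) := by
    have h1 : (y - t • u) - (x + t • u) = (y - x) - (t • u + t • u) := by abel
    have h2 : t • u + t • u = (2*t) • u := by
      rw [← two_smul ℝ (t • u), smul_smul]
    have h3 : (2*t) • u = (2*t*d⁻¹) • (y - x) := by rw [hudef, smul_smul]
    rw [h1, h2, h3, sub_smul, one_smul]
  have hyx : ‖y - x‖ = d := by rw [hddef, norm_sub_rev]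
  have hco : (0:ℝ) ≤ 1 - 2*t*d⁻¹ := by
    rw [sub_nonneg]
    have h4 : 2*t*d⁻¹ = 2*t/d := by rw [div_eq_mul_inv]
    rw [h4, div_le_one hd]
    exact h2t
  rw [hline, norm_smul, Real.norm_eq_abs, hyx, abs_of_nonneg hco]
  field_simp

/-- Integer lower bounds on distances are preserved by the extension. -/
lemma lemL {S : Set V} (hSdense : Dense S) {f : V → V}
    (hstep : ∀ x ∈ S, ∀ y ∈ S, ⌊‖x - y‖⌋ = ⌊‖f x - f y‖⌋)
    {g : V → V} (hgc : Continuous g) (hge : ∀ s ∈ S, g s = f s)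
    (x y : V) (k : ℕ) (hk : (k:ℝ) ≤ ‖x - y‖) : (k:ℝ) ≤ ‖g x - g y‖ := by
  rcases Nat.eq_zero_or_pos k with hk0 | hk1
  · subst hk0; simpa using norm_nonneg _
  have hkR : (0:ℝ) < k := by exact_mod_cast hk1
  have hd : 0 < ‖x - y‖ := lt_of_lt_of_le hkR hk
  set u : V := ‖x - y‖⁻¹ • (y - x) with hudef
  have hu1 : ‖u‖ = 1 := by
    rw [hudef, norm_smul, norm_inv, Real.norm_eq_abs, abs_of_pos hd, norm_sub_rev y x]
    field_simp
  have claim : ∀ η : ℝ, 0 < η → ∃ p ∈ S, ∃ r ∈ S,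
      ‖p - x‖ < η ∧ ‖r - y‖ < η ∧ (k:ℝ) ≤ ‖f p - f r‖ := by
    intro η hη
    set t : ℝ := η/2 with htdef
    have ht0 : 0 < t := by positivity
    set p₀ : V := x - t • u with hp₀def
    set r₀ : V := y + t • u with hr₀def
    obtain ⟨p, hpS, hp⟩ := dense_pick hSdense p₀ (show (0:ℝ) < t/2 by positivity)
    obtain ⟨r, hrS, hr⟩ := dense_pick hSdense r₀ (show (0:ℝ) < t/2 by positivity)
    have hp₀x : ‖p₀ - x‖ = t := by
      rw [hp₀def]
      have : x - t • u - x = -(t • u) := by abel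
      rw [this, norm_neg, norm_smul, Real.norm_eq_abs, hu1, mul_one, abs_of_pos ht0]
    have hr₀y : ‖r₀ - y‖ = t := by
      rw [hr₀def]
      have : y + t • u - y = t • u := by abel
      rw [this, norm_smul, Real.norm_eq_abs, hu1, mul_one, abs_of_pos ht0]
    have hpx : ‖p - x‖ < η := by
      have h : p - x = (p - p₀) + (p₀ - x) := by abel
      have := norm_add_le (p - p₀) (p₀ - x)
      rw [← h] at this
      rw [hp₀x] at this
      linarith
    have hry : ‖r - y‖ < η := by
      have h : r - y = (r - r₀) + (r₀ - y) := by abel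
      have := norm_add_le (r - r₀) (r₀ - y)
      rw [← h] at this
      rw [hr₀y] at this
      linarith
    have hout : ‖r₀ - p₀‖ = ‖x - y‖ + 2*t := by
      rw [hr₀def, hp₀def, hudef]
      exact line_dist_out x y hd t ht0.le
    have hlower : (k:ℝ) ≤ ‖p - r‖ := by
      have h : r₀ - p₀ = (r₀ - r) + (r - p) + (p - p₀) := by abel
      have htri := norm_add₃_le (E := V) (a := r₀ - r) (b := r - p) (c := p - p₀)
      rw [← h, hout] at htri
      have h1 : ‖r₀ - r‖ < t/2 := by rwa [norm_sub_rev] at hr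
      have h2 : ‖p - p₀‖ < t/2 := hp
      have h3 : ‖r - p‖ = ‖p - r‖ := norm_sub_rev _ _
      linarith
    refine ⟨p, hpS, r, hrS, hpx, hry, ?_⟩
    have := (step_le_iff hstep hpS hrS (k:ℤ)).mpr (by exact_mod_cast hlower)
    exact_mod_cast this
  have C := fun n : ℕ => claim (1/(n+1)) (by positivity)
  choose p hpS r hrS hpx hry hfk using C
  have htendp : Tendsto p atTop (𝓝 x) := by
    rw [tendsto_iff_dist_tendsto_zero]
    refine squeeze_zero (fun n => dist_nonneg) (fun n => ?_)
      tendsto_one_div_add_atTop_nhds_zero_nat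
    rw [dist_eq_norm]
    exact (hpx n).le
  have htendr : Tendsto r atTop (𝓝 y) := by
    rw [tendsto_iff_dist_tendsto_zero]
    refine squeeze_zero (fun n => dist_nonneg) (fun n => ?_)
      tendsto_one_div_add_atTop_nhds_zero_nat
    rw [dist_eq_norm]
    exact (hry n).le
  have hgp : Tendsto (fun n => g (p n)) atTop (𝓝 (g x)) := (hgc.tendsto x).comp htendp
  have hgr : Tendsto (fun n => g (r n)) atTop (𝓝 (g y)) := (hgc.tendsto y).comp htendr
  have htend : Tendsto (fun n => ‖g (p n) - g (r n)‖) atTop (𝓝 ‖g x - g y‖) :=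
    (hgp.sub hgr).norm
  refine ge_of_tendsto' htend fun n => ?_
  rw [hge _ (hpS n), hge _ (hrS n)]
  exact hfk n

/-- Integer upper bounds on distances are preserved by the extension. -/
lemma lemU {S : Set V} (hSdense : Dense S) {f : V → V}
    (hstep : ∀ x ∈ S, ∀ y ∈ S, ⌊‖x - y‖⌋ = ⌊‖f x - f y‖⌋)
    {g : V → V} (hgc : Continuous g) (hge : ∀ s ∈ S, g s = f s)
    (x y : V) (k : ℕ) (hk : ‖x - y‖ ≤ (k:ℝ)) : ‖g x - g y‖ ≤ (k:ℝ) := by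
  by_cases hxy : x = y
  · subst hxy; simpa using Nat.cast_nonneg (α := ℝ) k
  have hd : 0 < ‖x - y‖ := by
    rw [norm_pos_iff, sub_ne_zero]; exact hxy
  set u : V := ‖x - y‖⁻¹ • (y - x) with hudef
  have hu1 : ‖u‖ = 1 := by
    rw [hudef, norm_smul, norm_inv, Real.norm_eq_abs, abs_of_pos hd, norm_sub_rev y x]
    field_simp
  have claim : ∀ η : ℝ, 0 < η → ∃ p ∈ S, ∃ r ∈ S,
      ‖p - x‖ < η ∧ ‖r - y‖ < η ∧ ‖f p - f r‖ < (k:ℝ) := by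
    intro η hη
    set t : ℝ := min (η/2) (‖x - y‖/4) with htdef
    have ht0 : 0 < t := lt_min (by positivity) (by positivity)
    have htη : t ≤ η/2 := min_le_left _ _
    have htd : 2*t ≤ ‖x - y‖ := by
      have : t ≤ ‖x - y‖/4 := min_le_right _ _
      linarith
    set p₀ : V := x + t • u with hp₀def
    set r₀ : V := y - t • u with hr₀def
    obtain ⟨p, hpS, hp⟩ := dense_pick hSdense p₀ (show (0:ℝ) < t/2 by positivity)
    obtain ⟨r, hrS, hr⟩ := dense_pick hSdense r₀ (show (0:ℝ) < t/2 by positivity)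
    have hp₀x : ‖p₀ - x‖ = t := by
      rw [hp₀def]
      have : x + t • u - x = t • u := by abel
      rw [this, norm_smul, Real.norm_eq_abs, hu1, mul_one, abs_of_pos ht0]
    have hr₀y : ‖r₀ - y‖ = t := by
      rw [hr₀def]
      have : y - t • u - y = -(t • u) := by abel
      rw [this, norm_neg, norm_smul, Real.norm_eq_abs, hu1, mul_one, abs_of_pos ht0]
    have hpx : ‖p - x‖ < η := by
      have h : p - x = (p - p₀) + (p₀ - x) := by abel
      have := norm_add_le (p - p₀) (p₀ - x)
      rw [← h] at this
      rw [hp₀x] at this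
      linarith
    have hry : ‖r - y‖ < η := by
      have h : r - y = (r - r₀) + (r₀ - y) := by abel
      have := norm_add_le (r - r₀) (r₀ - y)
      rw [← h] at this
      rw [hr₀y] at this
      linarith
    have hin : ‖r₀ - p₀‖ = ‖x - y‖ - 2*t := by
      rw [hr₀def, hp₀def, hudef]
      exact line_dist_in x y hd t ht0.le htd
    have hupper : ‖p - r‖ < (k:ℝ) := by
      have h : p - r = (p - p₀) + (p₀ - r₀) + (r₀ - r) := by abel
      have htri := norm_add₃_le (E := V) (a := p - p₀) (b := p₀ - r₀) (c := r₀ - r)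
      rw [← h] at htri
      have h1 : ‖p₀ - r₀‖ = ‖x - y‖ - 2*t := by rwa [norm_sub_rev] at hin
      have h2 : ‖r₀ - r‖ < t/2 := by rwa [norm_sub_rev] at hr
      rw [h1] at htri
      linarith
    refine ⟨p, hpS, r, hrS, hpx, hry, ?_⟩
    have := (step_lt_iff hstep hpS hrS (k:ℤ)).mpr (by exact_mod_cast hupper)
    exact_mod_cast this
  have C := fun n : ℕ => claim (1/(n+1)) (by positivity)
  choose p hpS r hrS hpx hry hfk using C
  have htendp : Tendsto p atTop (𝓝 x) := by
    rw [tendsto_iff_dist_tendsto_zero]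
    refine squeeze_zero (fun n => dist_nonneg) (fun n => ?_)
      tendsto_one_div_add_atTop_nhds_zero_nat
    rw [dist_eq_norm]
    exact (hpx n).le
  have htendr : Tendsto r atTop (𝓝 y) := by
    rw [tendsto_iff_dist_tendsto_zero]
    refine squeeze_zero (fun n => dist_nonneg) (fun n => ?_)
      tendsto_one_div_add_atTop_nhds_zero_nat
    rw [dist_eq_norm]
    exact (hry n).le
  have hgp : Tendsto (fun n => g (p n)) atTop (𝓝 (g x)) := (hgc.tendsto x).comp htendp
  have hgr : Tendsto (fun n => g (r n)) atTop (𝓝 (g y)) := (hgc.tendsto y).comp htendr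
  have htend : Tendsto (fun n => ‖g (p n) - g (r n)‖) atTop (𝓝 ‖g x - g y‖) :=
    (hgp.sub hgr).norm
  refine le_of_tendsto htend (Eventually.of_forall fun n => ?_)
  rw [hge _ (hpS n), hge _ (hrS n)]
  exact (hfk n).le

end StepAux

/-- Let `S` be a countable dense subset of a finite-dimensional
real normed space `V` and let `f` be a step-isometry on `S` (a bijection of `S`
preserving the integer parts of distances between points of `S`).  Then there is a
unique continuous function `g : V → V` agreeing with `f` on `S`; moreover `g` is a
step-isometry of `V` and preserves integer distances. -/
theorem stepIsometry_extends
    {V : Type*} [NormedAddCommGroup V] [NormedSpace ℝ V] [FiniteDimensional ℝ V]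
    (S : Set V) (hScount : S.Countable) (hSdense : Dense S)
    (f : V → V) (hbij : Set.BijOn f S S)
    (hstep : ∀ x ∈ S, ∀ y ∈ S, ⌊‖x - y‖⌋ = ⌊‖f x - f y‖⌋) :
    ∃ g : V → V,
      Continuous g ∧ Set.EqOn g f S ∧
      IsStepIsometry g ∧
      (∀ (k : ℕ) (x y : V), ‖x - y‖ = k → ‖g x - g y‖ = k) ∧
      (∀ g' : V → V, Continuous g' → Set.EqOn g' f S → g' = g) := by
  obtain ⟨g, hgc, hge⟩ := exists_extension hSdense hbij hstep
  -- the inverse step-isometry on `S`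
  set f' : V → V := Function.invFunOn f S with hf'def
  have hpre : ∀ q ∈ S, ∃ c ∈ S, f c = q := by
    intro q hq
    have := hbij.surjOn hq
    rwa [Set.mem_image] at this
  have hf'mem : ∀ q ∈ S, f' q ∈ S := fun q hq => Function.invFunOn_mem (hpre q hq)
  have hff' : ∀ q ∈ S, f (f' q) = q := fun q hq => Function.invFunOn_eq (hpre q hq)
  have hf'f : ∀ p ∈ S, f' (f p) = p := by
    intro p hp
    have h1 : f p ∈ S := hbij.mapsTo hp
    exact hbij.injOn (hf'mem _ h1) hp (hff' _ h1)
  have hbij' : Set.BijOn f' S S := by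
    refine ⟨fun q hq => hf'mem q hq, ?_, ?_⟩
    · intro q1 h1 q2 h2 heq
      rw [← hff' q1 h1, ← hff' q2 h2, heq]
    · intro p hp
      exact ⟨f p, hbij.mapsTo hp, hf'f p hp⟩
  have hstep' : ∀ x ∈ S, ∀ y ∈ S, ⌊‖x - y‖⌋ = ⌊‖f' x - f' y‖⌋ := by
    intro q1 h1 q2 h2
    have := hstep (f' q1) (hf'mem _ h1) (f' q2) (hf'mem _ h2)
    rw [hff' _ h1, hff' _ h2] at this
    exact this.symm
  obtain ⟨g₂, hg₂c, hg₂e⟩ := exists_extension hSdense hbij' hstep'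
  -- approximating sequences from `S`
  have hseq : ∀ x : V, ∃ z : ℕ → V, (∀ n, z n ∈ S) ∧ Tendsto z atTop (𝓝 x) := by
    intro x
    have C := fun n : ℕ => dense_pick hSdense x (show (0:ℝ) < 1/(n+1) by positivity)
    choose z hzS hz using C
    refine ⟨z, hzS, ?_⟩
    rw [tendsto_iff_dist_tendsto_zero]
    exact squeeze_zero (fun n => dist_nonneg)
      (fun n => by rw [dist_eq_norm]; exact (hz n).le)
      tendsto_one_div_add_atTop_nhds_zero_nat
  have hleft : ∀ x : V, g₂ (g x) = x := by
    intro x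
    obtain ⟨z, hzS, hz⟩ := hseq x
    have h1 : Tendsto (fun n => f (z n)) atTop (𝓝 (g x)) := by
      have := (hgc.tendsto x).comp hz
      exact this.congr (fun n => hge _ (hzS n))
    have h2 : Tendsto (fun n => g₂ (f (z n))) atTop (𝓝 (g₂ (g x))) :=
      (hg₂c.tendsto _).comp h1
    have h3 : Tendsto (fun n => g₂ (f (z n))) atTop (𝓝 x) := by
      have heqn : ∀ n, g₂ (f (z n)) = z n := fun n => by
        rw [hg₂e _ (hbij.mapsTo (hzS n)), hf'f _ (hzS n)]
      exact hz.congr (fun n => (heqn n).symm)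
    exact tendsto_nhds_unique h2 h3
  have hright : ∀ y : V, g (g₂ y) = y := by
    intro y
    obtain ⟨z, hzS, hz⟩ := hseq y
    have h1 : Tendsto (fun n => f' (z n)) atTop (𝓝 (g₂ y)) := by
      have := (hg₂c.tendsto y).comp hz
      exact this.congr (fun n => hg₂e _ (hzS n))
    have h2 : Tendsto (fun n => g (f' (z n))) atTop (𝓝 (g (g₂ y))) :=
      (hgc.tendsto _).comp h1
    have h3 : Tendsto (fun n => g (f' (z n))) atTop (𝓝 y) := by
      have heqn : ∀ n, g (f' (z n)) = z n := fun n => by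
        rw [hge _ (hf'mem _ (hzS n)), hff' _ (hzS n)]
      exact hz.congr (fun n => (heqn n).symm)
    exact tendsto_nhds_unique h2 h3
  refine ⟨g, hgc, fun s hs => hge s hs, ⟨?_, ?_⟩, ?_, ?_⟩
  · -- bijectivity of `g`
    exact Function.bijective_iff_has_inverse.mpr ⟨g₂, hleft, hright⟩
  · -- `g` preserves integer parts of all distances
    intro x y
    have hd0 : (0:ℝ) ≤ ‖x - y‖ := norm_nonneg _
    set n : ℕ := ⌊‖x - y‖⌋.toNat with hndef
    have hfl : (⌊‖x - y‖⌋ : ℤ) = (n : ℤ) :=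
      (Int.toNat_of_nonneg (Int.floor_nonneg.mpr hd0)).symm
    have hnd : (n:ℝ) ≤ ‖x - y‖ := by
      have := Int.floor_le ‖x - y‖
      rw [hfl] at this
      exact_mod_cast this
    have h1 : (n:ℝ) ≤ ‖g x - g y‖ := lemL hSdense hstep hgc hge x y n hnd
    have h2 : ‖g x - g y‖ < (n:ℝ) + 1 := by
      by_contra hcon
      push_neg at hcon
      have hcast : ((n+1 : ℕ):ℝ) ≤ ‖g x - g y‖ := by push_cast; linarith
      have h3 := lemL hSdense hstep' hg₂c hg₂e (g x) (g y) (n+1) hcast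
      rw [hleft x, hleft y] at h3
      have h4 := Int.lt_floor_add_one ‖x - y‖
      rw [hfl] at h4
      push_cast at h3 h4
      linarith
    have hres : ⌊‖g x - g y‖⌋ = (n : ℤ) := by
      rw [Int.floor_eq_iff]
      constructor
      · exact_mod_cast h1
      · push_cast; linarith
    rw [hfl, hres]
  · -- `g` preserves integer distances exactly
    intro k x y hxy
    have hle : ‖g x - g y‖ ≤ (k:ℝ) := lemU hSdense hstep hgc hge x y k (le_of_eq hxy)
    have hgel : (k:ℝ) ≤ ‖g x - g y‖ := lemL hSdense hstep hgc hge x y k (ge_of_eq hxy)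
    linarith
  · -- uniqueness of the continuous extension
    intro g' hg'c hg'e
    exact Continuous.ext_on hSdense hg'c hgc (fun s hs => (hg'e hs).trans (hge s hs).symm)
end

section
/- Let V be a finite-dimensional real normed space and let f : V → V be a step-isometry. Then f preserves integer distances (for every k ∈ ℕ, ‖x − y‖ = k implies ‖f(x) − f(y)‖ = k), and for every k ∈ ℕ and x ∈ V the image of the closed ball B(x,k) under f is exactly the closed ball B(f(x),k). -/
/-- On the ray from `a` through `b` there is a point at any distance `r ≥ ‖a - b‖`
from `a`, whose distance to `b` is `r - ‖a - b‖`. -/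
lemma exists_ray_point {V : Type*} [NormedAddCommGroup V] [NormedSpace ℝ V]
    (a b : V) (r : ℝ) (hd : 0 < ‖a - b‖) (hr : ‖a - b‖ ≤ r) :
    ∃ w : V, ‖a - w‖ = r ∧ ‖b - w‖ = r - ‖a - b‖ := by
  set d : ℝ := ‖a - b‖ with hdd
  have hba : ‖b - a‖ = d := by rw [norm_sub_rev]
  refine ⟨a + (r / d) • (b - a), ?_, ?_⟩
  · have h1 : a - (a + (r / d) • (b - a)) = -((r / d) • (b - a)) := by abel
    rw [h1, norm_neg, norm_smul, hba, Real.norm_eq_abs,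
      abs_of_nonneg (div_nonneg (hd.trans_le hr).le hd.le), div_mul_cancel₀ _ (ne_of_gt hd)]
  · have h1 : b - (a + (r / d) • (b - a)) = (1 - r / d) • (b - a) := by
      rw [sub_smul, one_smul]; abel
    have hc : (1 : ℝ) ≤ r / d := (one_le_div hd).2 hr
    rw [h1, norm_smul, hba, Real.norm_eq_abs, abs_of_nonpos (by linarith), neg_sub,
      sub_mul, one_mul, div_mul_cancel₀ _ (ne_of_gt hd)]

/-- A step-isometry does not increase distances past integer thresholds. -/
lemma stepIsometry_le {V : Type*} [NormedAddCommGroup V] [NormedSpace ℝ V]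
    (f : V → V) (hf : IsStepIsometry f) (k : ℕ) (x y : V)
    (h : ‖x - y‖ ≤ k) : ‖f x - f y‖ ≤ k := by
  by_contra hc
  push_neg at hc
  set d : ℝ := ‖f x - f y‖ with hdd
  have hdpos : 0 < d := lt_of_le_of_lt (Nat.cast_nonneg k) hc
  -- floor bound: d < k + 1
  have hfl : ⌊‖x - y‖⌋ = ⌊d⌋ := hf.2 x y
  have h1 : ⌊‖x - y‖⌋ ≤ (k : ℤ) := by
    have := Int.floor_mono h
    simpa using this
  have h2 : d < (k : ℝ) + 1 := by
    have := Int.lt_floor_add_one d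
    have : d < (⌊d⌋ : ℝ) + 1 := this
    have hk : ((⌊d⌋ : ℤ) : ℝ) ≤ (k : ℝ) := by rw [← hfl]; exact_mod_cast h1
    linarith
  -- pick w past `f y` at distance exactly k+1 from `f x`
  obtain ⟨w, hw1, hw2⟩ := exists_ray_point (f x) (f y) ((k : ℝ) + 1) hdpos (le_of_lt h2)
  obtain ⟨z, hz⟩ := hf.1.2 w
  have hxz : ⌊‖x - z‖⌋ = ⌊‖f x - w‖⌋ := by rw [← hz]; exact hf.2 x z
  have hyz : ⌊‖y - z‖⌋ = ⌊‖f y - w‖⌋ := by rw [← hz]; exact hf.2 y z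
  have hxzge : ((k : ℝ) + 1) ≤ ‖x - z‖ := by
    have : ⌊‖x - z‖⌋ = (k : ℤ) + 1 := by
      rw [hxz, hw1]
      exact_mod_cast Int.floor_natCast (k + 1)
    calc ((k : ℝ) + 1) = ((⌊‖x - z‖⌋ : ℤ) : ℝ) := by rw [this]; push_cast; ring
      _ ≤ ‖x - z‖ := Int.floor_le _
  have hyzlt : ‖y - z‖ < 1 := by
    have h0 : ⌊‖y - z‖⌋ = 0 := by
      rw [hyz, hw2]
      exact Int.floor_eq_zero_iff.2 ⟨by linarith, by linarith⟩
    have := Int.lt_floor_add_one ‖y - z‖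
    rw [h0] at this
    simpa using this
  have htri' : ‖x - z‖ ≤ ‖x - y‖ + ‖y - z‖ := by
    calc ‖x - z‖ = ‖(x - y) + (y - z)‖ := by abel_nf
      _ ≤ ‖x - y‖ + ‖y - z‖ := norm_add_le _ _
  linarith

/-- Converse direction: a step-isometry does not decrease distances past
integer thresholds either. -/
lemma stepIsometry_ge {V : Type*} [NormedAddCommGroup V] [NormedSpace ℝ V]
    (f : V → V) (hf : IsStepIsometry f) (k : ℕ) (x y : V)
    (h : ‖f x - f y‖ ≤ k) : ‖x - y‖ ≤ k := by
  by_contra hc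
  push_neg at hc
  set d : ℝ := ‖x - y‖ with hdd
  have hdpos : 0 < d := lt_of_le_of_lt (Nat.cast_nonneg k) hc
  have hfl : ⌊d⌋ = ⌊‖f x - f y‖⌋ := hf.2 x y
  have h2 : d < (k : ℝ) + 1 := by
    have h1 : ⌊‖f x - f y‖⌋ ≤ (k : ℤ) := by
      have := Int.floor_mono h
      simpa using this
    have := Int.lt_floor_add_one d
    have hk : ((⌊d⌋ : ℤ) : ℝ) ≤ (k : ℝ) := by rw [hfl]; exact_mod_cast h1
    linarith
  obtain ⟨z, hz1, hz2⟩ := exists_ray_point x y ((k : ℝ) + 1) hdpos (le_of_lt h2)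
  have hxz : ⌊‖x - z‖⌋ = ⌊‖f x - f z‖⌋ := hf.2 x z
  have hyz : ⌊‖y - z‖⌋ = ⌊‖f y - f z‖⌋ := hf.2 y z
  have hxzge : ((k : ℝ) + 1) ≤ ‖f x - f z‖ := by
    have : ⌊‖f x - f z‖⌋ = (k : ℤ) + 1 := by
      rw [← hxz, hz1]
      exact_mod_cast Int.floor_natCast (k + 1)
    calc ((k : ℝ) + 1) = ((⌊‖f x - f z‖⌋ : ℤ) : ℝ) := by rw [this]; push_cast; ring
      _ ≤ ‖f x - f z‖ := Int.floor_le _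
  have hyzlt : ‖f y - f z‖ < 1 := by
    have h0 : ⌊‖f y - f z‖⌋ = 0 := by
      rw [← hyz, hz2]
      exact Int.floor_eq_zero_iff.2 ⟨by linarith, by linarith⟩
    have := Int.lt_floor_add_one ‖f y - f z‖
    rw [h0] at this
    simpa using this
  have htri : ‖f x - f z‖ ≤ ‖f x - f y‖ + ‖f y - f z‖ := by
    calc ‖f x - f z‖ = ‖(f x - f y) + (f y - f z)‖ := by abel_nf
      _ ≤ ‖f x - f y‖ + ‖f y - f z‖ := norm_add_le _ _
  linarith

/-- A step-isometry `f` of a finite-dimensional real normed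
space preserves integer distances, and maps every closed ball of integer radius
`k` about `x` exactly onto the closed ball of radius `k` about `f x`. -/
theorem stepIsometry_integer_distances_and_balls
    {V : Type*} [NormedAddCommGroup V] [NormedSpace ℝ V] [FiniteDimensional ℝ V]
    (f : V → V) (hf : IsStepIsometry f) :
    (∀ (k : ℕ) (x y : V), ‖x - y‖ = k → ‖f x - f y‖ = k) ∧
    (∀ (k : ℕ) (x : V), f '' Metric.closedBall x k = Metric.closedBall (f x) k) := by
  constructor
  · intro k x y h
    have hle : ‖f x - f y‖ ≤ k := stepIsometry_le f hf k x y (le_of_eq h)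
    have hge : (k : ℝ) ≤ ‖f x - f y‖ := by
      have hfl : ⌊‖x - y‖⌋ = ⌊‖f x - f y‖⌋ := hf.2 x y
      have : ⌊‖f x - f y‖⌋ = (k : ℤ) := by
        rw [← hfl, h]; exact_mod_cast Int.floor_natCast k
      calc (k : ℝ) = ((⌊‖f x - f y‖⌋ : ℤ) : ℝ) := by rw [this]; norm_cast
        _ ≤ ‖f x - f y‖ := Int.floor_le _
    linarith
  · intro k x
    ext y
    simp only [Set.mem_image, Metric.mem_closedBall, dist_eq_norm]
    constructor
    · rintro ⟨z, hz, rfl⟩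
      exact stepIsometry_le f hf k z x hz
    · intro hy
      obtain ⟨z, rfl⟩ := hf.1.2 y
      exact ⟨z, stepIsometry_ge f hf k z x hy, rfl⟩
end

section
/- Let V be a real normed space, let x be an extreme point of the closed unit ball B(0,1), and let n ∈ ℕ with n ≥ 1. Then B(0,1) ∩ B(nx, n−1) = {x}. -/
/-- If `x` is an extreme point of the closed unit ball of a real
normed space and `n ≥ 1`, then `B(0,1) ∩ B(n • x, n − 1) = {x}`. -/
theorem closedBall_inter_closedBall_extremePoint
    {V : Type*} [NormedAddCommGroup V] [NormedSpace ℝ V]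
    (x : V) (hx : x ∈ Set.extremePoints ℝ (Metric.closedBall (0 : V) 1))
    (n : ℕ) (hn : 1 ≤ n) :
    Metric.closedBall (0 : V) 1 ∩ Metric.closedBall ((n : ℝ) • x) ((n : ℝ) - 1)
      = {x} := by
  obtain ⟨hxB, hext⟩ := hx
  have hx1 : ‖x‖ ≤ 1 := by simpa using hxB
  ext y
  simp only [Set.mem_inter_iff, Metric.mem_closedBall, Set.mem_singleton_iff,
    dist_zero_right, dist_eq_norm, sub_zero]
  constructor
  · rintro ⟨hy1, hy2⟩
    rcases eq_or_lt_of_le hn with h1 | h2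
    · have : (n : ℝ) = 1 := by exact_mod_cast h1.symm
      rw [this] at hy2
      simp only [one_smul, sub_self] at hy2
      have : ‖y - x‖ = 0 := le_antisymm hy2 (norm_nonneg _)
      rwa [norm_sub_eq_zero_iff] at this
    · have hn2 : (2 : ℝ) ≤ (n : ℝ) := by exact_mod_cast h2
      have hnpos : (0 : ℝ) < n := by linarith
      have hpos : (0 : ℝ) < (n : ℝ) - 1 := by linarith
      set z : V := ((n : ℝ) - 1)⁻¹ • ((n : ℝ) • x - y) with hz
      have hzB : ‖z‖ ≤ 1 := by
        rw [hz, norm_smul, norm_inv, Real.norm_eq_abs, abs_of_pos hpos]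
        rw [inv_mul_le_iff₀ hpos, mul_one]
        rwa [← norm_neg, neg_sub] at hy2
      have hseg : x ∈ openSegment ℝ y z := by
        refine ⟨(n : ℝ)⁻¹, ((n : ℝ) - 1) / n, by positivity, by positivity, ?_, ?_⟩
        · field_simp
          ring
        · rw [hz, smul_smul]
          rw [div_mul_eq_mul_div, mul_inv_cancel₀ (by linarith), smul_sub, smul_smul]
          field_simp
          module
      have := hext (by simpa using hy1) (by simpa using hzB) hseg
      exact this
  · rintro rfl
    refine ⟨hx1, ?_⟩
    have h : ∀ v : V, v - (n : ℝ) • v = ((1 : ℝ) - n) • v := fun v => by module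
    rw [h, norm_smul, Real.norm_eq_abs]
    have hn1 : (1 : ℝ) ≤ n := by exact_mod_cast hn
    calc |(1 : ℝ) - n| * ‖_‖ ≤ |(1 : ℝ) - n| * 1 :=
          mul_le_mul_of_nonneg_left hx1 (abs_nonneg _)
      _ = (n : ℝ) - 1 := by rw [mul_one, abs_sub_comm, abs_of_nonneg (by linarith)]
end

section
/- Let V be a real normed space and let x be a point of the closed unit ball B(0,1). Then x is an extreme point of B(0,1) if and only if there exists a point z ∈ V such that B(z,1) ∩ B(0,1) = {x}. -/
/-- A point `x` of the closed unit ball of a real normed space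
is an extreme point if and only if there exists `z` with
`B(z,1) ∩ B(0,1) = {x}`. -/
theorem extremePoint_iff_unique_ball_intersection
    {V : Type*} [NormedAddCommGroup V] [NormedSpace ℝ V]
    (x : V) (hx : x ∈ Metric.closedBall (0 : V) 1) :
    x ∈ Set.extremePoints ℝ (Metric.closedBall (0 : V) 1) ↔
      ∃ z : V, Metric.closedBall z 1 ∩ Metric.closedBall (0 : V) 1 = {x} := by
  simp only [Metric.mem_closedBall, dist_zero_right] at hx
  constructor
  · rintro ⟨-, hext⟩
    refine ⟨2 • x, Set.eq_singleton_iff_unique_mem.2 ⟨⟨?_, ?_⟩, ?_⟩⟩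
    · simp only [Metric.mem_closedBall, dist_eq_norm, two_smul]
      simpa using hx
    · simpa [Metric.mem_closedBall, dist_zero_right] using hx
    · rintro u ⟨hu1, hu2⟩
      simp only [Metric.mem_closedBall, dist_eq_norm, two_smul] at hu1
      set w := x + x - u with hw
      have hwball : w ∈ Metric.closedBall (0 : V) 1 := by
        simp only [Metric.mem_closedBall, dist_zero_right, hw]
        have : x + x - u = -(u - (x + x)) := by abel
        rw [this, norm_neg]; exact hu1
      by_cases huw : u = w
      · have : u + u = x + x := by
          rw [hw] at huw; nth_rewrite 2 [huw]; abel
        have := congrArg (fun v => (2 : ℝ)⁻¹ • v) this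
        simpa [smul_add, ← two_smul ℝ, smul_smul] using this
      · have hseg : x ∈ openSegment ℝ u w := by
          refine ⟨1/2, 1/2, by norm_num, by norm_num, by norm_num, ?_⟩
          rw [hw]; module
        exact hext hu2 hwball hseg
  · rintro ⟨z, hz⟩
    have hxmem : x ∈ Metric.closedBall z 1 ∩ Metric.closedBall (0 : V) 1 := by
      rw [hz]; exact rfl
    obtain ⟨hxz, -⟩ := hxmem
    simp only [Metric.mem_closedBall, dist_eq_norm] at hxz
    -- z = 2x
    have hz2 : z = x + x := by
      have hmem : z - x ∈ Metric.closedBall z 1 ∩ Metric.closedBall (0 : V) 1 := by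
        constructor
        · simp only [Metric.mem_closedBall, dist_eq_norm]
          have : z - x - z = -x := by abel
          rw [this, norm_neg]; exact hx
        · simp only [Metric.mem_closedBall, dist_zero_right]
          simpa [norm_sub_rev] using hxz
      rw [hz, Set.mem_singleton_iff] at hmem
      have := congrArg (· + x) hmem
      simpa [sub_add_cancel] using this
    -- midpoint property
    have key : ∀ y w : V, ‖y‖ ≤ 1 → ‖w‖ ≤ 1 → y + w = x + x → y = x ∧ w = x := by
      intro y w hy hwn hyw
      have hy' : y ∈ Metric.closedBall z 1 ∩ Metric.closedBall (0 : V) 1 := by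
        constructor
        · simp only [Metric.mem_closedBall, dist_eq_norm, hz2]
          have : y - (x + x) = -w := by rw [← hyw]; abel
          rw [this, norm_neg]; exact hwn
        · simpa [Metric.mem_closedBall, dist_zero_right] using hy
      have hw' : w ∈ Metric.closedBall z 1 ∩ Metric.closedBall (0 : V) 1 := by
        constructor
        · simp only [Metric.mem_closedBall, dist_eq_norm, hz2]
          have : w - (x + x) = -y := by rw [← hyw]; abel
          rw [this, norm_neg]; exact hy
        · simpa [Metric.mem_closedBall, dist_zero_right] using hwn
      rw [hz, Set.mem_singleton_iff] at hy' hw'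
      exact ⟨hy', hw'⟩
    refine ⟨by simpa [Metric.mem_closedBall, dist_zero_right] using hx, ?_⟩
    rintro y hy w hw ⟨a, b, ha, hb, hab, hsum⟩
    simp only [Metric.mem_closedBall, dist_zero_right] at hy hw
    set c := min a b with hc
    have hc0 : 0 < c := lt_min ha hb
    have hca : c ≤ a := min_le_left _ _
    have hcb : c ≤ b := min_le_right _ _
    -- y' = (a+c)y + (b-c)w, w' = (a-c)y + (b+c)w
    have hyc : ‖(a + c) • y + (b - c) • w‖ ≤ 1 := by
      calc ‖(a + c) • y + (b - c) • w‖ ≤ ‖(a + c) • y‖ + ‖(b - c) • w‖ := norm_add_le _ _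
        _ = (a + c) * ‖y‖ + (b - c) * ‖w‖ := by
            rw [norm_smul, norm_smul, Real.norm_of_nonneg (by linarith),
              Real.norm_of_nonneg (by linarith)]
        _ ≤ (a + c) * 1 + (b - c) * 1 := by
            gcongr <;> linarith
        _ = 1 := by linarith
    have hwc : ‖(a - c) • y + (b + c) • w‖ ≤ 1 := by
      calc ‖(a - c) • y + (b + c) • w‖ ≤ ‖(a - c) • y‖ + ‖(b + c) • w‖ := norm_add_le _ _
        _ = (a - c) * ‖y‖ + (b + c) * ‖w‖ := by
            rw [norm_smul, norm_smul, Real.norm_of_nonneg (by linarith),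
              Real.norm_of_nonneg (by linarith)]
        _ ≤ (a - c) * 1 + (b + c) * 1 := by
            gcongr <;> linarith
        _ = 1 := by linarith
    have hsum2 : ((a + c) • y + (b - c) • w) + ((a - c) • y + (b + c) • w) = x + x := by
      have : ((a + c) • y + (b - c) • w) + ((a - c) • y + (b + c) • w)
          = (a • y + b • w) + (a • y + b • w) := by
        simp only [add_smul, sub_smul]
        abel
      rw [this, hsum]
    obtain ⟨h1, h2⟩ := key _ _ hyc hwc hsum2
    have hyw : y = w := by
      have : ((a + c) • y + (b - c) • w) - ((a - c) • y + (b + c) • w) = (2 * c) • (y - w) := by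
        simp only [add_smul, sub_smul, smul_sub, two_mul]
        abel
      have h0 : (2 * c) • (y - w) = 0 := by rw [← this, h1, h2, sub_self]
      have := smul_eq_zero.1 h0
      rcases this with h | h
      · exact absurd h (by positivity)
      · exact sub_eq_zero.1 h
    subst hyw
    have hx' : y = x := by
      have : a • y + b • y = y := by rw [← add_smul, hab, one_smul]
      rw [this] at hsum; exact hsum
    exact hx'
end

section
/- Let V be a finite-dimensional real normed space and let f : V → V be a step-isometry with f(0) = 0. Then f maps the set of extreme points of the closed unit ball B(0,1) into itself: if x is an extreme point of B(0,1), then so is f(x). -/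
/-- A surjective floor-of-distance-preserving map preserves integer distances exactly. -/
lemma step_int_dist {V : Type*} [NormedAddCommGroup V] [NormedSpace ℝ V]
    (f : V → V) (hs : Function.Surjective f)
    (hfl : ∀ x y : V, ⌊‖x - y‖⌋ = ⌊‖f x - f y‖⌋)
    (x y : V) (n : ℤ) (hn : ‖x - y‖ = n) :
    ‖f x - f y‖ = n := by
  rcases eq_or_ne x y with rfl | hxy
  · have h0 : (n : ℝ) = 0 := by rw [← hn]; simp
    simp [h0]
  · have hd : ⌊‖f x - f y‖⌋ = n := by
      rw [← hfl x y, hn, Int.floor_intCast]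
    have hdn : (n : ℝ) ≤ ‖f x - f y‖ := by
      have := Int.floor_le (‖f x - f y‖); rwa [hd] at this
    have hdn1 : ‖f x - f y‖ < n + 1 := by
      have := Int.lt_floor_add_one (‖f x - f y‖); rw [hd] at this; exact_mod_cast this
    have hn1 : (1 : ℤ) ≤ n := by
      have h0 : 0 < ‖x - y‖ := norm_pos_iff.mpr (sub_ne_zero.mpr hxy)
      have : (0 : ℝ) < n := hn ▸ h0
      exact_mod_cast this
    have hn1' : (1 : ℝ) ≤ (n : ℝ) := by exact_mod_cast hn1
    by_contra hne
    have hdgt : (n : ℝ) < ‖f x - f y‖ := lt_of_le_of_ne hdn (fun h => hne h.symm)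
    set d := ‖f x - f y‖ with hdd
    have hdpos : 0 < d := by linarith
    set e := d⁻¹ • (f x - f y) with he
    have hee : ‖e‖ = 1 := by
      rw [he, norm_smul, norm_inv, Real.norm_eq_abs, abs_of_pos hdpos, ← hdd,
        inv_mul_cancel₀ hdpos.ne']
    have hde : f x - f y = d • e := by
      rw [he, smul_smul, mul_inv_cancel₀ hdpos.ne', one_smul]
    obtain ⟨u, hu⟩ := hs (f y + ((n : ℝ) + 2) • e)
    have huy : f u - f y = ((n : ℝ) + 2) • e := by rw [hu]; abel
    have hux : f u - f x = ((n : ℝ) + 2 - d) • e := by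
      rw [hu, sub_smul, ← hde]; abel
    have h1 : ‖f u - f y‖ = (n : ℝ) + 2 := by
      rw [huy, norm_smul, hee, mul_one, Real.norm_eq_abs, abs_of_pos (by linarith)]
    have h2 : ‖f u - f x‖ = (n : ℝ) + 2 - d := by
      rw [hux, norm_smul, hee, mul_one, Real.norm_eq_abs, abs_of_pos (by linarith)]
    have h3 : ((n : ℝ) + 2) ≤ ‖u - y‖ := by
      have hfuy := hfl u y
      rw [h1] at hfuy
      have hfl2 : ⌊‖u - y‖⌋ = n + 2 := by
        rw [hfuy, show ((n : ℝ) + 2) = ((n + 2 : ℤ) : ℝ) by push_cast; ring,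
          Int.floor_intCast]
      have := Int.floor_le (‖u - y‖)
      rw [hfl2] at this
      push_cast at this
      linarith
    have h4 : ‖u - x‖ < 2 := by
      have hfux := hfl u x
      rw [h2] at hfux
      have hfl1 : ⌊(n : ℝ) + 2 - d⌋ = 1 := by
        rw [Int.floor_eq_iff]
        push_cast
        constructor <;> linarith
      rw [hfl1] at hfux
      have := Int.lt_floor_add_one (‖u - x‖)
      rw [hfux] at this
      push_cast at this
      linarith
    have htr : ‖u - y‖ ≤ ‖u - x‖ + ‖x - y‖ := by
      have := dist_triangle u x y
      simpa [dist_eq_norm] using this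
    rw [hn] at htr
    linarith

/-- A step-isometry of a finite-dimensional real normed space
fixing `0` maps extreme points of the closed unit ball to extreme points. -/
theorem stepIsometry_maps_extremePoints
    {V : Type*} [NormedAddCommGroup V] [NormedSpace ℝ V] [FiniteDimensional ℝ V]
    (f : V → V) (hf : IsStepIsometry f) (h0 : f 0 = 0)
    (x : V) (hx : x ∈ Set.extremePoints ℝ (Metric.closedBall (0 : V) 1)) :
    f x ∈ Set.extremePoints ℝ (Metric.closedBall (0 : V) 1) := by
  obtain ⟨hbij, hfl⟩ := hf
  have hne : Nonempty V := ⟨0⟩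
  set g := Function.invFun f with hg
  have hgf : ∀ v, g (f v) = v := fun v => Function.leftInverse_invFun hbij.injective v
  have hfg : ∀ v, f (g v) = v := fun v => Function.rightInverse_invFun hbij.surjective v
  have hgsurj : Function.Surjective g := fun v => ⟨f v, hgf v⟩
  have hgfl : ∀ u v : V, ⌊‖u - v‖⌋ = ⌊‖g u - g v‖⌋ := by
    intro u v
    conv_lhs => rw [← hfg u, ← hfg v]
    exact (hfl (g u) (g v)).symm
  have hg0 : g 0 = 0 := by have := hgf 0; rwa [h0] at this
  have keyf : ∀ a b : V, ∀ n : ℤ, ‖a - b‖ = n → ‖f a - f b‖ = n :=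
    fun a b n h => step_int_dist f hbij.surjective hfl a b n h
  have keyg : ∀ a b : V, ∀ n : ℤ, ‖a - b‖ = n → ‖g a - g b‖ = n :=
    fun a b n h => step_int_dist g hgsurj hgfl a b n h
  rcases eq_or_ne x 0 with rfl | hx0
  · rw [h0]; exact hx
  -- x has norm exactly 1
  have hxB : ‖x‖ ≤ 1 := by simpa [mem_closedBall_zero_iff] using hx.1
  have hnx : ‖x‖ = 1 := by
    by_contra hne1
    have hlt : ‖x‖ < 1 := lt_of_le_of_ne hxB hne1
    have hpos : 0 < ‖x‖ := norm_pos_iff.mpr hx0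
    have hyB : ‖x‖⁻¹ • x ∈ Metric.closedBall (0 : V) 1 := by
      rw [mem_closedBall_zero_iff, norm_smul, norm_inv, Real.norm_eq_abs,
        abs_of_pos hpos, inv_mul_cancel₀ hpos.ne']
    have hseg : x ∈ openSegment ℝ (‖x‖⁻¹ • x) 0 := by
      refine ⟨‖x‖, 1 - ‖x‖, hpos, by linarith, by ring, ?_⟩
      rw [smul_smul, mul_inv_cancel₀ hpos.ne', one_smul, smul_zero, add_zero]
    have h00 : (0 : V) ∈ Metric.closedBall (0 : V) 1 := by
      simp
    rw [openSegment_symm] at hseg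
    exact hx0 (hx.2 h00 hyB hseg).symm
  -- basic norms in the image
  have hfx1 : ‖f x‖ = 1 := by
    have h := keyf x 0 1 (by rw [sub_zero, hnx]; norm_num)
    rw [h0, sub_zero] at h
    exact_mod_cast h
  -- extremality of x, midpoint form
  have M0 : ∀ u v : V, ‖u‖ ≤ 1 → ‖v‖ ≤ 1 → u + v = (2 : ℝ) • x → u = x := by
    intro u v hu hv huv
    rcases eq_or_ne u v with rfl | huvne
    · have h2u : (2 : ℝ) • u = (2 : ℝ) • x := by rw [two_smul]; exact huv
      exact smul_right_injective V (two_ne_zero) h2u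
    · have hseg : x ∈ openSegment ℝ u v := by
        refine ⟨1 / 2, 1 / 2, by norm_num, by norm_num, by norm_num, ?_⟩
        rw [← smul_add, huv, smul_smul]
        norm_num
      exact (hx.2 (mem_closedBall_zero_iff.mpr hu)
        (mem_closedBall_zero_iff.mpr hv) hseg)
  -- f (2 • x) = 2 • f x
  set w := f ((2 : ℝ) • x) with hw
  have hw2 : ‖w‖ = 2 := by
    have h := keyf ((2 : ℝ) • x) 0 2 (by
      rw [sub_zero, norm_smul, hnx, Real.norm_eq_abs]; norm_num)
    rw [← hw, h0, sub_zero] at h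
    exact_mod_cast h
  have hgw : g w = (2 : ℝ) • x := by rw [hw, hgf]
  have h2fx : w = (2 : ℝ) • f x := by
    have hmw : ‖(1 / 2 : ℝ) • w‖ = 1 := by
      rw [norm_smul, hw2, Real.norm_eq_abs, abs_of_pos (by norm_num : (0:ℝ) < 1/2)]
      norm_num
    have hm1 : ‖g ((1 / 2 : ℝ) • w)‖ = 1 := by
      have h := keyg ((1 / 2 : ℝ) • w) 0 1 (by rw [sub_zero, hmw]; norm_num)
      rw [hg0, sub_zero] at h
      exact_mod_cast h
    have hm2 : ‖(2 : ℝ) • x - g ((1 / 2 : ℝ) • w)‖ = 1 := by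
      have h := keyg w ((1 / 2 : ℝ) • w) 1 (by
        have hww : w - (1 / 2 : ℝ) • w = (1 / 2 : ℝ) • w := by module
        rw [hww, hmw]; norm_num)
      rw [hgw] at h
      exact_mod_cast h
    have hmid : g ((1 / 2 : ℝ) • w) + ((2 : ℝ) • x - g ((1 / 2 : ℝ) • w)) = (2 : ℝ) • x := by
      abel
    have hmx : g ((1 / 2 : ℝ) • w) = x := M0 _ _ hm1.le hm2.le hmid
    have hfm : f (g ((1 / 2 : ℝ) • w)) = (1 / 2 : ℝ) • w := hfg _
    rw [hmx] at hfm
    rw [hfm]; module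
  -- extremality of f x, midpoint form
  have M : ∀ u v : V, ‖u‖ ≤ 1 → ‖v‖ ≤ 1 → u + v = (2 : ℝ) • f x → u = f x := by
    intro u v hu hv huv
    have h2 : ‖(2 : ℝ) • f x‖ = 2 := by
      rw [norm_smul, hfx1, Real.norm_eq_abs]; norm_num
    have hsum : (2 : ℝ) ≤ ‖u‖ + ‖v‖ := by
      rw [← h2, ← huv]; exact norm_add_le u v
    have hu1 : ‖u‖ = 1 := by linarith
    have hv1 : ‖v‖ = 1 := by linarith
    have hvu : ‖(2 : ℝ) • f x - u‖ = 1 := by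
      rw [← huv, add_sub_cancel_left]; exact hv1
    have hu'1 : ‖g u‖ = 1 := by
      have h := keyg u 0 1 (by rw [sub_zero, hu1]; norm_num)
      rw [hg0, sub_zero] at h
      exact_mod_cast h
    have hu'2 : ‖(2 : ℝ) • x - g u‖ = 1 := by
      have h := keyg ((2 : ℝ) • f x) u 1 (by rw [hvu]; norm_num)
      rw [← h2fx, hgw] at h
      exact_mod_cast h
    have hmid : g u + ((2 : ℝ) • x - g u) = (2 : ℝ) • x := by abel
    have := M0 _ _ hu'1.le hu'2.le hmid
    rw [← hfg u, this]
  -- conclude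
  refine ⟨mem_closedBall_zero_iff.mpr hfx1.le, ?_⟩
  intro y hy z hz hseg
  obtain ⟨a, b, ha, hb, hab, habe⟩ := hseg
  have hyB : ‖y‖ ≤ 1 := mem_closedBall_zero_iff.mp hy
  have hzB : ‖z‖ ≤ 1 := mem_closedBall_zero_iff.mp hz
  set ε := min a b with hε
  have hεpos : 0 < ε := lt_min ha hb
  have hεa : ε ≤ a := min_le_left a b
  have hεb : ε ≤ b := min_le_right a b
  have hy1 : ‖f x + ε • (y - z)‖ ≤ 1 := by
    have hcomb : f x + ε • (y - z) = (a + ε) • y + (b - ε) • z := by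
      rw [← habe]; module
    rw [hcomb]
    calc ‖(a + ε) • y + (b - ε) • z‖ ≤ ‖(a + ε) • y‖ + ‖(b - ε) • z‖ := norm_add_le _ _
      _ = (a + ε) * ‖y‖ + (b - ε) * ‖z‖ := by
          rw [norm_smul, norm_smul, Real.norm_eq_abs, Real.norm_eq_abs,
            abs_of_pos (by linarith), abs_of_nonneg (by linarith)]
      _ ≤ (a + ε) * 1 + (b - ε) * 1 := add_le_add
          (mul_le_mul_of_nonneg_left hyB (by linarith))
          (mul_le_mul_of_nonneg_left hzB (by linarith))
      _ = 1 := by linarith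
  have hz1 : ‖f x - ε • (y - z)‖ ≤ 1 := by
    have hcomb : f x - ε • (y - z) = (a - ε) • y + (b + ε) • z := by
      rw [← habe]; module
    rw [hcomb]
    calc ‖(a - ε) • y + (b + ε) • z‖ ≤ ‖(a - ε) • y‖ + ‖(b + ε) • z‖ := norm_add_le _ _
      _ = (a - ε) * ‖y‖ + (b + ε) * ‖z‖ := by
          rw [norm_smul, norm_smul, Real.norm_eq_abs, Real.norm_eq_abs,
            abs_of_nonneg (by linarith), abs_of_pos (by linarith)]
      _ ≤ (a - ε) * 1 + (b + ε) * 1 := add_le_add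
          (mul_le_mul_of_nonneg_left hyB (by linarith))
          (mul_le_mul_of_nonneg_left hzB (by linarith))
      _ = 1 := by linarith
  have hmid : (f x + ε • (y - z)) + (f x - ε • (y - z)) = (2 : ℝ) • f x := by module
  have hy1eq : f x + ε • (y - z) = f x := M _ _ hy1 hz1 hmid
  have hyz : y = z := by
    have h1 : ε • (y - z) = 0 := by
      have := hy1eq
      rwa [add_eq_left] at this
    rcases smul_eq_zero.mp h1 with h | h
    · exact absurd h hεpos.ne'
    · exact sub_eq_zero.mp h
  have hyx : y = f x := by
    rw [← habe, hyz, ← add_smul, hab, one_smul]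
  exact hyx
end

section
/- Let V be a finite-dimensional real normed space, let f : V → V be a step-isometry with f(0) = 0, let x be an extreme point of the closed unit ball B(0,1), and let n ∈ ℕ. Then f(nx) = n·f(x). -/
/-- A step-isometry preserves distances that are natural numbers exactly. -/
lemma stepIsometry_exact_nat_dist {V : Type*} [NormedAddCommGroup V]
    [NormedSpace ℝ V] {f : V → V} (hf : IsStepIsometry f) (u v : V) (m : ℕ)
    (huv : ‖u - v‖ = m) : ‖f u - f v‖ = m := by
  obtain ⟨hbij, hfl⟩ := hf
  rcases Nat.eq_zero_or_pos m with hm | hm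
  · subst hm
    simp only [Nat.cast_zero] at huv ⊢
    have huveq : u = v := by rwa [norm_sub_eq_zero_iff] at huv
    rw [huveq, sub_self, norm_zero]
  · set b := ‖f u - f v‖ with hb
    have hfloor : ⌊b⌋ = (m : ℤ) := by
      rw [hb, ← hfl u v, huv, Int.floor_natCast]
    have hlb : (m : ℝ) ≤ b := by
      have h := Int.le_floor.mp (le_of_eq hfloor.symm)
      exact_mod_cast h
    rcases eq_or_lt_of_le hlb with he | hlt
    · exact he.symm
    · exfalso
      have hub : b < (m : ℝ) + 1 := by
        have h := Int.lt_floor_add_one b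
        rw [hfloor] at h
        exact_mod_cast h
      have hm1 : (1 : ℝ) ≤ (m : ℝ) := by exact_mod_cast hm
      have hbpos : (0 : ℝ) < b := by linarith
      have hbne : b ≠ 0 := ne_of_gt hbpos
      set d := b⁻¹ • (f u - f v) with hd
      have hdnorm : ‖d‖ = 1 := by
        rw [hd, norm_smul, Real.norm_eq_abs, abs_inv, abs_of_pos hbpos, ← hb,
          inv_mul_cancel₀ hbne]
      set c := (m : ℝ) + 1 + (b - m) / 2 with hc
      have hcb : c - b = 1 - (b - m) / 2 := by rw [hc]; ring
      obtain ⟨r, hr⟩ := hbij.2 (f v + c • d)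
      have hpv : ‖(f v + c • d) - f v‖ = c := by
        rw [add_sub_cancel_left, norm_smul, hdnorm, mul_one, Real.norm_eq_abs,
          abs_of_pos (by rw [hc]; linarith)]
      have hfufv : f u - f v = b • d := by
        rw [hd, smul_inv_smul₀ hbne]
      have hpu : ‖(f v + c • d) - f u‖ = c - b := by
        have heq : (f v + c • d) - f u = (c - b) • d := by
          have : f u = f v + b • d := by
            rw [← hfufv]; abel
          rw [this, sub_smul]; abel
        rw [heq, norm_smul, hdnorm, mul_one, Real.norm_eq_abs,
          abs_of_pos (by rw [hcb]; linarith)]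
      have hr1 : ((m : ℝ) + 1) ≤ ‖r - v‖ := by
        have hfl1 : ⌊‖r - v‖⌋ = (m : ℤ) + 1 := by
          rw [hfl r v, hr, hpv]
          refine Int.floor_eq_iff.mpr ⟨?_, ?_⟩ <;> push_cast <;> rw [hc] <;> linarith
        have h := Int.le_floor.mp (le_of_eq hfl1.symm)
        push_cast at h
        exact h
      have hr2 : ‖r - u‖ < 1 := by
        have hfl2 : ⌊‖r - u‖⌋ = 0 := by
          rw [hfl r u, hr, hpu]
          refine Int.floor_eq_iff.mpr ⟨?_, ?_⟩ <;> push_cast <;> rw [hcb] <;> linarith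
        have h := Int.lt_floor_add_one ‖r - u‖
        rw [hfl2] at h
        simpa using h
      have htri : ‖r - v‖ ≤ ‖r - u‖ + ‖u - v‖ := by
        have heq : r - v = (r - u) + (u - v) := by abel
        rw [heq]
        exact norm_add_le _ _
      rw [huv] at htri
      linarith

/-- If `f` is a step-isometry of a finite-dimensional real
normed space with `f 0 = 0` and `x` is an extreme point of the closed unit ball,
then `f (n • x) = n • f x` for every natural number `n`. -/
theorem stepIsometry_smul_extremePoint
    {V : Type*} [NormedAddCommGroup V] [NormedSpace ℝ V] [FiniteDimensional ℝ V]
    (f : V → V) (hf : IsStepIsometry f) (h0 : f 0 = 0)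
    (x : V) (hx : x ∈ Set.extremePoints ℝ (Metric.closedBall (0 : V) 1))
    (n : ℕ) :
    f ((n : ℝ) • x) = (n : ℝ) • f x := by
  by_cases hn0 : n = 0
  · subst hn0
    simp [h0]
  by_cases hn1 : n = 1
  · subst hn1
    simp
  have hn : 2 ≤ n := by omega
  by_cases hx0 : x = 0
  · subst hx0
    rw [smul_zero, h0, smul_zero]
  -- x has norm 1
  have hxle : ‖x‖ ≤ 1 := mem_closedBall_zero_iff.mp hx.1
  have hxpos : 0 < ‖x‖ := norm_pos_iff.mpr hx0
  have hxn : ‖x‖ = 1 := by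
    by_contra hne
    have hlt : ‖x‖ < 1 := lt_of_le_of_ne hxle hne
    set t := ‖x‖⁻¹ with ht
    have htx : t * ‖x‖ = 1 := inv_mul_cancel₀ (ne_of_gt hxpos)
    have ht1 : 1 < t := by nlinarith
    have hmem1 : t • x ∈ Metric.closedBall (0 : V) 1 := by
      rw [mem_closedBall_zero_iff, norm_smul, Real.norm_eq_abs,
        abs_of_pos (by linarith : (0:ℝ) < t), htx]
    have hmem2 : (2 - t) • x ∈ Metric.closedBall (0 : V) 1 := by
      rw [mem_closedBall_zero_iff, norm_smul, Real.norm_eq_abs]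
      rcases abs_cases (2 - t) with ⟨h, _⟩ | ⟨h, _⟩ <;> rw [h] <;> nlinarith
    have hseg : x ∈ openSegment ℝ (t • x) ((2 - t) • x) := by
      refine ⟨1/2, 1/2, by norm_num, by norm_num, by norm_num, ?_⟩
      rw [smul_smul, smul_smul, ← add_smul]
      have : (1/2 : ℝ) * t + 1/2 * (2 - t) = 1 := by ring
      rw [this, one_smul]
    obtain ⟨h1x, -⟩ := (mem_extremePoints.mp hx).2 _ hmem1 _ hmem2 hseg
    have hz : (t - 1) • x = 0 := by
      rw [sub_smul, one_smul, h1x, sub_self]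
    rcases smul_eq_zero.mp hz with h | h
    · have : t = 1 := by linarith [h]
      linarith
    · exact hx0 h
  -- main argument
  have hn2 : (2:ℝ) ≤ (n:ℝ) := by exact_mod_cast hn
  have hnpos : (0:ℝ) < (n:ℝ) := by linarith
  have hnne : (n:ℝ) ≠ 0 := ne_of_gt hnpos
  set w := f ((n:ℝ) • x) with hw
  have hwn : ‖w‖ = (n : ℝ) := by
    have h1 : ‖(n:ℝ) • x - 0‖ = (n : ℕ) := by
      rw [sub_zero, norm_smul, hxn, mul_one, Real.norm_natCast]
    have h2 := stepIsometry_exact_nat_dist hf ((n:ℝ) • x) 0 n h1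
    rwa [h0, sub_zero] at h2
  set e := Equiv.ofBijective f hf.1 with he
  have hsymm_iso : IsStepIsometry (⇑e.symm) := by
    refine ⟨e.symm.bijective, fun p q => ?_⟩
    have h := hf.2 (e.symm p) (e.symm q)
    have h2 : f (e.symm p) = p := e.apply_symm_apply p
    have h3 : f (e.symm q) = q := e.apply_symm_apply q
    rw [h2, h3] at h
    exact h.symm
  have hsymm0 : e.symm 0 = 0 := by
    apply e.injective
    rw [e.apply_symm_apply]
    exact h0.symm
  set s := (n:ℝ)⁻¹ • w with hsdef
  have hs_norm : ‖s - 0‖ = ((1:ℕ) : ℝ) := by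
    rw [sub_zero, hsdef, norm_smul, hwn, Real.norm_eq_abs, abs_inv,
      abs_of_pos hnpos, inv_mul_cancel₀ hnne, Nat.cast_one]
  have hσ1 := stepIsometry_exact_nat_dist hsymm_iso s 0 1 hs_norm
  rw [hsymm0, sub_zero, Nat.cast_one] at hσ1
  have hcast : ((n - 1 : ℕ) : ℝ) = (n:ℝ) - 1 := by
    have h1n : 1 ≤ n := by omega
    push_cast [Nat.cast_sub h1n]
    ring
  have hsw : ‖s - w‖ = ((n - 1 : ℕ) : ℝ) := by
    have heq : s - w = ((n:ℝ)⁻¹ - 1) • w := by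
      rw [hsdef, sub_smul, one_smul]
    have hinv1 : (n:ℝ)⁻¹ ≤ 1 := by
      rw [inv_le_one_iff₀]
      right; linarith
    have h5 : ((1:ℝ) - (n:ℝ)⁻¹) * (n:ℝ) = (n:ℝ) - 1 := by
      field_simp
    rw [heq, norm_smul, hwn, Real.norm_eq_abs, abs_of_nonpos (by linarith), hcast]
    rw [neg_sub]
    exact h5
  have hesymm_w : e.symm w = (n:ℝ) • x := by
    apply e.injective
    rw [e.apply_symm_apply]
    exact hw
  have hσ2 := stepIsometry_exact_nat_dist hsymm_iso s w (n - 1) hsw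
  rw [hesymm_w, hcast] at hσ2
  set σ := e.symm s with hσdef
  have hn1pos : (0:ℝ) < (n:ℝ) - 1 := by linarith
  set v := ((n:ℝ) - 1)⁻¹ • ((n:ℝ) • x - σ) with hvdef
  have hvnorm : ‖v‖ = 1 := by
    rw [hvdef, norm_smul, Real.norm_eq_abs, abs_inv, abs_of_pos hn1pos,
      norm_sub_rev, hσ2, inv_mul_cancel₀ (ne_of_gt hn1pos)]
  have hseg : x ∈ openSegment ℝ σ v := by
    refine ⟨(n:ℝ)⁻¹, 1 - (n:ℝ)⁻¹, inv_pos.mpr hnpos, ?_, by ring, ?_⟩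
    · have hi : (n:ℝ)⁻¹ * (n:ℝ) = 1 := inv_mul_cancel₀ hnne
      have hipos : 0 < (n:ℝ)⁻¹ := inv_pos.mpr hnpos
      nlinarith
    · rw [hvdef, smul_smul]
      have h7 : (1 - (n:ℝ)⁻¹) * ((n:ℝ) - 1)⁻¹ = (n:ℝ)⁻¹ := by
        field_simp
      have h8 : (n:ℝ)⁻¹ • ((n:ℝ) • x) = x := by
        rw [smul_smul, inv_mul_cancel₀ hnne, one_smul]
      rw [h7, smul_sub, h8]
      abel
  have hmemσ : σ ∈ Metric.closedBall (0:V) 1 := mem_closedBall_zero_iff.mpr (le_of_eq hσ1)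
  have hmemv : v ∈ Metric.closedBall (0:V) 1 := mem_closedBall_zero_iff.mpr (le_of_eq hvnorm)
  obtain ⟨hσx, -⟩ := (mem_extremePoints.mp hx).2 _ hmemσ _ hmemv hseg
  have hsfx : s = f x := by
    have h := congrArg e hσx
    rw [hσdef, e.apply_symm_apply] at h
    exact h
  rw [← hsfx, hsdef, smul_smul, mul_inv_cancel₀ hnne, one_smul]
end

section
/- Let V be a finite-dimensional real normed space and let f : V → V be a step-isometry with f(0) = 0. Then f restricted to the extreme points of the closed unit ball B(0,1) is an isometry: for all extreme points x, y of B(0,1), ‖f(x) − f(y)‖ = ‖x − y‖. -/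
lemma isStepIsometry_invFun {V : Type*} [NormedAddCommGroup V] (f : V → V)
    (hf : IsStepIsometry f) : IsStepIsometry (Function.invFun f) := by
  obtain ⟨hbij, hfl⟩ := hf
  constructor
  · exact Function.bijective_iff_has_inverse.mpr
      ⟨f, Function.rightInverse_invFun hbij.2, Function.leftInverse_invFun hbij.1⟩
  · intro u v
    have h := hfl (Function.invFun f u) (Function.invFun f v)
    rw [Function.rightInverse_invFun hbij.2 u, Function.rightInverse_invFun hbij.2 v] at h
    exact h.symm

/-- A bijective step-isometry preserves integer distances exactly. -/
lemma stepExact {V : Type*} [NormedAddCommGroup V] [NormedSpace ℝ V]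
    (f : V → V) (hf : IsStepIsometry f) (a b : V) (n : ℕ) (h : ‖a - b‖ = n) :
    ‖f a - f b‖ = n := by
  obtain ⟨hbij, hfl⟩ := hf
  rcases Nat.eq_zero_or_pos n with rfl | hn
  · have : a = b := by
      rw [← sub_eq_zero]
      exact norm_eq_zero.mp (by simpa using h)
    simp [this]
  · have hfl' := hfl a b
    rw [h, Int.floor_natCast] at hfl'
    have hge : (n : ℝ) ≤ ‖f a - f b‖ := by exact_mod_cast Int.le_floor.mp (le_of_eq hfl')
    have hlt : ‖f a - f b‖ < (n : ℝ) + 1 := by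
      have h2 := Int.lt_floor_add_one ‖f a - f b‖
      rw [← hfl'] at h2
      exact_mod_cast h2
    by_contra hne
    have hgt : (n : ℝ) < ‖f a - f b‖ := lt_of_le_of_ne hge (fun h' => hne h'.symm)
    set β := ‖f a - f b‖ with hβ
    have hβpos : 0 < β := lt_of_le_of_lt (Nat.cast_nonneg n) hgt
    set p := f a + (((n : ℝ) + 1) / β) • (f b - f a) with hp
    have hv : ‖f b - f a‖ = β := by rw [norm_sub_rev]
    have hpa : ‖p - f a‖ = (n : ℝ) + 1 := by
      have h3 : p - f a = (((n : ℝ) + 1) / β) • (f b - f a) := by rw [hp]; abel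
      rw [h3, norm_smul, hv, Real.norm_eq_abs, abs_of_pos (by positivity)]
      field_simp
    have hpb : ‖p - f b‖ = (n : ℝ) + 1 - β := by
      have h4 : p - f b = (((n : ℝ) + 1) / β - 1) • (f b - f a) := by
        rw [sub_smul, one_smul, hp]; abel
      rw [h4, norm_smul, hv, Real.norm_eq_abs]
      have hpos : 0 ≤ ((n : ℝ) + 1) / β - 1 := by
        rw [le_sub_iff_add_le, zero_add, le_div_iff₀ hβpos, one_mul]; linarith
      rw [abs_of_nonneg hpos, sub_mul, one_mul, div_mul_cancel₀ _ (ne_of_gt hβpos)]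
    obtain ⟨s, hs⟩ := hbij.2 p
    have e1 : ⌊‖s - a‖⌋ = (n : ℤ) + 1 := by
      rw [hfl s a, hs, hpa]
      have : ((n : ℝ) + 1) = ((n + 1 : ℕ) : ℝ) := by push_cast; ring
      rw [this, Int.floor_natCast]; push_cast; ring
    have b1 : (n : ℝ) + 1 ≤ ‖s - a‖ := by
      have := Int.le_floor.mp (le_of_eq e1.symm)
      push_cast at this; linarith
    have e2 : ⌊‖s - b‖⌋ = 0 := by
      rw [hfl s b, hs, hpb]
      apply Int.floor_eq_zero_iff.mpr
      constructor
      · linarith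
      · simpa using (by linarith : (n : ℝ) + 1 - β < 1)
    have b2 : ‖s - b‖ < 1 := by
      have := (Int.floor_eq_zero_iff.mp e2).2
      simpa using this
    have tri : ‖s - a‖ ≤ ‖s - b‖ + ‖b - a‖ := by
      have h5 : s - a = (s - b) + (b - a) := by abel
      rw [h5]; exact norm_add_le _ _
    have hba : ‖b - a‖ = n := by rw [norm_sub_rev]; exact h
    linarith

lemma extreme_pin {V : Type*} [NormedAddCommGroup V] [NormedSpace ℝ V]
    (x : V) (hx : x ∈ Set.extremePoints ℝ (Metric.closedBall (0 : V) 1))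
    (w : V) (N : ℕ) (hN : 2 ≤ N) (hw1 : ‖w‖ = 1) (hw2 : ‖w - (N : ℝ) • x‖ = (N : ℝ) - 1) :
    w = x := by
  have hN1 : (1 : ℝ) ≤ (N : ℝ) - 1 := by
    have : (2 : ℝ) ≤ (N : ℝ) := by exact_mod_cast hN
    linarith
  have hNpos : (0 : ℝ) < (N : ℝ) := by linarith
  have hN1pos : (0 : ℝ) < (N : ℝ) - 1 := by linarith
  set b := (((N : ℝ) - 1)⁻¹) • ((N : ℝ) • x - w) with hb
  have hbnorm : ‖b‖ = 1 := by
    rw [hb, norm_smul, Real.norm_eq_abs, abs_of_pos (by positivity), norm_sub_rev, hw2]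
    field_simp
  have hwmem : w ∈ Metric.closedBall (0 : V) 1 := by
    rw [Metric.mem_closedBall, dist_zero_right, hw1]
  have hbmem : b ∈ Metric.closedBall (0 : V) 1 := by
    rw [Metric.mem_closedBall, dist_zero_right, hbnorm]
  have hseg : x ∈ openSegment ℝ w b := by
    refine ⟨(N : ℝ)⁻¹, ((N : ℝ) - 1) / N, by positivity, by positivity, by field_simp; ring, ?_⟩
    rw [hb, smul_smul]
    have hco : ((N : ℝ) - 1) / N * ((N : ℝ) - 1)⁻¹ = (N : ℝ)⁻¹ := by
      field_simp
    rw [hco, smul_sub, smul_smul, inv_mul_cancel₀ (ne_of_gt hNpos), one_smul]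
    abel
  exact hx.2 hwmem hbmem hseg

lemma ray_lemma {V : Type*} [NormedAddCommGroup V] [NormedSpace ℝ V]
    (f : V → V) (hf : IsStepIsometry f) (h0 : f 0 = 0)
    (x : V) (hx : x ∈ Set.extremePoints ℝ (Metric.closedBall (0 : V) 1))
    (hx1 : ‖x‖ = 1) : ∀ n : ℕ, f ((n : ℝ) • x) = (n : ℝ) • f x := by
  intro n
  induction n with
  | zero => simpa using h0
  | succ n ih =>
    rcases Nat.eq_zero_or_pos n with rfl | hn
    · norm_num
    · have hginv := isStepIsometry_invFun f hf
      set g := Function.invFun f with hg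
      have hgl : ∀ v, g (f v) = v := fun v => Function.leftInverse_invFun hf.1.1 v
      have hgr : ∀ v, f (g v) = v := fun v => Function.rightInverse_invFun hf.1.2 v
      set u1 := f (((n : ℝ) + 1) • x) with hu1
      set u0 := f ((n : ℝ) • x) with hu0
      -- ‖u1 - u0‖ = 1
      have e1 : ‖u1 - u0‖ = (1 : ℕ) := by
        apply stepExact f hf
        have : ((n : ℝ) + 1) • x - (n : ℝ) • x = x := by
          rw [add_smul, one_smul]; abel
        rw [this, hx1]; norm_num
      -- ‖u0‖ = n
      have e0 : ‖u0 - f 0‖ = (n : ℕ) := by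
        apply stepExact f hf
        rw [sub_zero, norm_smul, Real.norm_eq_abs, abs_of_nonneg (Nat.cast_nonneg n), hx1,
          mul_one]
      rw [h0, sub_zero] at e0
      set P := u1 - u0 with hP
      -- pull back P
      have w1 : ‖g P - g 0‖ = (1 : ℕ) := by
        apply stepExact g hginv
        rw [sub_zero]; exact_mod_cast e1
      have hg0 : g 0 = 0 := by nth_rewrite 1 [← h0]; exact hgl 0
      rw [hg0, sub_zero] at w1
      have w2 : ‖g P - g u1‖ = (n : ℕ) := by
        apply stepExact g hginv
        have : P - u1 = -u0 := by rw [hP]; abel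
        rw [this, norm_neg]; exact_mod_cast e0
      have hgu1 : g u1 = ((n : ℝ) + 1) • x := by rw [hu1, hgl]
      rw [hgu1] at w2
      -- taut chain: g P = x
      have hwx : g P = x := by
        apply extreme_pin x hx (g P) (n + 1) (by omega)
        · exact_mod_cast w1
        · push_cast
          rw [add_sub_cancel_right]
          exact w2
      -- hence P = f x
      have hPfx : P = f x := by
        have := congrArg f hwx
        rwa [hgr] at this
      -- conclude
      have : u1 = u0 + f x := by rw [← hPfx, hP]; abel
      push_cast
      rw [← hu1, this, ih]
      rw [add_smul, one_smul]

lemma extreme_norm_one {V : Type*} [NormedAddCommGroup V] [NormedSpace ℝ V]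
    (x : V) (hx : x ∈ Set.extremePoints ℝ (Metric.closedBall (0 : V) 1)) (hx0 : x ≠ 0) :
    ‖x‖ = 1 := by
  have hball : ‖x‖ ≤ 1 := by
    have := hx.1
    rwa [Metric.mem_closedBall, dist_zero_right] at this
  by_contra hne
  have hlt : ‖x‖ < 1 := lt_of_le_of_ne hball hne
  have hpos : 0 < ‖x‖ := norm_pos_iff.mpr hx0
  have hmem1 : ‖x‖⁻¹ • x ∈ Metric.closedBall (0 : V) 1 := by
    rw [Metric.mem_closedBall, dist_zero_right, norm_smul, Real.norm_eq_abs,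
      abs_of_pos (by positivity), inv_mul_cancel₀ (ne_of_gt hpos)]
  have hmem2 : (0 : V) ∈ Metric.closedBall (0 : V) 1 := by
    rw [Metric.mem_closedBall, dist_zero_right]; simp
  have hseg : x ∈ openSegment ℝ (‖x‖⁻¹ • x) 0 := by
    refine ⟨‖x‖, 1 - ‖x‖, hpos, by linarith, by ring, ?_⟩
    rw [smul_smul, mul_inv_cancel₀ (ne_of_gt hpos), one_smul, smul_zero, add_zero]
  have hkey := hx.2 hmem1 hmem2 hseg
  have : ‖‖x‖⁻¹ • x‖ = 1 := by
    rw [norm_smul, Real.norm_eq_abs, abs_of_pos (by positivity),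
      inv_mul_cancel₀ (ne_of_gt hpos)]
  rw [hkey] at this
  exact hne this

/-- A step-isometry of a finite-dimensional real normed space
fixing `0` restricts to an isometry on the extreme points of the closed unit
ball. -/
theorem stepIsometry_isometry_on_extremePoints
    {V : Type*} [NormedAddCommGroup V] [NormedSpace ℝ V] [FiniteDimensional ℝ V]
    (f : V → V) (hf : IsStepIsometry f) (h0 : f 0 = 0)
    (x y : V)
    (hx : x ∈ Set.extremePoints ℝ (Metric.closedBall (0 : V) 1))
    (hy : y ∈ Set.extremePoints ℝ (Metric.closedBall (0 : V) 1)) :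
    ‖f x - f y‖ = ‖x - y‖ := by
  by_cases hxy : x = y
  · simp [hxy]
  -- neither x nor y is 0
  have hx0 : x ≠ 0 := by
    rintro rfl
    have hy0 : y ≠ 0 := fun h => hxy h.symm
    have hymem := hy.1
    have hymem' : -y ∈ Metric.closedBall (0 : V) 1 := by
      rw [Metric.mem_closedBall, dist_zero_right, norm_neg]
      rwa [Metric.mem_closedBall, dist_zero_right] at hymem
    have hseg : (0 : V) ∈ openSegment ℝ y (-y) := by
      refine ⟨1 / 2, 1 / 2, by norm_num, by norm_num, by norm_num, ?_⟩
      rw [smul_neg]; abel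
    exact hy0 (hx.2 hymem hymem' hseg)
  have hy0 : y ≠ 0 := by
    rintro rfl
    have hxmem := hx.1
    have hxmem' : -x ∈ Metric.closedBall (0 : V) 1 := by
      rw [Metric.mem_closedBall, dist_zero_right, norm_neg]
      rwa [Metric.mem_closedBall, dist_zero_right] at hxmem
    have hseg : (0 : V) ∈ openSegment ℝ x (-x) := by
      refine ⟨1 / 2, 1 / 2, by norm_num, by norm_num, by norm_num, ?_⟩
      rw [smul_neg]; abel
    exact hx0 (hy.2 hxmem hxmem' hseg)
  have hx1 : ‖x‖ = 1 := extreme_norm_one x hx hx0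
  have hy1 : ‖y‖ = 1 := extreme_norm_one y hy hy0
  have hrayx := ray_lemma f hf h0 x hx hx1
  have hrayy := ray_lemma f hf h0 y hy hy1
  set d := ‖x - y‖ with hd
  set D := ‖f x - f y‖ with hD
  have key : ∀ n : ℕ, ⌊(n : ℝ) * d⌋ = ⌊(n : ℝ) * D⌋ := by
    intro n
    have h1 := hf.2 ((n : ℝ) • x) ((n : ℝ) • y)
    rw [hrayx n, hrayy n, ← smul_sub, ← smul_sub, norm_smul, norm_smul,
      Real.norm_eq_abs, abs_of_nonneg (Nat.cast_nonneg n)] at h1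
    exact h1
  have final : ∀ n : ℕ, (n : ℝ) * |D - d| < 1 := by
    intro n
    have k := key n
    have l1 := Int.floor_le ((n : ℝ) * d)
    have l2 := Int.lt_floor_add_one ((n : ℝ) * d)
    have l3 := Int.floor_le ((n : ℝ) * D)
    have l4 := Int.lt_floor_add_one ((n : ℝ) * D)
    rw [← k] at l3 l4
    have habs : |(n : ℝ) * D - (n : ℝ) * d| < 1 := by
      rw [abs_sub_lt_iff]
      constructor <;> push_cast at * <;> linarith
    calc (n : ℝ) * |D - d| = |(n : ℝ) * D - (n : ℝ) * d| := by
          rw [← mul_sub, abs_mul, Nat.abs_cast]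
      _ < 1 := habs
  by_contra hne
  have hεpos : 0 < |D - d| := abs_pos.mpr (sub_ne_zero.mpr hne)
  obtain ⟨m, hm⟩ := exists_nat_gt (1 / |D - d|)
  have h2 : 1 < (m : ℝ) * |D - d| := by
    rw [div_lt_iff₀ hεpos] at hm
    linarith
  exact absurd (final m) (not_lt.mpr (le_of_lt h2))
end
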